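/- arXiv:2509.25553 — 6 statements merged into one kernel-verified Lean document; each statement's English description precedes it below -/
import Mathlib

section
/- Let c > 0, let λ : ℝ → ℝ be continuously differentiable with λ(u) > 0 for u > 0, and let x be twice continuously differentiable on an open neighborhood of the closed domain Ω̄_c = {(s,t) ∈ ℝ² : s ≥ 0, t ≥ 0, s+t ≥ c}, satisfying 2λ(s+t)·x_st + λ'(s+t)·(x_s + x_t) = 0 there. Define n(σ) = x_s(σ, c−σ) + x_t(σ, c−σ) for σ ∈ [0,c]. Then for every point (s,t) with 0 < s < c, 0 < t < c, and s + t > c, one has ∫_{c−t}^{s} λ(σ+t)·x_s(σ,t) dσ + ∫_{c−s}^{t} λ(s+τ)·x_t(s,τ) dτ = λ(c)·∫_{c−t}^{s} n(σ) dσ. -/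
open MeasureTheory Set intervalIntegral


/-- Partial derivative with respect to the first variable. -/
noncomputable def pd1 (f : ℝ → ℝ → ℝ) (s t : ℝ) : ℝ := deriv (fun s' => f s' t) s

/-- Partial derivative with respect to the second variable. -/
noncomputable def pd2 (f : ℝ → ℝ → ℝ) (s t : ℝ) : ℝ := deriv (fun t' => f s t') t

/-- For a classical solution `x` of the linear hodograph equation on a
neighborhood of `Ω̄_c = {s ≥ 0, t ≥ 0, s+t ≥ c}` (with `λ` continuously differentiable
and positive on `(0,∞)`), at any point with `0 < s < c`, `0 < t < c`, `s+t > c`,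
`∫_{c−t}^{s} λ(σ+t)·x_s(σ,t) dσ + ∫_{c−s}^{t} λ(s+τ)·x_t(s,τ) dτ
  = λ(c)·∫_{c−t}^{s} n(σ) dσ`,
where `n(σ) = x_s(σ, c−σ) + x_t(σ, c−σ)` is the normal derivative on the Cauchy
boundary. -/
theorem contour_identity_case_IV
    (c : ℝ) (hc : 0 < c) (lam : ℝ → ℝ) (hlam : ContDiff ℝ 1 lam)
    (hpos : ∀ u : ℝ, 0 < u → 0 < lam u)
    (x : ℝ → ℝ → ℝ) (V : Set (ℝ × ℝ)) (hV : IsOpen V)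
    (hΩV : {p : ℝ × ℝ | 0 ≤ p.1 ∧ 0 ≤ p.2 ∧ c ≤ p.1 + p.2} ⊆ V)
    (hx : ContDiffOn ℝ 2 (fun p : ℝ × ℝ => x p.1 p.2) V)
    (hpde : ∀ p ∈ V,
      2 * lam (p.1 + p.2) * pd2 (pd1 x) p.1 p.2
        + deriv lam (p.1 + p.2) * (pd1 x p.1 p.2 + pd2 x p.1 p.2) = 0) :
    ∀ s t : ℝ, 0 < s → s < c → 0 < t → t < c → c < s + t →
      (∫ σ in (c - t)..s, lam (σ + t) * pd1 x σ t)
        + (∫ τ in (c - s)..t, lam (s + τ) * pd2 x s τ)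
      = lam c * ∫ σ in (c - t)..s, (pd1 x σ (c - σ) + pd2 x σ (c - σ)) := by
  intro s t hs hsc ht htc hst
  set X : ℝ × ℝ → ℝ := fun p => x p.1 p.2 with hXdef
  set f1 : ℝ × ℝ → ℝ := fun p => fderiv ℝ X p (1, 0) with hf1def
  set f2 : ℝ × ℝ → ℝ := fun p => fderiv ℝ X p (0, 1) with hf2def
  set G : ℝ × ℝ → ℝ :=
    fun p => deriv lam (p.1 + p.2) * f1 p + lam (p.1 + p.2) * fderiv ℝ f1 p (0, 1) with hGdef
  set Hf : ℝ × ℝ → ℝ :=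
    fun p => deriv lam (p.1 + p.2) * f2 p + lam (p.1 + p.2) * fderiv ℝ f2 p (1, 0) with hHdef
  -- basic differentiability facts
  have hXd : ∀ p ∈ V, DifferentiableAt ℝ X p := fun p hp =>
    (hx.contDiffAt (hV.mem_nhds hp)).differentiableAt (by norm_num)
  have hf1C : ContDiffOn ℝ 1 f1 V :=
    (hx.fderiv_of_isOpen hV (by norm_num)).clm_apply contDiffOn_const
  have hf2C : ContDiffOn ℝ 1 f2 V :=
    (hx.fderiv_of_isOpen hV (by norm_num)).clm_apply contDiffOn_const
  have hf1d : ∀ p ∈ V, DifferentiableAt ℝ f1 p := fun p hp =>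
    (hf1C.contDiffAt (hV.mem_nhds hp)).differentiableAt one_ne_zero
  have hf2d : ∀ p ∈ V, DifferentiableAt ℝ f2 p := fun p hp =>
    (hf2C.contDiffAt (hV.mem_nhds hp)).differentiableAt one_ne_zero
  -- partial derivatives as hasDerivAt
  have hd1 : ∀ p ∈ V, HasDerivAt (fun s' => x s' p.2) (f1 p) p.1 := by
    intro p hp
    have hline : HasDerivAt (fun s' : ℝ => (s', p.2)) ((1 : ℝ), (0 : ℝ)) p.1 :=
      HasDerivAt.prodMk (hasDerivAt_id _) (hasDerivAt_const _ _)
    exact (hXd p hp).hasFDerivAt.comp_hasDerivAt p.1 hline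
  have hd2 : ∀ p ∈ V, HasDerivAt (fun t' => x p.1 t') (f2 p) p.2 := by
    intro p hp
    have hline : HasDerivAt (fun t' : ℝ => (p.1, t')) ((0 : ℝ), (1 : ℝ)) p.2 :=
      HasDerivAt.prodMk (hasDerivAt_const _ _) (hasDerivAt_id _)
    exact (hXd p hp).hasFDerivAt.comp_hasDerivAt p.2 hline
  have hpd1 : ∀ p ∈ V, pd1 x p.1 p.2 = f1 p := fun p hp => (hd1 p hp).deriv
  have hpd2 : ∀ p ∈ V, pd2 x p.1 p.2 = f2 p := fun p hp => (hd2 p hp).deriv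
  -- second derivatives
  have hd21 : ∀ p ∈ V, HasDerivAt (fun τ => f1 (p.1, τ)) (fderiv ℝ f1 p (0, 1)) p.2 := by
    intro p hp
    have hline : HasDerivAt (fun t' : ℝ => (p.1, t')) ((0 : ℝ), (1 : ℝ)) p.2 :=
      HasDerivAt.prodMk (hasDerivAt_const _ _) (hasDerivAt_id _)
    exact (hf1d p hp).hasFDerivAt.comp_hasDerivAt p.2 hline
  have hd12 : ∀ p ∈ V, HasDerivAt (fun σ => f2 (σ, p.2)) (fderiv ℝ f2 p (1, 0)) p.1 := by
    intro p hp
    have hline : HasDerivAt (fun s' : ℝ => (s', p.2)) ((1 : ℝ), (0 : ℝ)) p.1 :=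
      HasDerivAt.prodMk (hasDerivAt_id _) (hasDerivAt_const _ _)
    exact (hf2d p hp).hasFDerivAt.comp_hasDerivAt p.1 hline
  have hpd21 : ∀ p ∈ V, pd2 (pd1 x) p.1 p.2 = fderiv ℝ f1 p (0, 1) := by
    intro p hp
    have hev : (fun τ => pd1 x p.1 τ) =ᶠ[nhds p.2] fun τ => f1 (p.1, τ) := by
      have hU : IsOpen {τ : ℝ | (p.1, τ) ∈ V} := hV.preimage (by fun_prop)
      filter_upwards [hU.mem_nhds hp] with τ hτ
      exact hpd1 (p.1, τ) hτ
    have : pd2 (pd1 x) p.1 p.2 = deriv (fun τ => f1 (p.1, τ)) p.2 := hev.deriv_eq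
    rw [this, (hd21 p hp).deriv]
  -- symmetry of second derivatives
  have hsym : ∀ p ∈ V, fderiv ℝ f1 p (0, 1) = fderiv ℝ f2 p (1, 0) := by
    intro p hp
    have hAC : ContDiffOn ℝ 1 (fderiv ℝ X) V := hx.fderiv_of_isOpen hV (by norm_num)
    have hAd : DifferentiableAt ℝ (fderiv ℝ X) p :=
      (hAC.contDiffAt (hV.mem_nhds hp)).differentiableAt one_ne_zero
    have hev : ∀ᶠ y in nhds p, HasFDerivAt X (fderiv ℝ X y) y := by
      filter_upwards [hV.mem_nhds hp] with y hy
      exact (hXd y hy).hasFDerivAt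
    have hsymm := second_derivative_symmetric_of_eventually hev hAd.hasFDerivAt
      ((0 : ℝ), (1 : ℝ)) ((1 : ℝ), (0 : ℝ))
    have h1 : HasFDerivAt f1
        ((fderiv ℝ X p).comp (0 : ℝ × ℝ →L[ℝ] ℝ × ℝ)
          + (fderiv ℝ (fderiv ℝ X) p).flip ((1 : ℝ), (0 : ℝ))) p :=
      hAd.hasFDerivAt.clm_apply (hasFDerivAt_const _ _)
    have h2 : HasFDerivAt f2
        ((fderiv ℝ X p).comp (0 : ℝ × ℝ →L[ℝ] ℝ × ℝ)
          + (fderiv ℝ (fderiv ℝ X) p).flip ((0 : ℝ), (1 : ℝ))) p :=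
      hAd.hasFDerivAt.clm_apply (hasFDerivAt_const _ _)
    rw [h1.fderiv, h2.fderiv]
    simpa using hsymm
  -- PDE in terms of f1, f2, G, Hf
  have hGH : ∀ p ∈ V, Hf p = -G p := by
    intro p hp
    have hpde' := hpde p hp
    rw [hpd21 p hp, hpd1 p hp, hpd2 p hp] at hpde'
    have hs' := hsym p hp
    simp only [hHdef, hGdef]
    rw [← hs']
    nlinarith [hpde']
  -- continuity facts
  have hderivlam : Continuous (deriv lam) := hlam.continuous_deriv le_rfl
  have hlamc : Continuous lam := hlam.continuous
  have hGcont : ContinuousOn G V := by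
    have h1 : ContinuousOn (fun p : ℝ × ℝ => fderiv ℝ f1 p (0, 1)) V :=
      ((hf1C.fderiv_of_isOpen (m := 0) hV (by norm_num)).continuousOn).clm_apply continuousOn_const
    exact (((hderivlam.comp (continuous_fst.add continuous_snd)).continuousOn).mul
      hf1C.continuousOn).add
      (((hlamc.comp (continuous_fst.add continuous_snd)).continuousOn).mul h1)
  -- pointwise derivative facts for FTC
  have hlamD : ∀ u : ℝ, HasDerivAt lam (deriv lam u) u := fun u =>
    (hlam.differentiable one_ne_zero u).hasDerivAt
  have hGder : ∀ p ∈ V, HasDerivAt (fun τ => lam (p.1 + τ) * f1 (p.1, τ)) (G p) p.2 := by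
    intro p hp
    have h1 : HasDerivAt (fun τ : ℝ => lam (p.1 + τ)) (deriv lam (p.1 + p.2)) p.2 := by
      have := (hlamD (p.1 + p.2)).comp p.2 ((hasDerivAt_id p.2).const_add p.1)
      simpa [Function.comp_def] using this
    have h2 := h1.mul (hd21 p hp)
    exact h2
  have hHder : ∀ p ∈ V, HasDerivAt (fun σ => lam (σ + p.2) * f2 (σ, p.2)) (-G p) p.1 := by
    intro p hp
    have h1 : HasDerivAt (fun σ : ℝ => lam (σ + p.2)) (deriv lam (p.1 + p.2)) p.1 := by
      have := (hlamD (p.1 + p.2)).comp p.1 ((hasDerivAt_id p.1).add_const p.2)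
      simpa [Function.comp_def] using this
    have h2 := h1.mul (hd12 p hp)
    rw [← hGH p hp]
    exact h2
  -- geometry
  have hab1 : c - t < s := by linarith
  have hab2 : c - s < t := by linarith
  have hmemV : ∀ σ τ : ℝ, 0 ≤ σ → 0 ≤ τ → c ≤ σ + τ → ((σ, τ) : ℝ × ℝ) ∈ V :=
    fun σ τ a b d => hΩV ⟨a, b, d⟩
  -- FTC in the second variable
  have key1 : ∀ σ ∈ uIcc (c - t) s,
      lam (σ + t) * f1 (σ, t) - lam c * f1 (σ, c - σ) = ∫ τ in (c - σ)..t, G (σ, τ) := by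
    intro σ hσ
    rw [uIcc_of_le hab1.le] at hσ
    obtain ⟨hσ1, hσ2⟩ := hσ
    have hσt : c - σ ≤ t := by linarith
    have hmem : ∀ τ ∈ uIcc (c - σ) t, ((σ, τ) : ℝ × ℝ) ∈ V := by
      intro τ hτ
      rw [uIcc_of_le hσt] at hτ
      exact hmemV σ τ (by linarith) (by linarith [hτ.1]) (by linarith [hτ.1])
    have hint : IntervalIntegrable (fun τ => G (σ, τ)) volume (c - σ) t :=
      ContinuousOn.intervalIntegrable
        (hGcont.comp (Continuous.continuousOn (by fun_prop)) (fun τ hτ => hmem τ hτ))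
    have heq := integral_eq_sub_of_hasDerivAt (f := fun τ => lam (σ + τ) * f1 (σ, τ))
      (f' := fun τ => G (σ, τ)) (fun τ hτ => hGder (σ, τ) (hmem τ hτ)) hint
    rw [heq]
    simp only [show σ + (c - σ) = c from by ring]
  -- FTC in the first variable
  have key2 : ∀ τ ∈ uIcc (c - s) t,
      lam (s + τ) * f2 (s, τ) - lam c * f2 (c - τ, τ) = -∫ σ in (c - τ)..s, G (σ, τ) := by
    intro τ hτ
    rw [uIcc_of_le hab2.le] at hτ
    obtain ⟨hτ1, hτ2⟩ := hτ
    have hτs : c - τ ≤ s := by linarith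
    have hmem : ∀ σ ∈ uIcc (c - τ) s, ((σ, τ) : ℝ × ℝ) ∈ V := by
      intro σ hσ
      rw [uIcc_of_le hτs] at hσ
      exact hmemV σ τ (by linarith [hσ.1]) (by linarith) (by linarith [hσ.1])
    have hint : IntervalIntegrable (fun σ => G (σ, τ)) volume (c - τ) s :=
      ContinuousOn.intervalIntegrable
        (hGcont.comp (Continuous.continuousOn (by fun_prop)) (fun σ hσ => hmem σ hσ))
    have heq := integral_eq_sub_of_hasDerivAt (f := fun σ => lam (σ + τ) * f2 (σ, τ))
      (f' := fun σ => -G (σ, τ)) (fun σ hσ => hHder (σ, τ) (hmem σ hσ)) hint.neg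
    rw [intervalIntegral.integral_neg] at heq
    rw [heq]
    simp only [show c - τ + τ = c from by ring]
  -- the triangle and its indicator extension
  set T : Set (ℝ × ℝ) := (Ioc (c - t) s ×ˢ Ioc (c - s) t) ∩ {p : ℝ × ℝ | c < p.1 + p.2} with hTdef
  have hTmeas : MeasurableSet T :=
    (measurableSet_Ioc.prod measurableSet_Ioc).inter
      (measurableSet_lt measurable_const (by fun_prop))
  have hK : IsCompact ((Icc (c - t) s ×ˢ Icc (c - s) t) ∩ {p : ℝ × ℝ | c ≤ p.1 + p.2}) :=
    (isCompact_Icc.prod isCompact_Icc).inter_right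
      (isClosed_le continuous_const (by fun_prop))
  have hKV : (Icc (c - t) s ×ˢ Icc (c - s) t) ∩ {p : ℝ × ℝ | c ≤ p.1 + p.2} ⊆ V := by
    rintro ⟨σ, τ⟩ ⟨⟨hσ, hτ⟩, hsum⟩
    simp only [mem_Icc] at hσ hτ
    exact hmemV σ τ (by linarith [hσ.1]) (by linarith [hτ.1]) hsum
  have hTK : T ⊆ (Icc (c - t) s ×ˢ Icc (c - s) t) ∩ {p : ℝ × ℝ | c ≤ p.1 + p.2} := by
    rintro ⟨σ, τ⟩ ⟨⟨hσ, hτ⟩, hsum⟩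
    exact ⟨⟨Ioc_subset_Icc_self hσ, Ioc_subset_Icc_self hτ⟩, le_of_lt (show c < σ + τ from hsum)⟩
  have hGintT : IntegrableOn G T :=
    (ContinuousOn.integrableOn_compact hK (hGcont.mono hKV)).mono_set hTK
  set Ghat : ℝ × ℝ → ℝ := T.indicator G with hGhatdef
  have hGhatInt : Integrable Ghat := hGintT.integrable_indicator hTmeas
  -- slices of the indicator
  have hslice1 : ∀ σ ∈ Ioc (c - t) s,
      (fun τ => Ghat (σ, τ)) = (Ioc (c - σ) t).indicator (fun τ => G (σ, τ)) := by
    intro σ hσ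
    obtain ⟨hσ1, hσ2⟩ := hσ
    funext τ
    have hiff : ((σ, τ) : ℝ × ℝ) ∈ T ↔ τ ∈ Ioc (c - σ) t := by
      simp only [hTdef, mem_inter_iff, mem_prod, mem_Ioc, mem_setOf_eq]
      constructor
      · rintro ⟨⟨-, h2⟩, h3⟩
        exact ⟨by linarith, h2.2⟩
      · rintro ⟨h1, h2⟩
        exact ⟨⟨⟨hσ1, hσ2⟩, ⟨by linarith, h2⟩⟩, by linarith⟩
    simp only [hGhatdef, indicator_apply, hiff]
  have hslice2 : ∀ τ ∈ Ioc (c - s) t,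
      (fun σ => Ghat (σ, τ)) = (Ioc (c - τ) s).indicator (fun σ => G (σ, τ)) := by
    intro τ hτ
    obtain ⟨hτ1, hτ2⟩ := hτ
    funext σ
    have hiff : ((σ, τ) : ℝ × ℝ) ∈ T ↔ σ ∈ Ioc (c - τ) s := by
      simp only [hTdef, mem_inter_iff, mem_prod, mem_Ioc, mem_setOf_eq]
      constructor
      · rintro ⟨⟨h1, -⟩, h3⟩
        exact ⟨by linarith, h1.2⟩
      · rintro ⟨h1, h2⟩
        exact ⟨⟨⟨by linarith, h2⟩, ⟨hτ1, hτ2⟩⟩, by linarith⟩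
    simp only [hGhatdef, indicator_apply, hiff]
  have hinner1 : ∀ σ ∈ Ioc (c - t) s,
      (∫ τ, Ghat (σ, τ)) = ∫ τ in (c - σ)..t, G (σ, τ) := by
    intro σ hσ
    rw [hslice1 σ hσ, MeasureTheory.integral_indicator measurableSet_Ioc,
      ← intervalIntegral.integral_of_le (by linarith [hσ.1] : c - σ ≤ t)]
  have hinner2 : ∀ τ ∈ Ioc (c - s) t,
      (∫ σ, Ghat (σ, τ)) = ∫ σ in (c - τ)..s, G (σ, τ) := by
    intro τ hτ
    rw [hslice2 τ hτ, MeasureTheory.integral_indicator measurableSet_Ioc,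
      ← intervalIntegral.integral_of_le (by linarith [hτ.1] : c - τ ≤ s)]
  have hzero1 : ∀ σ ∉ Ioc (c - t) s, (∫ τ, Ghat (σ, τ)) = 0 := by
    intro σ hσ
    have hz : (fun τ => Ghat (σ, τ)) = fun _ => 0 := by
      funext τ
      exact indicator_of_notMem (fun hT => hσ hT.1.1) _
    rw [hz, MeasureTheory.integral_zero]
  have hzero2 : ∀ τ ∉ Ioc (c - s) t, (∫ σ, Ghat (σ, τ)) = 0 := by
    intro τ hτ
    have hz : (fun σ => Ghat (σ, τ)) = fun _ => 0 := by
      funext σ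
      exact indicator_of_notMem (fun hT => hτ hT.1.2) _
    rw [hz, MeasureTheory.integral_zero]
  -- the two iterated integrals over the triangle agree (Fubini)
  have hswap : (∫ σ, ∫ τ, Ghat (σ, τ)) = ∫ τ, ∫ σ, Ghat (σ, τ) := by
    apply MeasureTheory.integral_integral_swap
    rw [← Measure.volume_eq_prod]
    exact hGhatInt
  have houter1 : (∫ σ in (c - t)..s, ∫ τ in (c - σ)..t, G (σ, τ)) = ∫ σ, ∫ τ, Ghat (σ, τ) := by
    rw [intervalIntegral.integral_of_le hab1.le,
      ← setIntegral_eq_integral_of_forall_compl_eq_zero (fun σ hσ => hzero1 σ hσ)]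
    exact setIntegral_congr_fun measurableSet_Ioc (fun σ hσ => (hinner1 σ hσ).symm)
  have houter2 : (∫ τ in (c - s)..t, ∫ σ in (c - τ)..s, G (σ, τ)) = ∫ σ, ∫ τ, Ghat (σ, τ) := by
    rw [hswap, intervalIntegral.integral_of_le hab2.le,
      ← setIntegral_eq_integral_of_forall_compl_eq_zero (fun τ hτ => hzero2 τ hτ)]
    exact setIntegral_congr_fun measurableSet_Ioc (fun τ hτ => (hinner2 τ hτ).symm)
  -- integrability of the boundary integrands
  have intA1 : IntervalIntegrable (fun σ => lam (σ + t) * f1 (σ, t)) volume (c - t) s := by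
    apply ContinuousOn.intervalIntegrable
    apply ContinuousOn.mul
    · exact (hlamc.comp (by fun_prop)).continuousOn
    · apply hf1C.continuousOn.comp (Continuous.continuousOn (by fun_prop))
      intro σ hσ
      rw [uIcc_of_le hab1.le] at hσ
      exact hmemV σ t (by linarith [hσ.1]) ht.le (by linarith [hσ.1])
  have intB1 : IntervalIntegrable (fun σ => lam c * f1 (σ, c - σ)) volume (c - t) s := by
    apply ContinuousOn.intervalIntegrable
    apply ContinuousOn.mul continuousOn_const
    apply hf1C.continuousOn.comp (Continuous.continuousOn (by fun_prop))
    intro σ hσ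
    rw [uIcc_of_le hab1.le] at hσ
    exact hmemV σ (c - σ) (by linarith [hσ.1]) (by linarith [hσ.2]) (by linarith)
  have intB1' : IntervalIntegrable (fun σ => lam c * f2 (σ, c - σ)) volume (c - t) s := by
    apply ContinuousOn.intervalIntegrable
    apply ContinuousOn.mul continuousOn_const
    apply hf2C.continuousOn.comp (Continuous.continuousOn (by fun_prop))
    intro σ hσ
    rw [uIcc_of_le hab1.le] at hσ
    exact hmemV σ (c - σ) (by linarith [hσ.1]) (by linarith [hσ.2]) (by linarith)
  have intA2 : IntervalIntegrable (fun τ => lam (s + τ) * f2 (s, τ)) volume (c - s) t := by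
    apply ContinuousOn.intervalIntegrable
    apply ContinuousOn.mul
    · exact (hlamc.comp (by fun_prop)).continuousOn
    · apply hf2C.continuousOn.comp (Continuous.continuousOn (by fun_prop))
      intro τ hτ
      rw [uIcc_of_le hab2.le] at hτ
      exact hmemV s τ hs.le (by linarith [hτ.1]) (by linarith [hτ.1])
  have intB2 : IntervalIntegrable (fun τ => lam c * f2 (c - τ, τ)) volume (c - s) t := by
    apply ContinuousOn.intervalIntegrable
    apply ContinuousOn.mul continuousOn_const
    apply hf2C.continuousOn.comp (Continuous.continuousOn (by fun_prop))
    intro τ hτ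
    rw [uIcc_of_le hab2.le] at hτ
    exact hmemV (c - τ) τ (by linarith [hτ.2]) (by linarith [hτ.1]) (by linarith)
  -- main rearrangements
  have e1 : (∫ σ in (c - t)..s, lam (σ + t) * f1 (σ, t))
      - (∫ σ in (c - t)..s, lam c * f1 (σ, c - σ)) = ∫ σ, ∫ τ, Ghat (σ, τ) := by
    rw [← intervalIntegral.integral_sub intA1 intB1, ← houter1]
    exact intervalIntegral.integral_congr key1
  have e2 : (∫ τ in (c - s)..t, lam (s + τ) * f2 (s, τ))
      - (∫ τ in (c - s)..t, lam c * f2 (c - τ, τ)) = -∫ σ, ∫ τ, Ghat (σ, τ) := by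
    rw [← intervalIntegral.integral_sub intA2 intB2, ← houter2, ← intervalIntegral.integral_neg]
    exact intervalIntegral.integral_congr key2
  have e3 : (∫ τ in (c - s)..t, lam c * f2 (c - τ, τ))
      = ∫ σ in (c - t)..s, lam c * f2 (σ, c - σ) := by
    have h := intervalIntegral.integral_comp_sub_left (a := c - s) (b := t)
      (fun σ => lam c * f2 (σ, c - σ)) c
    simp only [sub_sub_cancel] at h
    exact h
  -- rewrite the statement in terms of f1, f2
  have hL1 : (∫ σ in (c - t)..s, lam (σ + t) * pd1 x σ t)
      = ∫ σ in (c - t)..s, lam (σ + t) * f1 (σ, t) := by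
    apply intervalIntegral.integral_congr
    intro σ hσ
    rw [uIcc_of_le hab1.le] at hσ
    have hmem : ((σ, t) : ℝ × ℝ) ∈ V := hmemV σ t (by linarith [hσ.1]) ht.le (by linarith [hσ.1])
    simp only []
    rw [hpd1 (σ, t) hmem]
  have hL2 : (∫ τ in (c - s)..t, lam (s + τ) * pd2 x s τ)
      = ∫ τ in (c - s)..t, lam (s + τ) * f2 (s, τ) := by
    apply intervalIntegral.integral_congr
    intro τ hτ
    rw [uIcc_of_le hab2.le] at hτ
    have hmem : ((s, τ) : ℝ × ℝ) ∈ V := hmemV s τ hs.le (by linarith [hτ.1]) (by linarith [hτ.1])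
    simp only []
    rw [hpd2 (s, τ) hmem]
  have hrhs : lam c * (∫ σ in (c - t)..s, (pd1 x σ (c - σ) + pd2 x σ (c - σ)))
      = (∫ σ in (c - t)..s, lam c * f1 (σ, c - σ))
        + ∫ σ in (c - t)..s, lam c * f2 (σ, c - σ) := by
    rw [← intervalIntegral.integral_add intB1 intB1', ← intervalIntegral.integral_const_mul]
    apply intervalIntegral.integral_congr
    intro σ hσ
    rw [uIcc_of_le hab1.le] at hσ
    have hmem : ((σ, c - σ) : ℝ × ℝ) ∈ V :=
      hmemV σ (c - σ) (by linarith [hσ.1]) (by linarith [hσ.2]) (by linarith)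
    simp only []
    rw [hpd1 (σ, c - σ) hmem, hpd2 (σ, c - σ) hmem]
    ring
  rw [hL1, hL2, hrhs]
  linarith [e1, e2, e3]
end

section
/- Let c > 0, let λ : ℝ → ℝ be continuously differentiable with λ(u) > 0 for u > 0, and let x be twice continuously differentiable on an open neighborhood of the closed domain Ω̄_c = {(s,t) ∈ ℝ² : s ≥ 0, t ≥ 0, s+t ≥ c}, satisfying 2λ(s+t)·x_st + λ'(s+t)·(x_s + x_t) = 0 there. Then for every (s,t) ∈ Ω̄_c, writing ξ⁺ = max(ξ,0), the following unified Volterra-type integral identity holds: 2λ(s+t)·x(s,t) = ∫_{(c−t)⁺}^{s} λ'(σ+t)·x(σ,t) dσ + ∫_{(c−s)⁺}^{t} λ'(s+τ)·x(s,τ) dτ + λ(max(c,t))·x((c−t)⁺, t) + λ(max(s,c))·x(s, (c−s)⁺) + ∫_{(c−t)⁺}^{min(c,s)} λ(c)·(x_s + x_t)(σ, c−σ) dσ + ∫_{min(c,s)}^{s} λ(σ + (c−s)⁺)·x_s(σ, (c−s)⁺) dσ + ∫_{min(c,t)}^{t} λ((c−t)⁺ + τ)·x_t((c−t)⁺, τ)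 dτ. -/
open MeasureTheory Set


lemma ii_of_contOn {g : ℝ × ℝ → ℝ} {V : Set (ℝ × ℝ)} (hg : ContinuousOn g V)
    {γ : ℝ → ℝ × ℝ} (hγ : Continuous γ) {u v : ℝ} (hmap : ∀ r ∈ Set.uIcc u v, γ r ∈ V) :
    IntervalIntegrable (fun r => g (γ r)) MeasureTheory.volume u v :=
  (hg.comp hγ.continuousOn hmap).intervalIntegrable

lemma planar_swap (c s t : ℝ) (hs0 : 0 ≤ s) (ht0 : 0 ≤ t) (hts : c - t ≤ s)
    (f : ℝ → ℝ → ℝ)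
    (hInt : MeasureTheory.Integrable (fun p : ℝ × ℝ =>
      if 0 < p.1 ∧ p.1 ≤ s ∧ 0 < p.2 ∧ p.2 ≤ t ∧ c < p.1 + p.2 then f p.1 p.2 else 0)) :
    (∫ σ in (max (c - t) 0)..s, ∫ τ in (max (c - σ) 0)..t, f σ τ)
      = ∫ τ in (max (c - s) 0)..t, ∫ σ in (max (c - τ) 0)..s, f σ τ := by
  set g : ℝ → ℝ → ℝ :=
    fun σ τ => if 0 < σ ∧ σ ≤ s ∧ 0 < τ ∧ τ ≤ t ∧ c < σ + τ then f σ τ else 0 with hg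
  have ha : max (c - t) 0 ≤ s := max_le (by linarith) hs0
  have hb : max (c - s) 0 ≤ t := max_le (by linarith) ht0
  have h1 : ∀ σ ∈ Ioc (max (c - t) 0) s,
      (∫ τ in (max (c - σ) 0)..t, f σ τ) = ∫ τ, g σ τ := by
    intro σ hσ
    have h0σ : 0 < σ := lt_of_le_of_lt (le_max_right _ _) hσ.1
    have hcσ : c - σ < t := by
      have := lt_of_le_of_lt (le_max_left _ _) hσ.1; linarith
    have hcs : max (c - σ) 0 ≤ t := max_le hcσ.le ht0
    have hfun : (fun τ => g σ τ) = (Ioc (max (c - σ) 0) t).indicator (fun τ => f σ τ) := by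
      funext τ
      by_cases hτ : τ ∈ Ioc (max (c - σ) 0) t
      · rw [indicator_of_mem hτ, hg]
        refine if_pos ⟨h0σ, hσ.2, lt_of_le_of_lt (le_max_right _ _) hτ.1, hτ.2, ?_⟩
        have := lt_of_le_of_lt (le_max_left _ _) hτ.1; linarith
      · rw [indicator_of_notMem hτ, hg]
        refine if_neg ?_
        rintro ⟨-, -, h3, h4, h5⟩
        exact hτ ⟨max_lt (by linarith) h3, h4⟩
    rw [intervalIntegral.integral_of_le hcs, ← MeasureTheory.integral_indicator measurableSet_Ioc,
      ← hfun]
  have h2 : ∀ σ, σ ∉ Ioc (max (c - t) 0) s → (∫ τ, g σ τ) = 0 := by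
    intro σ hσ
    have : (fun τ => g σ τ) = fun _ => 0 := by
      funext τ
      rw [hg]
      refine if_neg ?_
      rintro ⟨p1, p2, p3, p4, p5⟩
      exact hσ ⟨max_lt (by linarith) p1, p2⟩
    rw [this, integral_zero]
  have h1' : ∀ τ ∈ Ioc (max (c - s) 0) t,
      (∫ σ in (max (c - τ) 0)..s, f σ τ) = ∫ σ, g σ τ := by
    intro τ hτ
    have h0τ : 0 < τ := lt_of_le_of_lt (le_max_right _ _) hτ.1
    have hcτ : c - τ < s := by
      have := lt_of_le_of_lt (le_max_left _ _) hτ.1; linarith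
    have hcs : max (c - τ) 0 ≤ s := max_le hcτ.le hs0
    have hfun : (fun σ => g σ τ) = (Ioc (max (c - τ) 0) s).indicator (fun σ => f σ τ) := by
      funext σ
      by_cases hσ : σ ∈ Ioc (max (c - τ) 0) s
      · rw [indicator_of_mem hσ, hg]
        refine if_pos ⟨lt_of_le_of_lt (le_max_right _ _) hσ.1, hσ.2, h0τ, hτ.2, ?_⟩
        have := lt_of_le_of_lt (le_max_left _ _) hσ.1; linarith
      · rw [indicator_of_notMem hσ, hg]
        refine if_neg ?_
        rintro ⟨h3, h4, -, -, h5⟩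
        exact hσ ⟨max_lt (by linarith) h3, h4⟩
    rw [intervalIntegral.integral_of_le hcs, ← MeasureTheory.integral_indicator measurableSet_Ioc,
      ← hfun]
  have h2' : ∀ τ, τ ∉ Ioc (max (c - s) 0) t → (∫ σ, g σ τ) = 0 := by
    intro τ hτ
    have : (fun σ => g σ τ) = fun _ => 0 := by
      funext σ
      rw [hg]
      refine if_neg ?_
      rintro ⟨p1, p2, p3, p4, p5⟩
      exact hτ ⟨max_lt (by linarith) p3, p4⟩
    rw [this, integral_zero]
  have hgi : Integrable (Function.uncurry g) ((volume : Measure ℝ).prod volume) := by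
    rw [← Measure.volume_eq_prod]
    exact hInt
  calc (∫ σ in (max (c - t) 0)..s, ∫ τ in (max (c - σ) 0)..t, f σ τ)
      = ∫ σ in Ioc (max (c - t) 0) s, ∫ τ, g σ τ := by
        rw [intervalIntegral.integral_of_le ha]
        exact setIntegral_congr_fun measurableSet_Ioc (fun σ hσ => h1 σ hσ)
    _ = ∫ σ, ∫ τ, g σ τ := by
        rw [← MeasureTheory.integral_indicator measurableSet_Ioc]
        congr 1
        funext σ
        by_cases hσ : σ ∈ Ioc (max (c - t) 0) s
        · rw [indicator_of_mem hσ]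
        · rw [indicator_of_notMem hσ, h2 σ hσ]
    _ = ∫ τ, ∫ σ, g σ τ := MeasureTheory.integral_integral_swap hgi
    _ = ∫ τ in Ioc (max (c - s) 0) t, ∫ σ, g σ τ := by
        rw [← MeasureTheory.integral_indicator measurableSet_Ioc]
        congr 1
        funext τ
        by_cases hτ : τ ∈ Ioc (max (c - s) 0) t
        · rw [indicator_of_mem hτ]
        · rw [indicator_of_notMem hτ, h2' τ hτ]
    _ = ∫ τ in (max (c - s) 0)..t, ∫ σ in (max (c - τ) 0)..s, f σ τ := by
        rw [intervalIntegral.integral_of_le hb]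
        exact (setIntegral_congr_fun measurableSet_Ioc (fun τ hτ => h1' τ hτ)).symm

/-- The unified Volterra-type integral identity for a classical solution
of the linear hodograph equation on a neighborhood of
`Ω̄_c = {s ≥ 0, t ≥ 0, s+t ≥ c}`, valid at every point of `Ω̄_c`, where
`ξ⁺ = max(ξ,0)`. -/
theorem unified_volterra_identity
    (c : ℝ) (hc : 0 < c) (lam : ℝ → ℝ) (hlam : ContDiff ℝ 1 lam)
    (hpos : ∀ u : ℝ, 0 < u → 0 < lam u)
    (x : ℝ → ℝ → ℝ) (V : Set (ℝ × ℝ)) (hV : IsOpen V)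
    (hΩV : {p : ℝ × ℝ | 0 ≤ p.1 ∧ 0 ≤ p.2 ∧ c ≤ p.1 + p.2} ⊆ V)
    (hx : ContDiffOn ℝ 2 (fun p : ℝ × ℝ => x p.1 p.2) V)
    (hpde : ∀ p ∈ V,
      2 * lam (p.1 + p.2) * pd2 (pd1 x) p.1 p.2
        + deriv lam (p.1 + p.2) * (pd1 x p.1 p.2 + pd2 x p.1 p.2) = 0) :
    ∀ s t : ℝ, 0 ≤ s → 0 ≤ t → c ≤ s + t →
      2 * lam (s + t) * x s t
      = (∫ σ in (max (c - t) 0)..s, deriv lam (σ + t) * x σ t)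
        + (∫ τ in (max (c - s) 0)..t, deriv lam (s + τ) * x s τ)
        + lam (max c t) * x (max (c - t) 0) t
        + lam (max s c) * x s (max (c - s) 0)
        + (∫ σ in (max (c - t) 0)..(min c s),
            lam c * (pd1 x σ (c - σ) + pd2 x σ (c - σ)))
        + (∫ σ in (min c s)..s, lam (σ + max (c - s) 0) * pd1 x σ (max (c - s) 0))
        + (∫ τ in (min c t)..t, lam (max (c - t) 0 + τ) * pd2 x (max (c - t) 0) τ) := by
  intro s t hs ht hst
  set X : ℝ × ℝ → ℝ := fun p => x p.1 p.2 with hX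
  set D : ℝ × ℝ → (ℝ × ℝ →L[ℝ] ℝ) := fderiv ℝ X with hD
  set F1 : ℝ × ℝ → ℝ := fun p => D p (1, 0) with hF1
  set F2 : ℝ × ℝ → ℝ := fun p => D p (0, 1) with hF2
  set G2 : ℝ × ℝ → ℝ := fun p => fderiv ℝ D p (0, 1) (1, 0) with hG2
  ---- calculus plumbing
  have hXdiff : ∀ p ∈ V, DifferentiableAt ℝ X p := fun p hp =>
    (hx.differentiableOn (by norm_num)).differentiableAt (hV.mem_nhds hp)
  have hD1 : ContDiffOn ℝ 1 D V := hx.fderiv_of_isOpen hV (by norm_num)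
  have hDdiff : ∀ p ∈ V, DifferentiableAt ℝ D p := fun p hp =>
    (hD1.differentiableOn one_ne_zero).differentiableAt (hV.mem_nhds hp)
  have hDcont : ContinuousOn D V := hD1.continuousOn
  have cX : ContinuousOn X V := hx.continuousOn
  have cF1 : ContinuousOn F1 V := hDcont.clm_apply continuousOn_const
  have cF2 : ContinuousOn F2 V := hDcont.clm_apply continuousOn_const
  have cDD : ContinuousOn (fderiv ℝ D) V := hD1.continuousOn_fderiv_of_isOpen hV le_rfl
  have cG2 : ContinuousOn G2 V :=
    (cDD.clm_apply continuousOn_const).clm_apply continuousOn_const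
  have hsym : ∀ p ∈ V, fderiv ℝ D p (1, 0) (0, 1) = G2 p := by
    intro p hp
    have hev : ∀ᶠ y in nhds p, HasFDerivAt X (D y) y := by
      filter_upwards [hV.mem_nhds hp] with y hy
      exact (hXdiff y hy).hasFDerivAt
    exact second_derivative_symmetric_of_eventually hev (hDdiff p hp).hasFDerivAt _ _
  have hline1 : ∀ p ∈ V, HasDerivAt (fun σ => x σ p.2) (F1 p) p.1 := by
    intro p hp
    have hcurve : HasDerivAt (fun σ : ℝ => (σ, p.2)) ((1 : ℝ), (0 : ℝ)) p.1 :=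
      (hasDerivAt_id p.1).prodMk (hasDerivAt_const p.1 p.2)
    have := ((hXdiff p hp).hasFDerivAt.comp_hasDerivAt p.1 hcurve)
    simpa [Function.comp_def] using this
  have hline2 : ∀ p ∈ V, HasDerivAt (fun τ => x p.1 τ) (F2 p) p.2 := by
    intro p hp
    have hcurve : HasDerivAt (fun τ : ℝ => (p.1, τ)) ((0 : ℝ), (1 : ℝ)) p.2 :=
      (hasDerivAt_const p.2 p.1).prodMk (hasDerivAt_id p.2)
    have := ((hXdiff p hp).hasFDerivAt.comp_hasDerivAt p.2 hcurve)
    simpa [Function.comp_def] using this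
  have hpd1V : ∀ p ∈ V, pd1 x p.1 p.2 = F1 p := fun p hp => (hline1 p hp).deriv
  have hpd2V : ∀ p ∈ V, pd2 x p.1 p.2 = F2 p := fun p hp => (hline2 p hp).deriv
  have hF1line2 : ∀ p ∈ V, HasDerivAt (fun τ => F1 (p.1, τ)) (G2 p) p.2 := by
    intro p hp
    have hcurve : HasDerivAt (fun τ : ℝ => (p.1, τ)) ((0 : ℝ), (1 : ℝ)) p.2 :=
      (hasDerivAt_const p.2 p.1).prodMk (hasDerivAt_id p.2)
    have hDl : HasDerivAt (fun τ => D (p.1, τ)) (fderiv ℝ D p (0, 1)) p.2 := by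
      have := ((hDdiff p hp).hasFDerivAt.comp_hasDerivAt p.2 hcurve)
      simpa [Function.comp_def] using this
    have := hDl.clm_apply (hasDerivAt_const p.2 ((1 : ℝ), (0 : ℝ)))
    simpa using this
  have hF2line1 : ∀ p ∈ V, HasDerivAt (fun σ => F2 (σ, p.2)) (G2 p) p.1 := by
    intro p hp
    have hcurve : HasDerivAt (fun σ : ℝ => (σ, p.2)) ((1 : ℝ), (0 : ℝ)) p.1 :=
      (hasDerivAt_id p.1).prodMk (hasDerivAt_const p.1 p.2)
    have hDl : HasDerivAt (fun σ => D (σ, p.2)) (fderiv ℝ D p (1, 0)) p.1 := by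
      have := ((hDdiff p hp).hasFDerivAt.comp_hasDerivAt p.1 hcurve)
      simpa [Function.comp_def] using this
    have h := hDl.clm_apply (hasDerivAt_const p.1 ((0 : ℝ), (1 : ℝ)))
    rw [← hsym p hp]
    simpa using h
  have hpd21V : ∀ p ∈ V, pd2 (pd1 x) p.1 p.2 = G2 p := by
    intro p hp
    have hev : (fun τ => F1 (p.1, τ)) =ᶠ[nhds p.2] (fun τ => pd1 x p.1 τ) := by
      have hmem : ∀ᶠ τ in nhds p.2, (p.1, τ) ∈ V := by
        have hcont : ContinuousAt (fun τ : ℝ => (p.1, τ)) p.2 :=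
          (continuous_const.prodMk continuous_id).continuousAt
        have : V ∈ nhds ((p.1, p.2) : ℝ × ℝ) := hV.mem_nhds (by simpa using hp)
        exact hcont.eventually_mem this
      filter_upwards [hmem] with τ hτ
      exact (hpd1V (p.1, τ) hτ).symm
    exact ((hF1line2 p hp).congr_of_eventuallyEq hev.symm).deriv
  ---- lam facts
  have hlamd : ∀ u : ℝ, HasDerivAt lam (deriv lam u) u := fun u =>
    ((hlam.differentiable one_ne_zero) u).hasDerivAt
  have clamd : Continuous (deriv lam) := hlam.continuous_deriv le_rfl
  have clam : Continuous lam := hlam.continuous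
  have hlc1 : ∀ (σ τ : ℝ), HasDerivAt (fun σ' => lam (σ' + τ)) (deriv lam (σ + τ)) σ := by
    intro σ τ
    simpa [Function.comp_def] using (hlamd (σ + τ)).comp σ ((hasDerivAt_id σ).add_const τ)
  have hlc2 : ∀ (σ τ : ℝ), HasDerivAt (fun τ' => lam (σ + τ')) (deriv lam (σ + τ)) τ := by
    intro σ τ
    simpa [Function.comp_def] using (hlamd (σ + τ)).comp τ ((hasDerivAt_id τ).const_add σ)
  ---- continuity packages on V
  have cg1 : ContinuousOn (fun p : ℝ × ℝ => deriv lam (p.1 + p.2) * X p) V :=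
    ((clamd.comp (continuous_fst.add continuous_snd)).continuousOn).mul cX
  have cgP : ContinuousOn (fun p : ℝ × ℝ => lam (p.1 + p.2) * F1 p) V :=
    ((clam.comp (continuous_fst.add continuous_snd)).continuousOn).mul cF1
  have cgQ : ContinuousOn (fun p : ℝ × ℝ => lam (p.1 + p.2) * F2 p) V :=
    ((clam.comp (continuous_fst.add continuous_snd)).continuousOn).mul cF2
  have cgf : ContinuousOn
      (fun p : ℝ × ℝ => deriv lam (p.1 + p.2) * F1 p + lam (p.1 + p.2) * G2 p) V :=
    (((clamd.comp (continuous_fst.add continuous_snd)).continuousOn).mul cF1).add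
      (((clam.comp (continuous_fst.add continuous_snd)).continuousOn).mul cG2)
  have cgf2 : ContinuousOn
      (fun p : ℝ × ℝ => deriv lam (p.1 + p.2) * F2 p + lam (p.1 + p.2) * G2 p) V :=
    (((clamd.comp (continuous_fst.add continuous_snd)).continuousOn).mul cF2).add
      (((clam.comp (continuous_fst.add continuous_snd)).continuousOn).mul cG2)
  have cgD1 : ContinuousOn (fun p : ℝ × ℝ => lam c * F1 p) V := continuousOn_const.mul cF1
  have cgD2 : ContinuousOn (fun p : ℝ × ℝ => lam c * F2 p) V := continuousOn_const.mul cF2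
  ---- PDE in F-form
  have hpde' : ∀ p ∈ V, deriv lam (p.1 + p.2) * F2 p + lam (p.1 + p.2) * G2 p
      = -(deriv lam (p.1 + p.2) * F1 p + lam (p.1 + p.2) * G2 p) := by
    intro p hp
    have h := hpde p hp
    rw [hpd1V p hp, hpd2V p hp, hpd21V p hp] at h
    linear_combination h
  ---- basic inequalities
  have hΩ : ∀ {σ τ : ℝ}, 0 ≤ σ → 0 ≤ τ → c ≤ σ + τ → ((σ, τ) : ℝ × ℝ) ∈ V :=
    fun h1 h2 h3 => hΩV ⟨h1, h2, h3⟩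
  have ha0 : (0 : ℝ) ≤ max (c - t) 0 := le_max_right _ _
  have hb0 : (0 : ℝ) ≤ max (c - s) 0 := le_max_right _ _
  have hcta : c - t ≤ max (c - t) 0 := le_max_left _ _
  have hcsb : c - s ≤ max (c - s) 0 := le_max_left _ _
  have has : max (c - t) 0 ≤ s := max_le (by linarith) hs
  have hbt : max (c - s) 0 ≤ t := max_le (by linarith) ht
  have ham : max (c - t) 0 ≤ min c s := le_min (max_le (by linarith) hc.le) has
  have hms : min c s ≤ s := min_le_right _ _
  have hm0 : (0 : ℝ) ≤ min c s := le_min hc.le hs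
  have hbn : max (c - s) 0 ≤ min c t := le_min (max_le (by linarith) hc.le) hbt
  have hnt : min c t ≤ t := min_le_right _ _
  have hn0 : (0 : ℝ) ≤ min c t := le_min hc.le ht
  have hat : max (c - t) 0 + t = max c t := by
    rcases le_total (c - t) 0 with h | h
    · rw [max_eq_right h, max_eq_right (by linarith)]; ring
    · rw [max_eq_left h, max_eq_left (by linarith)]; ring
  have hsb : s + max (c - s) 0 = max s c := by
    rcases le_total (c - s) 0 with h | h
    · rw [max_eq_right h, max_eq_left (by linarith)]; ring
    · rw [max_eq_left h, max_eq_right (by linarith)]; ring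
  have hcn : c - min c t = max (c - t) 0 := by
    rcases le_total c t with h | h
    · rw [min_eq_left h, max_eq_right (by linarith)]; ring
    · rw [min_eq_right h, max_eq_left (by linarith)]
  have hcb : c - max (c - s) 0 = min c s := by
    rcases le_total c s with h | h
    · rw [max_eq_right (by linarith), min_eq_left h]; ring
    · rw [max_eq_left (by linarith), min_eq_right h]; ring
  ---- membership of paths
  have memH : ∀ σ ∈ uIcc (max (c - t) 0) s, ((σ, t) : ℝ × ℝ) ∈ V := by
    intro σ hσ
    rw [uIcc_of_le has] at hσ
    exact hΩ (le_trans ha0 hσ.1) ht (by have := hσ.1; linarith)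
  have memVt : ∀ τ ∈ uIcc (max (c - s) 0) t, ((s, τ) : ℝ × ℝ) ∈ V := by
    intro τ hτ
    rw [uIcc_of_le hbt] at hτ
    exact hΩ hs (le_trans hb0 hτ.1) (by have := hτ.1; linarith)
  have memLow : ∀ σ ∈ uIcc (max (c - t) 0) s, ∀ τ ∈ uIcc (max (c - σ) 0) t,
      ((σ, τ) : ℝ × ℝ) ∈ V := by
    intro σ hσ τ hτ
    rw [uIcc_of_le has] at hσ
    have hσt : max (c - σ) 0 ≤ t := max_le (by have := hσ.1; linarith) ht
    rw [uIcc_of_le hσt] at hτ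
    have h1 : c - σ ≤ τ := le_trans (le_max_left _ _) hτ.1
    have h2 : (0 : ℝ) ≤ τ := le_trans (le_max_right _ _) hτ.1
    exact hΩ (le_trans ha0 hσ.1) h2 (by linarith)
  have memLow' : ∀ τ ∈ uIcc (max (c - s) 0) t, ∀ σ ∈ uIcc (max (c - τ) 0) s,
      ((σ, τ) : ℝ × ℝ) ∈ V := by
    intro τ hτ σ hσ
    rw [uIcc_of_le hbt] at hτ
    have hτs : max (c - τ) 0 ≤ s := max_le (by have := hτ.1; linarith) hs
    rw [uIcc_of_le hτs] at hσ
    have h1 : c - τ ≤ σ := le_trans (le_max_left _ _) hσ.1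
    have h2 : (0 : ℝ) ≤ σ := le_trans (le_max_right _ _) hσ.1
    exact hΩ h2 (le_trans hb0 hτ.1) (by linarith)
  have memPlow : ∀ σ ∈ uIcc (max (c - t) 0) s, ((σ, max (c - σ) 0) : ℝ × ℝ) ∈ V := by
    intro σ hσ
    rw [uIcc_of_le has] at hσ
    exact hΩ (le_trans ha0 hσ.1) (le_max_right _ _)
      (by have := le_max_left (c - σ) 0; linarith)
  have memQlow : ∀ τ ∈ uIcc (max (c - s) 0) t, ((max (c - τ) 0, τ) : ℝ × ℝ) ∈ V := by
    intro τ hτ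
    rw [uIcc_of_le hbt] at hτ
    exact hΩ (le_max_right _ _) (le_trans hb0 hτ.1)
      (by have := le_max_left (c - τ) 0; linarith)
  have memDiag : ∀ σ ∈ uIcc (max (c - t) 0) (min c s), ((σ, c - σ) : ℝ × ℝ) ∈ V := by
    intro σ hσ
    rw [uIcc_of_le ham] at hσ
    have : σ ≤ c := le_trans hσ.2 (min_le_left _ _)
    exact hΩ (le_trans ha0 hσ.1) (by linarith) (by linarith)
  have memB : ∀ σ ∈ uIcc (min c s) s, ((σ, max (c - s) 0) : ℝ × ℝ) ∈ V := by
    intro σ hσ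
    rw [uIcc_of_le hms] at hσ
    have : min c s ≤ σ := hσ.1
    have h2 : c - max (c - s) 0 ≤ σ := by have := hσ.1; linarith [hcb]
    exact hΩ (le_trans hm0 hσ.1) hb0 (by linarith)
  have memA : ∀ τ ∈ uIcc (min c t) t, ((max (c - t) 0, τ) : ℝ × ℝ) ∈ V := by
    intro τ hτ
    rw [uIcc_of_le hnt] at hτ
    have h2 : c - max (c - t) 0 ≤ τ := by have := hτ.1; linarith [hcn]
    exact hΩ ha0 (le_trans hn0 hτ.1) (by linarith)
  ---- interval integrabilities
  have hγH : Continuous (fun σ : ℝ => ((σ, t) : ℝ × ℝ)) :=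
    continuous_id.prodMk continuous_const
  have hγV : Continuous (fun τ : ℝ => ((s, τ) : ℝ × ℝ)) :=
    continuous_const.prodMk continuous_id
  have hγPlow : Continuous (fun σ : ℝ => ((σ, max (c - σ) 0) : ℝ × ℝ)) :=
    continuous_id.prodMk ((continuous_const.sub continuous_id).max continuous_const)
  have hγQlow : Continuous (fun τ : ℝ => ((max (c - τ) 0, τ) : ℝ × ℝ)) :=
    ((continuous_const.sub continuous_id).max continuous_const).prodMk continuous_id
  have hγDiag : Continuous (fun σ : ℝ => ((σ, c - σ) : ℝ × ℝ)) :=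
    continuous_id.prodMk (continuous_const.sub continuous_id)
  have hγB : Continuous (fun σ : ℝ => ((σ, max (c - s) 0) : ℝ × ℝ)) :=
    continuous_id.prodMk continuous_const
  have hγA : Continuous (fun τ : ℝ => ((max (c - t) 0, τ) : ℝ × ℝ)) :=
    continuous_const.prodMk continuous_id
  have hii_A1 : IntervalIntegrable (fun σ => deriv lam (σ + t) * x σ t) volume
      (max (c - t) 0) s := ii_of_contOn cg1 hγH memH
  have hii_P : IntervalIntegrable (fun σ => lam (σ + t) * F1 (σ, t)) volume
      (max (c - t) 0) s := ii_of_contOn cgP hγH memH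
  have hii_A2 : IntervalIntegrable (fun τ => deriv lam (s + τ) * x s τ) volume
      (max (c - s) 0) t := ii_of_contOn cg1 hγV memVt
  have hii_Q : IntervalIntegrable (fun τ => lam (s + τ) * F2 (s, τ)) volume
      (max (c - s) 0) t := ii_of_contOn cgQ hγV memVt
  have hii_Plow : IntervalIntegrable
      (fun σ => lam (σ + max (c - σ) 0) * F1 (σ, max (c - σ) 0)) volume
      (max (c - t) 0) s := ii_of_contOn cgP hγPlow memPlow
  have hii_Qlow : IntervalIntegrable
      (fun τ => lam (max (c - τ) 0 + τ) * F2 (max (c - τ) 0, τ)) volume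
      (max (c - s) 0) t := ii_of_contOn cgQ hγQlow memQlow
  ---- Step 1 : horizontal FTC
  have hftc1 : (∫ σ in (max (c - t) 0)..s,
        (deriv lam (σ + t) * x σ t + lam (σ + t) * F1 (σ, t)))
      = lam (s + t) * x s t - lam (max (c - t) 0 + t) * x (max (c - t) 0) t := by
    apply intervalIntegral.integral_eq_sub_of_hasDerivAt
    · intro σ hσ
      exact (hlc1 σ t).mul (hline1 (σ, t) (memH σ hσ))
    · exact hii_A1.add hii_P
  have key1 : lam (s + t) * x s t
      = lam (max (c - t) 0 + t) * x (max (c - t) 0) t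
        + (∫ σ in (max (c - t) 0)..s, deriv lam (σ + t) * x σ t)
        + (∫ σ in (max (c - t) 0)..s, lam (σ + t) * F1 (σ, t)) := by
    have hsp := intervalIntegral.integral_add hii_A1 hii_P
    rw [hsp] at hftc1
    linarith
  ---- Step 2 : vertical FTC
  have hftc2 : (∫ τ in (max (c - s) 0)..t,
        (deriv lam (s + τ) * x s τ + lam (s + τ) * F2 (s, τ)))
      = lam (s + t) * x s t - lam (s + max (c - s) 0) * x s (max (c - s) 0) := by
    apply intervalIntegral.integral_eq_sub_of_hasDerivAt
    · intro τ hτ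
      exact (hlc2 s τ).mul (hline2 (s, τ) (memVt τ hτ))
    · exact hii_A2.add hii_Q
  have key2 : lam (s + t) * x s t
      = lam (s + max (c - s) 0) * x s (max (c - s) 0)
        + (∫ τ in (max (c - s) 0)..t, deriv lam (s + τ) * x s τ)
        + (∫ τ in (max (c - s) 0)..t, lam (s + τ) * F2 (s, τ)) := by
    have hsp := intervalIntegral.integral_add hii_A2 hii_Q
    rw [hsp] at hftc2
    linarith
  ---- Step 3 : inner FTC along vertical fibers
  have hInσ : ∀ σ ∈ uIcc (max (c - t) 0) s,
      (∫ τ in (max (c - σ) 0)..t,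
        (deriv lam (σ + τ) * F1 (σ, τ) + lam (σ + τ) * G2 (σ, τ)))
      = lam (σ + t) * F1 (σ, t)
        - lam (σ + max (c - σ) 0) * F1 (σ, max (c - σ) 0) := by
    intro σ hσ
    apply intervalIntegral.integral_eq_sub_of_hasDerivAt
    · intro τ hτ
      exact (hlc2 σ τ).mul (hF1line2 (σ, τ) (memLow σ hσ τ hτ))
    · exact ii_of_contOn cgf (continuous_const.prodMk continuous_id) (memLow σ hσ)
  ---- Step 4 : inner FTC along horizontal fibers
  have hInτ : ∀ τ ∈ uIcc (max (c - s) 0) t,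
      (∫ σ in (max (c - τ) 0)..s,
        (deriv lam (σ + τ) * F1 (σ, τ) + lam (σ + τ) * G2 (σ, τ)))
      = lam (max (c - τ) 0 + τ) * F2 (max (c - τ) 0, τ) - lam (s + τ) * F2 (s, τ) := by
    intro τ hτ
    have h1 : (∫ σ in (max (c - τ) 0)..s,
        (deriv lam (σ + τ) * F2 (σ, τ) + lam (σ + τ) * G2 (σ, τ)))
        = lam (s + τ) * F2 (s, τ)
          - lam (max (c - τ) 0 + τ) * F2 (max (c - τ) 0, τ) := by
      apply intervalIntegral.integral_eq_sub_of_hasDerivAt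
      · intro σ hσ
        exact (hlc1 σ τ).mul (hF2line1 (σ, τ) (memLow' τ hτ σ hσ))
      · exact ii_of_contOn cgf2 (continuous_id.prodMk continuous_const) (memLow' τ hτ)
    have h2 : (∫ σ in (max (c - τ) 0)..s,
        (deriv lam (σ + τ) * F1 (σ, τ) + lam (σ + τ) * G2 (σ, τ)))
        = ∫ σ in (max (c - τ) 0)..s,
            -(deriv lam (σ + τ) * F2 (σ, τ) + lam (σ + τ) * G2 (σ, τ)) := by
      apply intervalIntegral.integral_congr
      intro σ hσ
      have h3 : deriv lam (σ + τ) * F2 (σ, τ) + lam (σ + τ) * G2 (σ, τ)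
          = -(deriv lam (σ + τ) * F1 (σ, τ) + lam (σ + τ) * G2 (σ, τ)) :=
        hpde' (σ, τ) (memLow' τ hτ σ hσ)
      show deriv lam (σ + τ) * F1 (σ, τ) + lam (σ + τ) * G2 (σ, τ)
          = -(deriv lam (σ + τ) * F2 (σ, τ) + lam (σ + τ) * G2 (σ, τ))
      linarith
    rw [h2, intervalIntegral.integral_neg, h1]
    ring
  ---- Step 5 : Fubini swap
  have hRint : Integrable (fun p : ℝ × ℝ =>
      if 0 < p.1 ∧ p.1 ≤ s ∧ 0 < p.2 ∧ p.2 ≤ t ∧ c < p.1 + p.2 then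
        (deriv lam (p.1 + p.2) * F1 p + lam (p.1 + p.2) * G2 p) else 0) := by
    set R : Set (ℝ × ℝ) :=
      {p : ℝ × ℝ | 0 < p.1 ∧ p.1 ≤ s ∧ 0 < p.2 ∧ p.2 ≤ t ∧ c < p.1 + p.2} with hR
    have hmeas : MeasurableSet R := by
      have : R = (Ioc 0 s ×ˢ Ioc 0 t) ∩ {p : ℝ × ℝ | c < p.1 + p.2} := by
        ext p
        simp only [hR, mem_setOf_eq, mem_inter_iff, mem_prod, mem_Ioc]
        tauto
      rw [this]
      exact (measurableSet_Ioc.prod measurableSet_Ioc).inter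
        ((isOpen_lt continuous_const (continuous_fst.add continuous_snd)).measurableSet)
    have heq : (fun p : ℝ × ℝ =>
        if 0 < p.1 ∧ p.1 ≤ s ∧ 0 < p.2 ∧ p.2 ≤ t ∧ c < p.1 + p.2 then
          (deriv lam (p.1 + p.2) * F1 p + lam (p.1 + p.2) * G2 p) else 0)
        = R.indicator (fun p => deriv lam (p.1 + p.2) * F1 p + lam (p.1 + p.2) * G2 p) := by
      funext p
      simp only [indicator_apply, hR, mem_setOf_eq]
    rw [heq, integrable_indicator_iff hmeas]
    have hΩc : IsClosed {p : ℝ × ℝ | 0 ≤ p.1 ∧ 0 ≤ p.2 ∧ c ≤ p.1 + p.2} := by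
      have : {p : ℝ × ℝ | 0 ≤ p.1 ∧ 0 ≤ p.2 ∧ c ≤ p.1 + p.2}
          = {p : ℝ × ℝ | 0 ≤ p.1} ∩ ({p : ℝ × ℝ | 0 ≤ p.2} ∩ {p : ℝ × ℝ | c ≤ p.1 + p.2}) :=
        rfl
      rw [this]
      exact (isClosed_le continuous_const continuous_fst).inter
        ((isClosed_le continuous_const continuous_snd).inter
          (isClosed_le continuous_const (continuous_fst.add continuous_snd)))
    have hK : IsCompact ((Icc (0:ℝ) s ×ˢ Icc (0:ℝ) t)
        ∩ {p : ℝ × ℝ | 0 ≤ p.1 ∧ 0 ≤ p.2 ∧ c ≤ p.1 + p.2}) :=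
      (isCompact_Icc.prod isCompact_Icc).inter_right hΩc
    have hsubV : ((Icc (0:ℝ) s ×ˢ Icc (0:ℝ) t)
        ∩ {p : ℝ × ℝ | 0 ≤ p.1 ∧ 0 ≤ p.2 ∧ c ≤ p.1 + p.2}) ⊆ V :=
      fun p hp => hΩV hp.2
    have hint : IntegrableOn
        (fun p : ℝ × ℝ => deriv lam (p.1 + p.2) * F1 p + lam (p.1 + p.2) * G2 p)
        ((Icc (0:ℝ) s ×ˢ Icc (0:ℝ) t)
          ∩ {p : ℝ × ℝ | 0 ≤ p.1 ∧ 0 ≤ p.2 ∧ c ≤ p.1 + p.2}) :=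
      (cgf.mono hsubV).integrableOn_compact hK
    refine hint.mono_set ?_
    rintro p ⟨q1, q2, q3, q4, q5⟩
    exact ⟨⟨⟨q1.le, q2⟩, ⟨q3.le, q4⟩⟩, q1.le, q3.le, q5.le⟩
  have hswap : (∫ σ in (max (c - t) 0)..s, ∫ τ in (max (c - σ) 0)..t,
        (deriv lam (σ + τ) * F1 (σ, τ) + lam (σ + τ) * G2 (σ, τ)))
      = ∫ τ in (max (c - s) 0)..t, ∫ σ in (max (c - τ) 0)..s,
        (deriv lam (σ + τ) * F1 (σ, τ) + lam (σ + τ) * G2 (σ, τ)) :=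
    planar_swap c s t hs ht (by linarith)
      (fun σ τ => deriv lam (σ + τ) * F1 (σ, τ) + lam (σ + τ) * G2 (σ, τ)) hRint
  ---- Step 5b : evaluate both sides of the swap
  have hL : (∫ σ in (max (c - t) 0)..s, ∫ τ in (max (c - σ) 0)..t,
        (deriv lam (σ + τ) * F1 (σ, τ) + lam (σ + τ) * G2 (σ, τ)))
      = (∫ σ in (max (c - t) 0)..s, lam (σ + t) * F1 (σ, t))
        - (∫ σ in (max (c - t) 0)..s,
            lam (σ + max (c - σ) 0) * F1 (σ, max (c - σ) 0)) := by
    rw [intervalIntegral.integral_congr hInσ]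
    exact intervalIntegral.integral_sub hii_P hii_Plow
  have hRr : (∫ τ in (max (c - s) 0)..t, ∫ σ in (max (c - τ) 0)..s,
        (deriv lam (σ + τ) * F1 (σ, τ) + lam (σ + τ) * G2 (σ, τ)))
      = (∫ τ in (max (c - s) 0)..t,
            lam (max (c - τ) 0 + τ) * F2 (max (c - τ) 0, τ))
        - (∫ τ in (max (c - s) 0)..t, lam (s + τ) * F2 (s, τ)) := by
    rw [intervalIntegral.integral_congr hInτ]
    exact intervalIntegral.integral_sub hii_Qlow hii_Q
  have hbal : (∫ σ in (max (c - t) 0)..s, lam (σ + t) * F1 (σ, t))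
        + (∫ τ in (max (c - s) 0)..t, lam (s + τ) * F2 (s, τ))
      = (∫ σ in (max (c - t) 0)..s,
            lam (σ + max (c - σ) 0) * F1 (σ, max (c - σ) 0))
        + (∫ τ in (max (c - s) 0)..t,
            lam (max (c - τ) 0 + τ) * F2 (max (c - τ) 0, τ)) := by
    rw [hL, hRr] at hswap
    linarith
  ---- Step 6 : split the boundary integrals
  have hE1split : (∫ σ in (max (c - t) 0)..s,
        lam (σ + max (c - σ) 0) * F1 (σ, max (c - σ) 0))
      = (∫ σ in (max (c - t) 0)..(min c s),
          lam (σ + max (c - σ) 0) * F1 (σ, max (c - σ) 0))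
        + (∫ σ in (min c s)..s,
          lam (σ + max (c - σ) 0) * F1 (σ, max (c - σ) 0)) := by
    refine (intervalIntegral.integral_add_adjacent_intervals ?_ ?_).symm
    · refine hii_Plow.mono_set ?_
      rw [uIcc_of_le ham, uIcc_of_le has]
      exact Icc_subset_Icc le_rfl hms
    · refine hii_Plow.mono_set ?_
      rw [uIcc_of_le hms, uIcc_of_le has]
      exact Icc_subset_Icc ham le_rfl
  have hE2split : (∫ τ in (max (c - s) 0)..t,
        lam (max (c - τ) 0 + τ) * F2 (max (c - τ) 0, τ))
      = (∫ τ in (max (c - s) 0)..(min c t),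
          lam (max (c - τ) 0 + τ) * F2 (max (c - τ) 0, τ))
        + (∫ τ in (min c t)..t,
          lam (max (c - τ) 0 + τ) * F2 (max (c - τ) 0, τ)) := by
    refine (intervalIntegral.integral_add_adjacent_intervals ?_ ?_).symm
    · refine hii_Qlow.mono_set ?_
      rw [uIcc_of_le hbn, uIcc_of_le hbt]
      exact Icc_subset_Icc le_rfl hnt
    · refine hii_Qlow.mono_set ?_
      rw [uIcc_of_le hnt, uIcc_of_le hbt]
      exact Icc_subset_Icc hbn le_rfl
  ---- Step 6a : Cauchy part of E1
  have hE1a : (∫ σ in (max (c - t) 0)..(min c s),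
        lam (σ + max (c - σ) 0) * F1 (σ, max (c - σ) 0))
      = ∫ σ in (max (c - t) 0)..(min c s), lam c * F1 (σ, c - σ) := by
    apply intervalIntegral.integral_congr
    intro σ hσ
    rw [uIcc_of_le ham] at hσ
    have h1 : (0 : ℝ) ≤ c - σ := by
      have := le_trans hσ.2 (min_le_left c s); linarith
    show lam (σ + max (c - σ) 0) * F1 (σ, max (c - σ) 0) = lam c * F1 (σ, c - σ)
    rw [max_eq_left h1, show σ + (c - σ) = c by ring]
  ---- Step 6b : characteristic part of E1
  have hE1b : (∫ σ in (min c s)..s,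
        lam (σ + max (c - σ) 0) * F1 (σ, max (c - σ) 0))
      = ∫ σ in (min c s)..s, lam (σ + max (c - s) 0) * F1 (σ, max (c - s) 0) := by
    apply intervalIntegral.integral_congr
    intro σ hσ
    rw [uIcc_of_le hms] at hσ
    show lam (σ + max (c - σ) 0) * F1 (σ, max (c - σ) 0)
        = lam (σ + max (c - s) 0) * F1 (σ, max (c - s) 0)
    have : max (c - σ) 0 = max (c - s) 0 := by
      rcases le_total c s with h | h
      · rw [min_eq_left h] at hσ
        rw [max_eq_right (by linarith [hσ.1]), max_eq_right (by linarith)]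
      · rw [min_eq_right h] at hσ
        have hσs : σ = s := le_antisymm hσ.2 hσ.1
        rw [hσs]
    rw [this]
  ---- Step 6c : Cauchy part of E2, with substitution
  have hE2a : (∫ τ in (max (c - s) 0)..(min c t),
        lam (max (c - τ) 0 + τ) * F2 (max (c - τ) 0, τ))
      = ∫ σ in (max (c - t) 0)..(min c s), lam c * F2 (σ, c - σ) := by
    have hstep : (∫ τ in (max (c - s) 0)..(min c t),
          lam (max (c - τ) 0 + τ) * F2 (max (c - τ) 0, τ))
        = ∫ τ in (max (c - s) 0)..(min c t),
            (fun u => lam c * F2 (u, c - u)) (c - τ) := by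
      apply intervalIntegral.integral_congr
      intro τ hτ
      rw [uIcc_of_le hbn] at hτ
      have h1 : (0 : ℝ) ≤ c - τ := by
        have := le_trans hτ.2 (min_le_left c t); linarith
      show lam (max (c - τ) 0 + τ) * F2 (max (c - τ) 0, τ)
          = lam c * F2 (c - τ, c - (c - τ))
      rw [max_eq_left h1, show c - τ + τ = c by ring, show c - (c - τ) = τ by ring]
    rw [hstep, intervalIntegral.integral_comp_sub_left (fun u => lam c * F2 (u, c - u)) c,
      hcn, hcb]
  ---- Step 6d : characteristic part of E2
  have hE2b : (∫ τ in (min c t)..t,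
        lam (max (c - τ) 0 + τ) * F2 (max (c - τ) 0, τ))
      = ∫ τ in (min c t)..t, lam (max (c - t) 0 + τ) * F2 (max (c - t) 0, τ) := by
    apply intervalIntegral.integral_congr
    intro τ hτ
    rw [uIcc_of_le hnt] at hτ
    show lam (max (c - τ) 0 + τ) * F2 (max (c - τ) 0, τ)
        = lam (max (c - t) 0 + τ) * F2 (max (c - t) 0, τ)
    have : max (c - τ) 0 = max (c - t) 0 := by
      rcases le_total c t with h | h
      · rw [min_eq_left h] at hτ
        rw [max_eq_right (by linarith [hτ.1]), max_eq_right (by linarith)]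
      · rw [min_eq_right h] at hτ
        have hτt : τ = t := le_antisymm hτ.2 hτ.1
        rw [hτt]
    rw [this]
  ---- Step 7 : combine the two Cauchy integrals and convert to pd form
  have hii_D1 : IntervalIntegrable (fun σ => lam c * F1 (σ, c - σ)) volume
      (max (c - t) 0) (min c s) := ii_of_contOn cgD1 hγDiag memDiag
  have hii_D2 : IntervalIntegrable (fun σ => lam c * F2 (σ, c - σ)) volume
      (max (c - t) 0) (min c s) := ii_of_contOn cgD2 hγDiag memDiag
  have hdiagsum : (∫ σ in (max (c - t) 0)..(min c s), lam c * F1 (σ, c - σ))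
        + (∫ σ in (max (c - t) 0)..(min c s), lam c * F2 (σ, c - σ))
      = ∫ σ in (max (c - t) 0)..(min c s),
          lam c * (pd1 x σ (c - σ) + pd2 x σ (c - σ)) := by
    rw [← intervalIntegral.integral_add hii_D1 hii_D2]
    apply intervalIntegral.integral_congr
    intro σ hσ
    have hmem := memDiag σ hσ
    show lam c * F1 (σ, c - σ) + lam c * F2 (σ, c - σ)
        = lam c * (pd1 x σ (c - σ) + pd2 x σ (c - σ))
    have e1 : pd1 x σ (c - σ) = F1 (σ, c - σ) := hpd1V (σ, c - σ) hmem
    have e2 : pd2 x σ (c - σ) = F2 (σ, c - σ) := hpd2V (σ, c - σ) hmem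
    rw [e1, e2]
    ring
  ---- Step 8 : convert the two characteristic integrals to pd form
  have hT6 : (∫ σ in (min c s)..s, lam (σ + max (c - s) 0) * F1 (σ, max (c - s) 0))
      = ∫ σ in (min c s)..s, lam (σ + max (c - s) 0) * pd1 x σ (max (c - s) 0) := by
    apply intervalIntegral.integral_congr
    intro σ hσ
    have hmem := memB σ hσ
    show lam (σ + max (c - s) 0) * F1 (σ, max (c - s) 0)
        = lam (σ + max (c - s) 0) * pd1 x σ (max (c - s) 0)
    have e1 : pd1 x σ (max (c - s) 0) = F1 (σ, max (c - s) 0) := hpd1V (σ, max (c - s) 0) hmem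
    rw [e1]
  have hT7 : (∫ τ in (min c t)..t, lam (max (c - t) 0 + τ) * F2 (max (c - t) 0, τ))
      = ∫ τ in (min c t)..t, lam (max (c - t) 0 + τ) * pd2 x (max (c - t) 0) τ := by
    apply intervalIntegral.integral_congr
    intro τ hτ
    have hmem := memA τ hτ
    show lam (max (c - t) 0 + τ) * F2 (max (c - t) 0, τ)
        = lam (max (c - t) 0 + τ) * pd2 x (max (c - t) 0) τ
    have e2 : pd2 x (max (c - t) 0) τ = F2 (max (c - t) 0, τ) := hpd2V (max (c - t) 0, τ) hmem
    rw [e2]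
  ---- final assembly
  have heqB1 : lam (max (c - t) 0 + t) * x (max (c - t) 0) t
      = lam (max c t) * x (max (c - t) 0) t := by rw [hat]
  have heqB2 : lam (s + max (c - s) 0) * x s (max (c - s) 0)
      = lam (max s c) * x s (max (c - s) 0) := by rw [hsb]
  linarith [key1, key2, hbal, hE1split, hE2split, hE1a, hE1b, hE2a, hE2b,
    hdiagsum, hT6, hT7, heqB1, heqB2]
end

section
/- Let U ⊆ ℝ² be open, let λ : ℝ → ℝ be continuously differentiable, let g : U → ℝ, and let x : ℝ² → ℝ be twice continuously differentiable on U satisfying 2λ(s+t)·x_st + λ'(s+t)·(x_s + x_t) = g(s,t) on U. Then at every point of U the conservation law ∂_t(λ(s+t)·x_s(s,t)²) + ∂_s(λ(s+t)·x_t(s,t)²) + 2λ'(s+t)·x_s·x_t = g·(x_s + x_t) holds. -/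
/-- The local conservation law: if `x` is `C²` on an open set `U` and
satisfies `2λ(s+t)·x_st + λ'(s+t)·(x_s + x_t) = g(s,t)` on `U`, then
`∂_t(λ(s+t)·x_s²) + ∂_s(λ(s+t)·x_t²) + 2λ'(s+t)·x_s·x_t = g·(x_s + x_t)` on `U`. -/
theorem energy_conservation_law
    (U : Set (ℝ × ℝ)) (hU : IsOpen U) (lam : ℝ → ℝ) (hlam : ContDiff ℝ 1 lam)
    (g : ℝ → ℝ → ℝ) (x : ℝ → ℝ → ℝ)
    (hx : ContDiffOn ℝ 2 (fun p : ℝ × ℝ => x p.1 p.2) U)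
    (hpde : ∀ p ∈ U,
      2 * lam (p.1 + p.2) * pd2 (pd1 x) p.1 p.2
        + deriv lam (p.1 + p.2) * (pd1 x p.1 p.2 + pd2 x p.1 p.2) = g p.1 p.2) :
    ∀ p ∈ U,
      deriv (fun t' => lam (p.1 + t') * (pd1 x p.1 t') ^ 2) p.2
        + deriv (fun s' => lam (s' + p.2) * (pd2 x s' p.2) ^ 2) p.1
        + 2 * deriv lam (p.1 + p.2) * pd1 x p.1 p.2 * pd2 x p.1 p.2
      = g p.1 p.2 * (pd1 x p.1 p.2 + pd2 x p.1 p.2) := by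
  -- Setup
  set F : ℝ × ℝ → ℝ := fun p => x p.1 p.2 with hF
  set F' : ℝ × ℝ → (ℝ × ℝ →L[ℝ] ℝ) := fderiv ℝ F with hF'def
  have hF'cd : ContDiffOn ℝ 1 F' U := hx.fderiv_of_isOpen hU (by norm_num)
  have hFdiff : ∀ q ∈ U, HasFDerivAt F (F' q) q := fun q hq =>
    ((hx.differentiableOn (by norm_num)).differentiableAt (hU.mem_nhds hq)).hasFDerivAt
  have hF'diff : ∀ q ∈ U, DifferentiableAt ℝ F' q := fun q hq =>
    (hF'cd.differentiableOn (by norm_num)).differentiableAt (hU.mem_nhds hq)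
  -- directional derivative maps
  set e1 : ℝ × ℝ := ((1:ℝ), (0:ℝ)) with he1
  set e2 : ℝ × ℝ := ((0:ℝ), (1:ℝ)) with he2
  set D1 : ℝ × ℝ → ℝ := fun q => F' q e1 with hD1def
  set D2 : ℝ × ℝ → ℝ := fun q => F' q e2 with hD2def
  -- slice curves
  have hline1 : ∀ (t : ℝ) (s : ℝ), HasDerivAt (fun s' : ℝ => ((s', t) : ℝ × ℝ)) e1 s := by
    intro t s
    exact (hasDerivAt_id s).prodMk (hasDerivAt_const s t)
  have hline2 : ∀ (s : ℝ) (t : ℝ), HasDerivAt (fun t' : ℝ => ((s, t') : ℝ × ℝ)) e2 t := by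
    intro s t
    exact (hasDerivAt_const t s).prodMk (hasDerivAt_id t)
  -- pd1 x = D1 on U, pd2 x = D2 on U
  have hpd1 : ∀ q ∈ U, pd1 x q.1 q.2 = D1 q := by
    intro q hq
    have h := (hFdiff q hq).comp_hasDerivAt q.1 (hline1 q.2 q.1)
    simpa [pd1, Function.comp_def] using h.deriv
  have hpd2 : ∀ q ∈ U, pd2 x q.1 q.2 = D2 q := by
    intro q hq
    have h := (hFdiff q hq).comp_hasDerivAt q.2 (hline2 q.1 q.2)
    simpa [pd2, Function.comp_def] using h.deriv
  intro p hp
  -- eventual membership along slices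
  have hmem2 : ∀ᶠ t' in nhds p.2, ((p.1, t') : ℝ × ℝ) ∈ U := by
    have hc : Continuous (fun t' : ℝ => ((p.1, t') : ℝ × ℝ)) :=
      continuous_const.prodMk continuous_id
    exact hc.continuousAt.preimage_mem_nhds (by simpa using hU.mem_nhds hp)
  have hmem1 : ∀ᶠ s' in nhds p.1, ((s', p.2) : ℝ × ℝ) ∈ U := by
    have hc : Continuous (fun s' : ℝ => ((s', p.2) : ℝ × ℝ)) :=
      continuous_id.prodMk continuous_const
    exact hc.continuousAt.preimage_mem_nhds (by simpa using hU.mem_nhds hp)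
  -- derivatives of D1, D2 along slices
  have hD1diff : DifferentiableAt ℝ D1 p :=
    ((ContinuousLinearMap.apply ℝ ℝ e1).differentiable.differentiableAt).comp p (hF'diff p hp)
  have hD2diff : DifferentiableAt ℝ D2 p :=
    ((ContinuousLinearMap.apply ℝ ℝ e2).differentiable.differentiableAt).comp p (hF'diff p hp)
  -- second derivatives
  set c12 : ℝ := fderiv ℝ F' p e2 e1 with hc12  -- ∂_t of D1
  set c21 : ℝ := fderiv ℝ F' p e1 e2 with hc21  -- ∂_s of D2
  have hsymm : c12 = c21 := by
    have hev : ∀ᶠ q in nhds p, HasFDerivAt F (F' q) q := by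
      filter_upwards [hU.mem_nhds hp] with q hq using hFdiff q hq
    exact second_derivative_symmetric_of_eventually hev (hF'diff p hp).hasFDerivAt e2 e1
  -- HasDerivAt for D1 along t-slice, D2 along s-slice
  have hD1f : HasFDerivAt D1
      ((ContinuousLinearMap.apply ℝ ℝ e1).comp (fderiv ℝ F' p)) p :=
    (ContinuousLinearMap.apply ℝ ℝ e1).hasFDerivAt.comp p (hF'diff p hp).hasFDerivAt
  have hD2f : HasFDerivAt D2
      ((ContinuousLinearMap.apply ℝ ℝ e2).comp (fderiv ℝ F' p)) p :=
    (ContinuousLinearMap.apply ℝ ℝ e2).hasFDerivAt.comp p (hF'diff p hp).hasFDerivAt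
  have hD1t : HasDerivAt (fun t' => D1 (p.1, t')) c12 p.2 := by
    have h := hD1f.comp_hasDerivAt p.2 (hline2 p.1 p.2)
    simpa [hc12, Function.comp_def] using h
  have hD2s : HasDerivAt (fun s' => D2 (s', p.2)) c21 p.1 := by
    have h := hD2f.comp_hasDerivAt p.1 (hline1 p.2 p.1)
    simpa [hc21, Function.comp_def] using h
  -- identify pd2 (pd1 x) with c12
  have hmix : pd2 (pd1 x) p.1 p.2 = c12 := by
    have heq : (fun t' => pd1 x p.1 t') =ᶠ[nhds p.2] (fun t' => D1 (p.1, t')) := by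
      filter_upwards [hmem2] with t' ht' using hpd1 (p.1, t') ht'
    calc pd2 (pd1 x) p.1 p.2 = deriv (fun t' => pd1 x p.1 t') p.2 := rfl
      _ = deriv (fun t' => D1 (p.1, t')) p.2 := heq.deriv_eq
      _ = c12 := hD1t.deriv
  -- lam derivatives along slices
  have hlamd : Differentiable ℝ lam := hlam.differentiable (by norm_num)
  have hlamt : HasDerivAt (fun t' : ℝ => lam (p.1 + t')) (deriv lam (p.1 + p.2)) p.2 := by
    have h := ((hlamd (p.1 + p.2)).hasDerivAt).comp p.2
      ((hasDerivAt_const p.2 p.1).add (hasDerivAt_id p.2))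
    simpa [Function.comp_def] using h
  have hlams : HasDerivAt (fun s' : ℝ => lam (s' + p.2)) (deriv lam (p.1 + p.2)) p.1 := by
    have h := ((hlamd (p.1 + p.2)).hasDerivAt).comp p.1
      ((hasDerivAt_id p.1).add (hasDerivAt_const p.1 p.2))
    simpa [Function.comp_def] using h
  -- first big deriv
  have hder1 : deriv (fun t' => lam (p.1 + t') * (pd1 x p.1 t') ^ 2) p.2
      = deriv lam (p.1 + p.2) * (D1 p) ^ 2 + lam (p.1 + p.2) * (2 * D1 p * c12) := by
    have heq : (fun t' => lam (p.1 + t') * (pd1 x p.1 t') ^ 2)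
        =ᶠ[nhds p.2] (fun t' => lam (p.1 + t') * (D1 (p.1, t')) ^ 2) := by
      filter_upwards [hmem2] with t' ht'
      rw [hpd1 (p.1, t') ht']
    rw [heq.deriv_eq]
    have h : HasDerivAt (fun t' => lam (p.1 + t') * (D1 (p.1, t')) ^ 2)
        (deriv lam (p.1 + p.2) * (D1 (p.1, p.2)) ^ 2
          + lam (p.1 + p.2) * (2 * D1 (p.1, p.2) ^ 1 * c12)) p.2 :=
      hlamt.mul (hD1t.pow 2)
    simpa using h.deriv
  have hder2 : deriv (fun s' => lam (s' + p.2) * (pd2 x s' p.2) ^ 2) p.1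
      = deriv lam (p.1 + p.2) * (D2 p) ^ 2 + lam (p.1 + p.2) * (2 * D2 p * c21) := by
    have heq : (fun s' => lam (s' + p.2) * (pd2 x s' p.2) ^ 2)
        =ᶠ[nhds p.1] (fun s' => lam (s' + p.2) * (D2 (s', p.2)) ^ 2) := by
      filter_upwards [hmem1] with s' hs'
      rw [hpd2 (s', p.2) hs']
    rw [heq.deriv_eq]
    have h : HasDerivAt (fun s' => lam (s' + p.2) * (D2 (s', p.2)) ^ 2)
        (deriv lam (p.1 + p.2) * (D2 (p.1, p.2)) ^ 2
          + lam (p.1 + p.2) * (2 * D2 (p.1, p.2) ^ 1 * c21)) p.1 :=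
      hlams.mul (hD2s.pow 2)
    simpa using h.deriv
  -- conclude
  have hpde' := hpde p hp
  rw [hpd1 p hp, hpd2 p hp, hmix] at hpde'
  rw [hder1, hder2, hpd1 p hp, hpd2 p hp, ← hsymm]
  linear_combination (D1 p + D2 p) * hpde'
end

section
/- Let c > 0, let λ : (0,∞) → ℝ be continuously differentiable with λ(u) > 0 for u > 0, let g be continuous, and let x be a twice continuously differentiable solution of 2λ(s+t)·x_st + λ'(s+t)·(x_s + x_t) = g(s,t) on an open neighborhood of Ω̄_c = {(s,t) : s ≥ 0, t ≥ 0, s+t ≥ c}, satisfying the homogeneous Goursat conditions x(s,0) = 0 for all s ≥ c and x(0,t) = 0 for all t ≥ c. Define the energy E(u) = ∫₀^u λ(u)·(x_s(s, u−s)² + x_t(s, u−s)²) ds for u ≥ c. Then for every u > c, E(u) = E(c) + ∫_c^u ∫₀^v ( g(s, v−s)·(x_s + x_t)(s, v−s) − 2λ'(v)·x_s(s, v−s)·x_t(s, v−s) ) ds dv. -/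
open Set MeasureTheory intervalIntegral

lemma hasDerivAt_slice1 {f : ℝ × ℝ → ℝ} {p : ℝ × ℝ} (h : DifferentiableAt ℝ f p) :
    HasDerivAt (fun s' => f (s', p.2)) (fderiv ℝ f p (1, 0)) p.1 := by
  have h1 : HasDerivAt (fun s' : ℝ => ((s', p.2) : ℝ × ℝ)) ((1 : ℝ), (0 : ℝ)) p.1 :=
    (hasDerivAt_id p.1).prodMk (hasDerivAt_const p.1 p.2)
  have h2 : HasFDerivAt f (fderiv ℝ f p) ((p.1 : ℝ), p.2) := by
    rw [Prod.mk.eta]; exact h.hasFDerivAt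
  exact h2.comp_hasDerivAt p.1 h1

lemma hasDerivAt_slice2 {f : ℝ × ℝ → ℝ} {p : ℝ × ℝ} (h : DifferentiableAt ℝ f p) :
    HasDerivAt (fun t' => f (p.1, t')) (fderiv ℝ f p (0, 1)) p.2 := by
  have h1 : HasDerivAt (fun t' : ℝ => ((p.1, t') : ℝ × ℝ)) ((0 : ℝ), (1 : ℝ)) p.2 :=
    (hasDerivAt_const p.2 p.1).prodMk (hasDerivAt_id p.2)
  have h2 : HasFDerivAt f (fderiv ℝ f p) ((p.1 : ℝ), p.2) := by
    rw [Prod.mk.eta]; exact h.hasFDerivAt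
  exact h2.comp_hasDerivAt p.2 h1

lemma hasDerivAt_anti {f : ℝ × ℝ → ℝ} {v s : ℝ} (h : DifferentiableAt ℝ f (s, v - s)) :
    HasDerivAt (fun s' => f (s', v - s')) (fderiv ℝ f (s, v - s) (1, -1)) s := by
  have h1 : HasDerivAt (fun s' : ℝ => ((s', v - s') : ℝ × ℝ)) ((1 : ℝ), (-1 : ℝ)) s :=
    (hasDerivAt_id s).prodMk ((hasDerivAt_id s).const_sub v)
  exact h.hasFDerivAt.comp_hasDerivAt s h1

lemma hasDerivAt_diag {f : ℝ × ℝ → ℝ} {s u : ℝ} (h : DifferentiableAt ℝ f (s, u - s)) :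
    HasDerivAt (fun u' => f (s, u' - s)) (fderiv ℝ f (s, u - s) (0, 1)) u := by
  have h1 : HasDerivAt (fun u' : ℝ => ((s, u' - s) : ℝ × ℝ)) ((0 : ℝ), (1 : ℝ)) u :=
    (hasDerivAt_const u s).prodMk ((hasDerivAt_id u).sub_const s)
  exact h.hasFDerivAt.comp_hasDerivAt u h1

/-- The energy identity: for a `C²` solution of
`2λ(s+t)·x_st + λ'(s+t)·(x_s + x_t) = g` on a neighborhood of
`Ω̄_c = {s,t ≥ 0, s+t ≥ c}` with homogeneous Goursat data, the energy
`E(u) = ∫₀^u λ(u)·(x_s(s,u−s)² + x_t(s,u−s)²) ds` satisfies, for `u > c`,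
`E(u) = E(c) + ∫_c^u ∫₀^v (g·(x_s+x_t) − 2λ'(v)·x_s·x_t)(s, v−s) ds dv`. -/
theorem energy_identity
    (c : ℝ) (hc : 0 < c) (lam : ℝ → ℝ) (hlam : ContDiff ℝ 1 lam)
    (hpos : ∀ u : ℝ, 0 < u → 0 < lam u)
    (g : ℝ → ℝ → ℝ) (x : ℝ → ℝ → ℝ)
    (V : Set (ℝ × ℝ)) (hV : IsOpen V)
    (hΩV : {p : ℝ × ℝ | 0 ≤ p.1 ∧ 0 ≤ p.2 ∧ c ≤ p.1 + p.2} ⊆ V)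
    (hg : ContinuousOn (fun p : ℝ × ℝ => g p.1 p.2) V)
    (hx : ContDiffOn ℝ 2 (fun p : ℝ × ℝ => x p.1 p.2) V)
    (hpde : ∀ p ∈ V,
      2 * lam (p.1 + p.2) * pd2 (pd1 x) p.1 p.2
        + deriv lam (p.1 + p.2) * (pd1 x p.1 p.2 + pd2 x p.1 p.2) = g p.1 p.2)
    (hG₁ : ∀ s : ℝ, c ≤ s → x s 0 = 0)
    (hG₂ : ∀ t : ℝ, c ≤ t → x 0 t = 0)
    (E : ℝ → ℝ)
    (hE : ∀ u : ℝ, c ≤ u →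
      E u = ∫ s in (0:ℝ)..u, lam u * ((pd1 x s (u - s)) ^ 2 + (pd2 x s (u - s)) ^ 2)) :
    ∀ u : ℝ, c < u →
      E u = E c + ∫ v in c..u, ∫ s in (0:ℝ)..v,
        (g s (v - s) * (pd1 x s (v - s) + pd2 x s (v - s))
          - 2 * deriv lam v * pd1 x s (v - s) * pd2 x s (v - s)) := by
  intro u hu
  have hcu : c ≤ u := hu.le
  set f : ℝ × ℝ → ℝ := fun p : ℝ × ℝ => x p.1 p.2 with hfdef
  set f₁ : ℝ × ℝ → ℝ := fun p => fderiv ℝ f p (1, 0) with hf1def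
  set f₂ : ℝ × ℝ → ℝ := fun p => fderiv ℝ f p (0, 1) with hf2def
  -- membership of the trapezoid region in V
  have hmem : ∀ s t : ℝ, 0 ≤ s → 0 ≤ t → c ≤ s + t → (s, t) ∈ V := by
    intro s t h1 h2 h3; exact hΩV ⟨h1, h2, h3⟩
  -- smoothness of the derivative
  have hfd : ContDiffOn ℝ 1 (fderiv ℝ f) V :=
    hx.fderiv_of_isOpen hV (by norm_num)
  have hdiff : ∀ p ∈ V, DifferentiableAt ℝ f p := by
    intro p hp
    exact ((hx.contDiffAt (hV.mem_nhds hp)).differentiableAt (by norm_num))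
  have hf₁ : ContDiffOn ℝ 1 f₁ V := hfd.clm_apply contDiffOn_const
  have hf₂ : ContDiffOn ℝ 1 f₂ V := hfd.clm_apply contDiffOn_const
  have hf₁d : ∀ p ∈ V, DifferentiableAt ℝ f₁ p := fun p hp =>
    (hf₁.contDiffAt (hV.mem_nhds hp)).differentiableAt one_ne_zero
  have hf₂d : ∀ p ∈ V, DifferentiableAt ℝ f₂ p := fun p hp =>
    (hf₂.contDiffAt (hV.mem_nhds hp)).differentiableAt one_ne_zero
  have hf₁c : ContinuousOn f₁ V := hf₁.continuousOn
  have hf₂c : ContinuousOn f₂ V := hf₂.continuousOn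
  have hg₁c : ContinuousOn (fun p => fderiv ℝ f₁ p (0,1)) V :=
    ((hf₁.fderiv_of_isOpen (m := 0) hV (by norm_num)).clm_apply contDiffOn_const).continuousOn
  have hg₂c : ContinuousOn (fun p => fderiv ℝ f₂ p (0,1)) V :=
    ((hf₂.fderiv_of_isOpen (m := 0) hV (by norm_num)).clm_apply contDiffOn_const).continuousOn
  have hg₂c' : ContinuousOn (fun p => fderiv ℝ f₂ p (1,-1)) V :=
    ((hf₂.fderiv_of_isOpen (m := 0) hV (by norm_num)).clm_apply contDiffOn_const).continuousOn
  -- pd identifications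
  have hpd1 : ∀ p ∈ V, pd1 x p.1 p.2 = f₁ p := by
    intro p hp
    exact (hasDerivAt_slice1 (hdiff p hp)).deriv
  have hpd2 : ∀ p ∈ V, pd2 x p.1 p.2 = f₂ p := by
    intro p hp
    exact (hasDerivAt_slice2 (hdiff p hp)).deriv
  have hpd12 : ∀ p ∈ V, pd2 (pd1 x) p.1 p.2 = fderiv ℝ f₁ p (0, 1) := by
    intro p hp
    have hnb : ∀ᶠ t' in nhds p.2, ((p.1, t') : ℝ × ℝ) ∈ V := by
      have hct : ContinuousAt (fun t' : ℝ => ((p.1, t') : ℝ × ℝ)) p.2 :=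
        (continuous_const.prodMk continuous_id).continuousAt
      have hpV : ((p.1, p.2) : ℝ × ℝ) ∈ V := by rwa [Prod.mk.eta]
      exact hct.preimage_mem_nhds (hV.mem_nhds hpV)
    have heq : (fun t' => pd1 x p.1 t') =ᶠ[nhds p.2] fun t' => f₁ (p.1, t') := by
      filter_upwards [hnb] with t' ht'
      exact hpd1 (p.1, t') ht'
    show deriv (fun t' => pd1 x p.1 t') p.2 = _
    rw [heq.deriv_eq]
    exact (hasDerivAt_slice2 (hf₁d p hp)).deriv
  -- symmetry of second derivatives
  have hsymm : ∀ p ∈ V, fderiv ℝ f₂ p (1, 0) = fderiv ℝ f₁ p (0, 1) := by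
    intro p hp
    have hdf : DifferentiableAt ℝ (fderiv ℝ f) p :=
      (hfd.contDiffAt (hV.mem_nhds hp)).differentiableAt one_ne_zero
    have hsym : IsSymmSndFDerivAt ℝ f p :=
      (hx.contDiffAt (hV.mem_nhds hp)).isSymmSndFDerivAt (by simp)
    have e2 : fderiv ℝ f₂ p = (fderiv ℝ (fderiv ℝ f) p).flip ((0:ℝ), (1:ℝ)) := by
      have h := fderiv_clm_apply (𝕜 := ℝ) (c := fderiv ℝ f)
        (u := fun _ => ((0:ℝ), (1:ℝ))) hdf (differentiableAt_const _)
      simpa using h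
    have e1 : fderiv ℝ f₁ p = (fderiv ℝ (fderiv ℝ f) p).flip ((1:ℝ), (0:ℝ)) := by
      have h := fderiv_clm_apply (𝕜 := ℝ) (c := fderiv ℝ f)
        (u := fun _ => ((1:ℝ), (0:ℝ))) hdf (differentiableAt_const _)
      simpa using h
    rw [e1, e2]
    simp only [ContinuousLinearMap.flip_apply]
    exact hsym _ _
  -- the divergence-form integrand
  set Dp : ℝ × ℝ → ℝ := fun q => deriv lam (q.1 + q.2) * (f₁ q ^ 2 + f₂ q ^ 2)
      + lam (q.1 + q.2) * (2 * f₁ q * fderiv ℝ f₁ q (0, 1)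
        + 2 * f₂ q * fderiv ℝ f₂ q (0, 1)) with hDpdef
  have hDpc : ContinuousOn Dp V := by
    apply ContinuousOn.add
    · exact (((hlam.continuous_deriv le_rfl).comp
        (continuous_fst.add continuous_snd)).continuousOn).mul
        ((hf₁c.pow 2).add (hf₂c.pow 2))
    · exact (((hlam.continuous).comp (continuous_fst.add continuous_snd)).continuousOn).mul
        ((((continuousOn_const.mul hf₁c).mul hg₁c)).add
          (((continuousOn_const.mul hf₂c).mul hg₂c)))
  set W : ℝ → ℝ → ℝ := fun s v => lam v * (f₁ (s, v - s) ^ 2 + f₂ (s, v - s) ^ 2) with hWdef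
  -- derivative of W in second variable
  have hW : ∀ s v : ℝ, (s, v - s) ∈ V → HasDerivAt (fun v' => W s v') (Dp (s, v - s)) v := by
    intro s v hv
    have hd1 := hasDerivAt_diag (f := f₁) (hf₁d _ hv)
    have hd2 := hasDerivAt_diag (f := f₂) (hf₂d _ hv)
    have hl : HasDerivAt lam (deriv lam v) v := ((hlam.differentiable one_ne_zero) v).hasDerivAt
    have h := hl.mul ((hd1.pow 2).add (hd2.pow 2))
    have hsv : s + (v - s) = v := by ring
    refine h.congr_deriv ?_
    simp only [hDpdef, hsv, Pi.add_apply, Pi.pow_apply]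
    ring
  -- derivative of the characteristic slice of λ x_t²
  have hA : ∀ v s : ℝ, (s, v - s) ∈ V →
      HasDerivAt (fun s' => lam v * f₂ (s', v - s') ^ 2)
        (lam v * (2 * f₂ (s, v - s) * fderiv ℝ f₂ (s, v - s) (1, -1))) s := by
    intro v s hv
    have hd := hasDerivAt_anti (f := f₂) (hf₂d _ hv)
    have h := (hd.pow 2).const_mul (lam v)
    refine h.congr_deriv ?_
    ring
  -- pointwise key identity
  have hkey : ∀ v s : ℝ, (s, v - s) ∈ V →
      g s (v - s) * (pd1 x s (v - s) + pd2 x s (v - s))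
        - 2 * deriv lam v * pd1 x s (v - s) * pd2 x s (v - s)
      = lam v * (2 * f₂ (s, v - s) * fderiv ℝ f₂ (s, v - s) (1, -1)) + Dp (s, v - s) := by
    intro v s hv
    have hsv : s + (v - s) = v := by ring
    have hp : 2 * lam v * pd2 (pd1 x) s (v - s)
        + deriv lam v * (pd1 x s (v - s) + pd2 x s (v - s)) = g s (v - s) := by
      have h := hpde (s, v - s) hv
      simpa [hsv] using h
    have h1 : pd1 x s (v - s) = f₁ (s, v - s) := hpd1 (s, v - s) hv
    have h2 : pd2 x s (v - s) = f₂ (s, v - s) := hpd2 (s, v - s) hv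
    have h12 : pd2 (pd1 x) s (v - s) = fderiv ℝ f₁ (s, v - s) (0, 1) := hpd12 (s, v - s) hv
    rw [h1, h2, h12] at hp
    have hflip : fderiv ℝ f₂ (s, v - s) ((1:ℝ), (-1:ℝ))
        = fderiv ℝ f₂ (s, v - s) ((1:ℝ), (0:ℝ)) - fderiv ℝ f₂ (s, v - s) ((0:ℝ), (1:ℝ)) := by
      have hvec : ((1:ℝ), (-1:ℝ)) = (((1:ℝ), (0:ℝ)) : ℝ × ℝ) - ((0:ℝ), (1:ℝ)) := by
        simp [Prod.ext_iff]
      rw [hvec, map_sub]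
    have hsy := hsymm (s, v - s) hv
    rw [h1, h2, hflip, hsy]
    simp only [hDpdef, hsv]
    linear_combination (-(f₁ (s, v - s)) - f₂ (s, v - s)) * hp
  -- Goursat boundary derivative vanishing
  have hb1 : ∀ v : ℝ, c ≤ v → f₁ (v, 0) = 0 := by
    intro v hv
    have hvV : ((v : ℝ), (0 : ℝ)) ∈ V := hmem v 0 (by linarith) le_rfl (by linarith)
    have hder : HasDerivAt (fun s' => f (s', (0:ℝ))) (f₁ (v, 0)) v :=
      hasDerivAt_slice1 (hdiff _ hvV)
    have hzero : EqOn (fun s' : ℝ => f (s', (0:ℝ))) (fun _ => (0:ℝ)) (Ici c) := by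
      intro s hs; exact hG₁ s hs
    have h2 : HasDerivWithinAt (fun _ : ℝ => (0:ℝ)) (f₁ (v, 0)) (Ici c) v :=
      (hder.hasDerivWithinAt (s := Ici c)).congr
        (fun y hy => (hzero hy).symm) (hzero hv).symm
    have h3 : HasDerivWithinAt (fun _ : ℝ => (0:ℝ)) 0 (Ici c) v :=
      (hasDerivWithinAt_const _ _ _)
    have hu1 := h2.derivWithin (uniqueDiffOn_Ici c v hv)
    have hu2 := h3.derivWithin (uniqueDiffOn_Ici c v hv)
    rw [← hu1, hu2]
  have hb2 : ∀ v : ℝ, c ≤ v → f₂ (0, v) = 0 := by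
    intro v hv
    have hvV : ((0 : ℝ), (v : ℝ)) ∈ V := hmem 0 v le_rfl (by linarith) (by linarith)
    have hder : HasDerivAt (fun t' => f ((0:ℝ), t')) (f₂ (0, v)) v :=
      hasDerivAt_slice2 (hdiff _ hvV)
    have hzero : EqOn (fun t' : ℝ => f ((0:ℝ), t')) (fun _ => (0:ℝ)) (Ici c) := by
      intro t ht; exact hG₂ t ht
    have h2 : HasDerivWithinAt (fun _ : ℝ => (0:ℝ)) (f₂ (0, v)) (Ici c) v :=
      (hder.hasDerivWithinAt (s := Ici c)).congr
        (fun y hy => (hzero hy).symm) (hzero hv).symm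
    have h3 : HasDerivWithinAt (fun _ : ℝ => (0:ℝ)) 0 (Ici c) v :=
      (hasDerivWithinAt_const _ _ _)
    have hu1 := h2.derivWithin (uniqueDiffOn_Ici c v hv)
    have hu2 := h3.derivWithin (uniqueDiffOn_Ici c v hv)
    rw [← hu1, hu2]
  -- integrability helpers
  have hslice : ∀ a b vv : ℝ, (∀ s ∈ uIcc a b, ((s, vv - s) : ℝ × ℝ) ∈ V) →
      IntervalIntegrable (fun s => Dp (s, vv - s)) volume a b := by
    intro a b vv hmem'
    exact (hDpc.comp
      ((continuous_id.prodMk (continuous_const.sub continuous_id)).continuousOn) hmem').intervalIntegrable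
  have hslice2 : ∀ a b ss : ℝ, (∀ v ∈ uIcc a b, ((ss, v - ss) : ℝ × ℝ) ∈ V) →
      IntervalIntegrable (fun v => Dp (ss, v - ss)) volume a b := by
    intro a b ss hmem'
    exact (hDpc.comp
      ((continuous_const.prodMk (continuous_id.sub continuous_const)).continuousOn) hmem').intervalIntegrable
  have hWcont : ∀ (S : Set ℝ) (vv : ℝ), (∀ s ∈ S, ((s, vv - s) : ℝ × ℝ) ∈ V) →
      ContinuousOn (fun s => W s vv) S := by
    intro S vv hmem'
    have hφ : ContinuousOn (fun s : ℝ => ((s, vv - s) : ℝ × ℝ)) S :=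
      (continuous_id.prodMk (continuous_const.sub continuous_id)).continuousOn
    exact continuousOn_const.mul
      (((hf₁c.comp hφ hmem').pow 2).add ((hf₂c.comp hφ hmem').pow 2))
  have hWint : ∀ a b vv : ℝ, (∀ s ∈ uIcc a b, ((s, vv - s) : ℝ × ℝ) ∈ V) →
      IntervalIntegrable (fun s => W s vv) volume a b := by
    intro a b vv hmem'
    exact (hWcont _ vv hmem').intervalIntegrable
  -- per-v identity
  have hΦ : ∀ v ∈ Icc c u,
      (∫ s in (0:ℝ)..v, (g s (v - s) * (pd1 x s (v - s) + pd2 x s (v - s))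
          - 2 * deriv lam v * pd1 x s (v - s) * pd2 x s (v - s)))
      = lam v * f₂ (v, 0) ^ 2 + ∫ s in (0:ℝ)..v, Dp (s, v - s) := by
    intro v hv
    have hv0 : (0:ℝ) ≤ v := le_trans hc.le hv.1
    have hmemv : ∀ s ∈ uIcc (0:ℝ) v, ((s, v - s) : ℝ × ℝ) ∈ V := by
      intro s hs
      rw [uIcc_of_le hv0] at hs
      exact hmem s (v - s) hs.1 (by linarith [hs.2]) (by linarith [hv.1])
    have hφ : ContinuousOn (fun s : ℝ => ((s, v - s) : ℝ × ℝ)) (uIcc (0:ℝ) v) :=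
      (continuous_id.prodMk (continuous_const.sub continuous_id)).continuousOn
    have hi1 : IntervalIntegrable
        (fun s => lam v * (2 * f₂ (s, v - s) * fderiv ℝ f₂ (s, v - s) (1, -1)))
        volume 0 v := by
      apply ContinuousOn.intervalIntegrable
      exact continuousOn_const.mul
        ((continuousOn_const.mul (hf₂c.comp hφ hmemv)).mul (hg₂c'.comp hφ hmemv))
    have hi2 : IntervalIntegrable (fun s => Dp (s, v - s)) volume 0 v :=
      hslice 0 v v hmemv
    have hcongr : EqOn
        (fun s => g s (v - s) * (pd1 x s (v - s) + pd2 x s (v - s))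
          - 2 * deriv lam v * pd1 x s (v - s) * pd2 x s (v - s))
        (fun s => lam v * (2 * f₂ (s, v - s) * fderiv ℝ f₂ (s, v - s) (1, -1)) + Dp (s, v - s))
        (uIcc (0:ℝ) v) := fun s hs => hkey v s (hmemv s hs)
    rw [intervalIntegral.integral_congr hcongr, intervalIntegral.integral_add hi1 hi2]
    have h3 : (∫ s in (0:ℝ)..v, lam v * (2 * f₂ (s, v - s) * fderiv ℝ f₂ (s, v - s) (1, -1)))
        = lam v * f₂ (v, v - v) ^ 2 - lam v * f₂ (0, v - 0) ^ 2 := by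
      exact intervalIntegral.integral_eq_sub_of_hasDerivAt
        (f := fun s' => lam v * f₂ (s', v - s') ^ 2)
        (fun s hs => hA v s (hmemv s hs)) hi1
    rw [h3]
    have hz : f₂ (0, v - 0) = 0 := by rw [sub_zero]; exact hb2 v hv.1
    rw [sub_self, hz]
    ring
  -- the Fubini/boundary computation
  have hmain : (∫ v in c..u, (lam v * f₂ (v, 0) ^ 2 + ∫ s in (0:ℝ)..v, Dp (s, v - s)))
      = E u - E c := by
    have hu0 : (0:ℝ) ≤ u := le_trans hc.le hcu
    set μ : Measure ℝ := volume.restrict (Ioc c u) with hμdef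
    set ν : Measure ℝ := volume.restrict (Ioc (0:ℝ) u) with hνdef
    haveI i1 : IsFiniteMeasure μ :=
      ⟨by rw [hμdef, Measure.restrict_apply_univ]; exact measure_Ioc_lt_top⟩
    haveI i2 : IsFiniteMeasure ν :=
      ⟨by rw [hνdef, Measure.restrict_apply_univ]; exact measure_Ioc_lt_top⟩
    set K : ℝ → ℝ → ℝ := fun v s => if s ≤ v then Dp (s, v - s) else 0 with hKdef
    -- measurability
    have hDpm : Measurable Dp := by
      have hm1 : Measurable f₁ := measurable_fderiv_apply_const ℝ f _
      have hm2 : Measurable f₂ := measurable_fderiv_apply_const ℝ f _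
      have hm3 : Measurable (fun p => fderiv ℝ f₁ p ((0:ℝ), (1:ℝ))) :=
        measurable_fderiv_apply_const ℝ f₁ _
      have hm4 : Measurable (fun p => fderiv ℝ f₂ p ((0:ℝ), (1:ℝ))) :=
        measurable_fderiv_apply_const ℝ f₂ _
      have hms : Measurable (fun q : ℝ × ℝ => q.1 + q.2) := measurable_fst.add measurable_snd
      exact (((hlam.continuous_deriv le_rfl).measurable.comp hms).mul
          ((hm1.pow_const 2).add (hm2.pow_const 2))).add
        ((hlam.continuous.measurable.comp hms).mul
          (((measurable_const.mul hm1).mul hm3).add ((measurable_const.mul hm2).mul hm4)))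
    have hKum : Measurable (Function.uncurry K) := by
      have : Function.uncurry K
          = fun q : ℝ × ℝ => if q.2 ≤ q.1 then Dp (q.2, q.1 - q.2) else 0 := rfl
      rw [this]
      exact Measurable.ite (measurableSet_le measurable_snd measurable_fst)
        (hDpm.comp (measurable_snd.prodMk (measurable_fst.sub measurable_snd)))
        measurable_const
    -- bound and integrability on the product
    have hbase : IsCompact ((Icc c u ×ˢ Icc (0:ℝ) u) ∩ {q : ℝ × ℝ | q.2 ≤ q.1}) :=
      (isCompact_Icc.prod isCompact_Icc).inter_right
        (isClosed_le continuous_snd continuous_fst)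
    have hTcomp : IsCompact ((fun q : ℝ × ℝ => ((q.2 : ℝ), q.1 - q.2)) ''
        ((Icc c u ×ˢ Icc (0:ℝ) u) ∩ {q : ℝ × ℝ | q.2 ≤ q.1})) :=
      hbase.image (continuous_snd.prodMk (continuous_fst.sub continuous_snd))
    have hTV : ((fun q : ℝ × ℝ => ((q.2 : ℝ), q.1 - q.2)) ''
        ((Icc c u ×ˢ Icc (0:ℝ) u) ∩ {q : ℝ × ℝ | q.2 ≤ q.1})) ⊆ V := by
      rintro p ⟨q, ⟨⟨hq1, hq2⟩, hle⟩, rfl⟩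
      exact hmem q.2 (q.1 - q.2) hq2.1 (sub_nonneg.mpr hle) (by linarith [hq1.1])
    obtain ⟨M, hM⟩ := hTcomp.exists_bound_of_continuousOn (hDpc.mono hTV)
    have hKint : Integrable (Function.uncurry K) (μ.prod ν) := by
      refine Integrable.mono' (integrable_const (max M 0)) hKum.aestronglyMeasurable ?_
      rw [hμdef, hνdef, Measure.prod_restrict]
      filter_upwards [ae_restrict_mem (measurableSet_Ioc.prod measurableSet_Ioc)] with q hq
      obtain ⟨hq1, hq2⟩ := hq
      by_cases h : q.2 ≤ q.1
      · have hmemT : ((q.2 : ℝ), q.1 - q.2) ∈ (fun q : ℝ × ℝ => ((q.2 : ℝ), q.1 - q.2)) ''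
            ((Icc c u ×ˢ Icc (0:ℝ) u) ∩ {q : ℝ × ℝ | q.2 ≤ q.1}) :=
          ⟨q, ⟨⟨⟨hq1.1.le, hq1.2⟩, ⟨hq2.1.le, hq2.2⟩⟩, h⟩, rfl⟩
        have hMb := hM _ hmemT
        have : Function.uncurry K q = Dp (q.2, q.1 - q.2) := if_pos h
        rw [this]
        exact le_trans hMb (le_max_left _ _)
      · have : Function.uncurry K q = 0 := if_neg h
        rw [this]
        simp [le_max_iff]
    -- inner integral in original order
    have hKv : ∀ v ∈ Ioc c u, (∫ s, K v s ∂ν) = ∫ s in (0:ℝ)..v, Dp (s, v - s) := by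
      intro v hv
      have hvc : c ≤ v := hv.1.le
      have hv0 : (0:ℝ) ≤ v := le_trans hc.le hvc
      have hmemv : ∀ s ∈ uIcc (0:ℝ) v, ((s, v - s) : ℝ × ℝ) ∈ V := by
        intro s hs
        rw [uIcc_of_le hv0] at hs
        exact hmem s (v - s) hs.1 (by linarith [hs.2]) (by linarith)
      have hil : IntervalIntegrable (fun s => K v s) volume 0 v := by
        rw [intervalIntegrable_iff_integrableOn_Ioc_of_le hv0]
        have hb := hslice 0 v v hmemv
        rw [intervalIntegrable_iff_integrableOn_Ioc_of_le hv0] at hb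
        exact hb.congr_fun (fun s hs => (if_pos hs.2).symm) measurableSet_Ioc
      have hir : IntervalIntegrable (fun s => K v s) volume v u := by
        rw [intervalIntegrable_iff_integrableOn_Ioc_of_le hv.2]
        exact integrableOn_zero.congr_fun
          (fun s hs => (if_neg (not_le.mpr hs.1)).symm) measurableSet_Ioc
      have e3 : (∫ s in v..u, K v s) = 0 := by
        rw [intervalIntegral.integral_of_le hv.2,
          setIntegral_congr_fun (g := fun _ => (0:ℝ)) measurableSet_Ioc
            (fun s hs => if_neg (not_le.mpr hs.1))]
        simp
      have e4 : (∫ s in (0:ℝ)..v, K v s) = ∫ s in (0:ℝ)..v, Dp (s, v - s) := by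
        apply intervalIntegral.integral_congr
        intro s hs
        rw [uIcc_of_le hv0] at hs
        exact if_pos hs.2
      have e1 : (∫ s, K v s ∂ν) = ∫ s in (0:ℝ)..u, K v s :=
        (intervalIntegral.integral_of_le hu0).symm
      rw [e1, ← intervalIntegral.integral_add_adjacent_intervals hil hir, e3, e4, add_zero]
    -- integrability of the inner integral
    have hΨint : IntervalIntegrable (fun v => ∫ s in (0:ℝ)..v, Dp (s, v - s)) volume c u := by
      rw [intervalIntegrable_iff_integrableOn_Ioc_of_le hcu]
      have hb : IntegrableOn (fun v => ∫ s, K v s ∂ν) (Ioc c u) volume :=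
        hKint.integral_prod_left
      exact hb.congr_fun (fun v hv => hKv v hv) measurableSet_Ioc
    -- Fubini
    have hswap : (∫ v, (∫ s, K v s ∂ν) ∂μ) = ∫ s, (∫ v, K v s ∂μ) ∂ν :=
      integral_integral_swap hKint
    -- evaluate the swapped inner integrals
    have hJ1 : ∀ s ∈ Icc (0:ℝ) c, (∫ v, K v s ∂μ) = W s u - W s c := by
      intro s hs
      have e1 : (∫ v, K v s ∂μ) = ∫ v in c..u, K v s :=
        (intervalIntegral.integral_of_le hcu).symm
      have hmemv : ∀ v ∈ uIcc c u, ((s, v - s) : ℝ × ℝ) ∈ V := by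
        intro v hv'
        rw [uIcc_of_le hcu] at hv'
        exact hmem s (v - s) hs.1 (by linarith [hv'.1, hs.2]) (by linarith [hv'.1])
      have hEq : EqOn (fun v => K v s) (fun v => Dp (s, v - s)) (uIcc c u) := by
        intro v hv'
        rw [uIcc_of_le hcu] at hv'
        exact if_pos (le_trans hs.2 hv'.1)
      rw [e1, intervalIntegral.integral_congr hEq]
      exact intervalIntegral.integral_eq_sub_of_hasDerivAt (f := fun v => W s v)
        (fun v hv' => hW s v (hmemv v hv')) (hslice2 c u s hmemv)
    have hJ2 : ∀ s ∈ Icc c u, (∫ v, K v s ∂μ) = W s u - W s s := by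
      intro s hs
      have e1 : (∫ v, K v s ∂μ) = ∫ v in c..u, K v s :=
        (intervalIntegral.integral_of_le hcu).symm
      have hne : ∀ᵐ v : ℝ ∂(volume : Measure ℝ), v ≠ s := by
        rw [ae_iff]
        simpa [not_not, Set.setOf_eq_eq_singleton] using measure_singleton (μ := volume) s
      have hmemv : ∀ v ∈ uIcc s u, ((s, v - s) : ℝ × ℝ) ∈ V := by
        intro v hv'
        rw [uIcc_of_le hs.2] at hv'
        exact hmem s (v - s) (le_trans hc.le hs.1) (by linarith [hv'.1]) (by linarith [hv'.1, hs.1])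
      have hil : IntervalIntegrable (fun v => K v s) volume c s := by
        rw [intervalIntegrable_iff_integrableOn_Ioc_of_le hs.1]
        refine (integrableOn_zero).congr ?_
        filter_upwards [ae_restrict_mem measurableSet_Ioc, ae_restrict_of_ae hne] with v hv' hvne
        exact (if_neg (fun hle => hvne (le_antisymm hv'.2 hle))).symm
      have hEq : EqOn (fun v => K v s) (fun v => Dp (s, v - s)) (uIcc s u) := by
        intro v hv'
        rw [uIcc_of_le hs.2] at hv'
        exact if_pos hv'.1
      have hir : IntervalIntegrable (fun v => K v s) volume s u := by
        rw [intervalIntegrable_iff_integrableOn_Ioc_of_le hs.2]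
        have hb := hslice2 s u s hmemv
        rw [intervalIntegrable_iff_integrableOn_Ioc_of_le hs.2] at hb
        exact hb.congr_fun
          (fun v hv' => (hEq (by rw [uIcc_of_le hs.2]; exact ⟨hv'.1.le, hv'.2⟩)).symm)
          measurableSet_Ioc
      have e2 : (∫ v in c..s, K v s) = 0 := by
        rw [intervalIntegral.integral_of_le hs.1]
        rw [MeasureTheory.integral_congr_ae (g := fun _ => (0:ℝ)) ?_]
        · simp
        · filter_upwards [ae_restrict_mem measurableSet_Ioc, ae_restrict_of_ae hne] with v hv' hvne
          exact if_neg (fun hle => hvne (le_antisymm hv'.2 hle))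
      have e3 : (∫ v in s..u, K v s) = W s u - W s s := by
        rw [intervalIntegral.integral_congr hEq]
        exact intervalIntegral.integral_eq_sub_of_hasDerivAt (f := fun v => W s v)
          (fun v hv' => hW s v (hmemv v hv')) (hslice2 s u s hmemv)
      rw [e1, ← intervalIntegral.integral_add_adjacent_intervals hil hir, e2, e3, zero_add]
    -- membership helpers for W integrals
    have m1 : ∀ s ∈ uIcc (0:ℝ) c, ((s, u - s) : ℝ × ℝ) ∈ V := by
      intro s hs; rw [uIcc_of_le hc.le] at hs
      exact hmem s (u - s) hs.1 (by linarith [hs.2]) (by linarith [hs.1])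
    have m2 : ∀ s ∈ uIcc (0:ℝ) c, ((s, c - s) : ℝ × ℝ) ∈ V := by
      intro s hs; rw [uIcc_of_le hc.le] at hs
      exact hmem s (c - s) hs.1 (by linarith [hs.2]) (by linarith)
    have m3 : ∀ s ∈ uIcc c u, ((s, u - s) : ℝ × ℝ) ∈ V := by
      intro s hs; rw [uIcc_of_le hcu] at hs
      exact hmem s (u - s) (by linarith [hs.1]) (by linarith [hs.2]) (by linarith [hs.1])
    have m4 : ∀ s ∈ uIcc c u, ((s, s - s) : ℝ × ℝ) ∈ V := by
      intro s hs; rw [uIcc_of_le hcu] at hs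
      exact hmem s (s - s) (by linarith [hs.1]) (by linarith) (by linarith [hs.1])
    have hdiagc : ContinuousOn (fun s : ℝ => W s s) (uIcc c u) := by
      have hφ : ContinuousOn (fun s : ℝ => ((s, s - s) : ℝ × ℝ)) (uIcc c u) :=
        (continuous_id.prodMk (continuous_id.sub continuous_id)).continuousOn
      exact (hlam.continuous.continuousOn).mul
        (((hf₁c.comp hφ m4).pow 2).add ((hf₂c.comp hφ m4).pow 2))
    have hdiagint : IntervalIntegrable (fun s : ℝ => W s s) volume c u :=
      hdiagc.intervalIntegrable
    -- outer integrability of J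
    have hJint1 : IntervalIntegrable (fun s => ∫ v, K v s ∂μ) volume 0 c := by
      rw [intervalIntegrable_iff_integrableOn_Ioc_of_le hc.le]
      have hb : IntegrableOn (fun s => W s u - W s c) (Ioc 0 c) volume := by
        have h := (hWint 0 c u m1).sub (hWint 0 c c m2)
        rwa [intervalIntegrable_iff_integrableOn_Ioc_of_le hc.le] at h
      exact hb.congr_fun (fun s hs => (hJ1 s ⟨hs.1.le, hs.2⟩).symm) measurableSet_Ioc
    have hJint2 : IntervalIntegrable (fun s => ∫ v, K v s ∂μ) volume c u := by
      rw [intervalIntegrable_iff_integrableOn_Ioc_of_le hcu]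
      have hb : IntegrableOn (fun s => W s u - W s s) (Ioc c u) volume := by
        have h := (hWint c u u m3).sub hdiagint
        rwa [intervalIntegrable_iff_integrableOn_Ioc_of_le hcu] at h
      exact hb.congr_fun (fun s hs => (hJ2 s ⟨hs.1.le, hs.2⟩).symm) measurableSet_Ioc
    have e5 : (∫ s, (∫ v, K v s ∂μ) ∂ν) = ∫ s in (0:ℝ)..u, (∫ v, K v s ∂μ) :=
      (intervalIntegral.integral_of_le hu0).symm
    have e6 : (∫ s in (0:ℝ)..c, (∫ v, K v s ∂μ))
        = (∫ s in (0:ℝ)..c, W s u) - ∫ s in (0:ℝ)..c, W s c := by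
      rw [intervalIntegral.integral_congr (g := fun s => W s u - W s c)
        (fun s hs => hJ1 s (by rwa [uIcc_of_le hc.le] at hs))]
      exact intervalIntegral.integral_sub (hWint 0 c u m1) (hWint 0 c c m2)
    have e7 : (∫ s in c..u, (∫ v, K v s ∂μ))
        = (∫ s in c..u, W s u) - ∫ s in c..u, lam s * f₂ (s, 0) ^ 2 := by
      rw [intervalIntegral.integral_congr (g := fun s => W s u - W s s)
        (fun s hs => hJ2 s (by rwa [uIcc_of_le hcu] at hs))]
      rw [intervalIntegral.integral_sub (hWint c u u m3) hdiagint]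
      congr 1
      apply intervalIntegral.integral_congr
      intro s hs
      rw [uIcc_of_le hcu] at hs
      show W s s = lam s * f₂ (s, 0) ^ 2
      rw [hWdef]
      simp only [sub_self]
      rw [hb1 s hs.1]
      ring
    -- E values
    have hEu' : E u = (∫ s in (0:ℝ)..c, W s u) + ∫ s in c..u, W s u := by
      rw [hE u hcu]
      rw [intervalIntegral.integral_congr (g := fun s => W s u) ?_]
      · exact (intervalIntegral.integral_add_adjacent_intervals
          (hWint 0 c u m1) (hWint c u u m3)).symm
      · intro s hs
        rw [uIcc_of_le hu0] at hs
        have hsV : ((s, u - s) : ℝ × ℝ) ∈ V :=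
          hmem s (u - s) hs.1 (by linarith [hs.2]) (by linarith [hs.1])
        show lam u * (pd1 x s (u - s) ^ 2 + pd2 x s (u - s) ^ 2) = W s u
        rw [hpd1 (s, u - s) hsV, hpd2 (s, u - s) hsV]
    have hEc' : E c = ∫ s in (0:ℝ)..c, W s c := by
      rw [hE c le_rfl]
      apply intervalIntegral.integral_congr
      intro s hs
      rw [uIcc_of_le hc.le] at hs
      have hsV : ((s, c - s) : ℝ × ℝ) ∈ V :=
        hmem s (c - s) hs.1 (by linarith [hs.2]) (by linarith)
      show lam c * (pd1 x s (c - s) ^ 2 + pd2 x s (c - s) ^ 2) = W s c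
      rw [hpd1 (s, c - s) hsV, hpd2 (s, c - s) hsV]
    -- B integrable
    have hBint : IntervalIntegrable (fun v => lam v * f₂ (v, 0) ^ 2) volume c u := by
      apply ContinuousOn.intervalIntegrable
      have hφ : ContinuousOn (fun v : ℝ => ((v, (0:ℝ)) : ℝ × ℝ)) (uIcc c u) :=
        (continuous_id.prodMk continuous_const).continuousOn
      have mφ : ∀ v ∈ uIcc c u, ((v, (0:ℝ)) : ℝ × ℝ) ∈ V := by
        intro v hv'; rw [uIcc_of_le hcu] at hv'
        exact hmem v 0 (by linarith [hv'.1]) le_rfl (by linarith [hv'.1])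
      exact (hlam.continuous.continuousOn).mul ((hf₂c.comp hφ mφ).pow 2)
    -- assemble
    rw [intervalIntegral.integral_add hBint hΨint]
    have h1 : (∫ v in c..u, ∫ s in (0:ℝ)..v, Dp (s, v - s)) = ∫ v, (∫ s, K v s ∂ν) ∂μ := by
      rw [intervalIntegral.integral_of_le hcu]
      exact (setIntegral_congr_fun measurableSet_Ioc (fun v hv => (hKv v hv).symm))
    rw [h1, hswap, e5, ← intervalIntegral.integral_add_adjacent_intervals hJint1 hJint2,
      e6, e7, hEu', hEc']
    ring
  have : (∫ v in c..u, ∫ s in (0:ℝ)..v,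
        (g s (v - s) * (pd1 x s (v - s) + pd2 x s (v - s))
          - 2 * deriv lam v * pd1 x s (v - s) * pd2 x s (v - s)))
      = E u - E c := by
    rw [← hmain]
    apply intervalIntegral.integral_congr
    intro v hv
    rw [uIcc_of_le hcu] at hv
    exact hΦ v hv
  linarith [this]
end

section
/- Let 0 < c < C and let λ₀ : (0,∞) → ℝ be continuously differentiable with λ₀(u) > 0 and λ₀'(u) > 0 for all u ∈ [c, C]. Then there exists a constant M > 0, depending only on λ₀, c, and C, with the following property. Let δ : [c,C] → ℝ be continuously differentiable, let x₀ be a C² solution of 2λ₀(s+t)·(x₀)_st + λ₀'(s+t)·((x₀)_s + (x₀)_t) = 0 on a neighborhood of Ω_{c,C} = {(s,t) : s,t ≥ 0, c ≤ s+t ≤ C}, and let x₁ be a C² solution on a neighborhood of Ω_{c,C} of the linearized equation 2λ₀(s+t)·(x₁)_st + λ₀'(s+t)·((x₁)_s + (x₁)_t) = g(s,t) with forcing g(s,t) = −λ₀(s+t)·δ'(s+t)·((x₀)_s + (x₀)_t)(s,t), satisfying the homogeneous conditions x₁(s,0) = 0 for c ≤ s ≤ C, x₁(0,t) = 0 for c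 ≤ t ≤ C, and (x₁)_s = (x₁)_t = 0 on the line s+t = c (so E₁(c) = 0). Then sup_{u ∈ [c,C]} E₁(u) ≤ M · (sup_{u ∈ [c,C]} E₀(u)) · ∫_c^C λ₀(v)·(δ'(v))² dv, where E_i(u) = ∫₀^u λ₀(u)·((x_i)_s(s,u−s)² + (x_i)_t(s,u−s)²) ds for i = 0, 1. -/
open Set MeasureTheory intervalIntegral Asymptotics

/-- The weighted energy of `x` along the line `s + t = u`, with weight `λ₀(u)`. -/
noncomputable def energy (lam₀ : ℝ → ℝ) (x : ℝ → ℝ → ℝ) (u : ℝ) : ℝ :=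
  ∫ s in (0:ℝ)..u, lam₀ u * ((pd1 x s (u - s)) ^ 2 + (pd2 x s (u - s)) ^ 2)


lemma hasDerivAt_param_integral (H H₂ : ℝ → ℝ → ℝ) (W : Set (ℝ × ℝ)) (hW : IsOpen W)
    (hH : ContinuousOn (fun p : ℝ × ℝ => H p.1 p.2) W)
    (hH₂ : ContinuousOn (fun p : ℝ × ℝ => H₂ p.1 p.2) W)
    (hd : ∀ p ∈ W, HasDerivAt (fun y => H p.1 y) (H₂ p.1 p.2) p.2)
    (u : ℝ) (hu : 0 < u)
    (hseg : ∀ s ∈ Icc (0:ℝ) u, ((s, u) : ℝ × ℝ) ∈ W) :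
    HasDerivAt (fun y => ∫ s in (0:ℝ)..y, H s y)
      (H u u + ∫ s in (0:ℝ)..u, H₂ s u) u := by
  -- find a compact product neighborhood Q of the segment inside W
  have hK : IsCompact ((Icc (0:ℝ) u) ×ˢ ({u} : Set ℝ)) :=
    isCompact_Icc.prod isCompact_singleton
  have hKW : (Icc (0:ℝ) u) ×ˢ ({u} : Set ℝ) ⊆ W := by
    rintro ⟨s, y⟩ ⟨hs, hy⟩
    simp only [mem_singleton_iff] at hy
    subst hy; exact hseg s hs
  obtain ⟨ρ, hρ, hρW⟩ := hK.exists_thickening_subset_open hW hKW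
  set r : ℝ := min (ρ/2) (u/2) with hrdef
  have hr : 0 < r := lt_min (by linarith) (by linarith)
  have hr2 : r ≤ ρ/2 := min_le_left _ _
  set Q : Set (ℝ × ℝ) := (Icc (0:ℝ) (u+r)) ×ˢ (Icc (u-r) (u+r)) with hQdef
  have hQW : Q ⊆ W := by
    rintro ⟨s, y⟩ ⟨hs, hy⟩
    apply hρW
    rw [Metric.mem_thickening_iff]
    refine ⟨(min s u, u), ⟨⟨le_min hs.1 hu.le, min_le_right _ _⟩, rfl⟩, ?_⟩
    rw [Prod.dist_eq]
    simp only [mem_Icc] at hs hy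
    have h1 : dist s (min s u) ≤ r := by
      rw [Real.dist_eq, abs_le]
      rcases le_total s u with h | h
      · simp [min_eq_left h, hr.le]
      · constructor <;> simp [min_eq_right h] <;> linarith
    have h2 : dist y u ≤ r := by rw [Real.dist_eq, abs_le]; constructor <;> linarith
    calc max (dist s (min s u)) (dist y u) ≤ r := max_le h1 h2
      _ < ρ := by linarith
  have hQc : IsCompact Q := isCompact_Icc.prod isCompact_Icc
  -- uniform continuity on Q
  have hUC2 := hQc.uniformContinuousOn_of_continuous (hH₂.mono hQW)
  have hUC0 := hQc.uniformContinuousOn_of_continuous (hH.mono hQW)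
  rw [Metric.uniformContinuousOn_iff] at hUC2 hUC0
  rw [hasDerivAt_iff_isLittleO, isLittleO_iff]
  intro ε hε
  obtain ⟨d1, hd1, hB1⟩ := hUC2 (ε/(2*(u+1))) (by positivity)
  obtain ⟨d2, hd2, hB2⟩ := hUC0 (ε/2) (by positivity)
  have hball : Metric.ball u (min r (min d1 d2)) ∈ nhds u :=
    Metric.ball_mem_nhds u (by positivity)
  filter_upwards [hball] with y hy
  simp only [Metric.mem_ball, Real.dist_eq] at hy
  have hyu : |y - u| < r := lt_of_lt_of_le hy (min_le_left _ _)
  have hyd1 : |y - u| < d1 := lt_of_lt_of_le hy (le_trans (min_le_right _ _) (min_le_left _ _))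
  have hyd2 : |y - u| < d2 := lt_of_lt_of_le hy (le_trans (min_le_right _ _) (min_le_right _ _))
  have hyQ : y ∈ Icc (u-r) (u+r) := by
    rw [mem_Icc]; rw [abs_lt] at hyu; constructor <;> linarith
  have hy0 : 0 < y := by
    rw [abs_lt] at hyu
    have : r ≤ u/2 := min_le_right _ _
    linarith
  -- membership helpers
  have hmemQ : ∀ s t : ℝ, s ∈ Icc (0:ℝ) (u+r) → t ∈ Icc (u-r) (u+r) → ((s,t) : ℝ×ℝ) ∈ Q := by
    intro s t hs ht; exact ⟨hs, ht⟩
  have hsu : ∀ s ∈ Icc (0:ℝ) u, s ∈ Icc (0:ℝ) (u+r) := fun s hs =>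
    ⟨hs.1, le_trans hs.2 (by linarith)⟩
  have huQ : u ∈ Icc (u-r) (u+r) := by constructor <;> linarith
  -- integrability of the various slices
  have hcont_slice : ∀ t ∈ Icc (u-r) (u+r), ContinuousOn (fun s => H s t) (Icc 0 (u+r)) := by
    intro t ht
    have : ContinuousOn (fun s : ℝ => ((s, t) : ℝ×ℝ)) (Icc 0 (u+r)) :=
      (continuous_id.prodMk continuous_const).continuousOn
    exact (hH.mono hQW).comp this (fun s hs => hmemQ s t hs ht)
  have hcont_slice2 : ∀ t ∈ Icc (u-r) (u+r), ContinuousOn (fun s => H₂ s t) (Icc 0 (u+r)) := by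
    intro t ht
    have : ContinuousOn (fun s : ℝ => ((s, t) : ℝ×ℝ)) (Icc 0 (u+r)) :=
      (continuous_id.prodMk continuous_const).continuousOn
    exact (hH₂.mono hQW).comp this (fun s hs => hmemQ s t hs ht)
  have hIcc_sub : Icc (0:ℝ) u ⊆ Icc 0 (u+r) := Icc_subset_Icc le_rfl (by linarith)
  have hint1 : IntervalIntegrable (fun s => H s y) volume 0 u := by
    apply ContinuousOn.intervalIntegrable
    rw [uIcc_of_le hu.le]; exact (hcont_slice y hyQ).mono hIcc_sub
  have hint2 : IntervalIntegrable (fun s => H s u) volume 0 u := by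
    apply ContinuousOn.intervalIntegrable
    rw [uIcc_of_le hu.le]; exact (hcont_slice u huQ).mono hIcc_sub
  have hint3 : IntervalIntegrable (fun s => H₂ s u) volume 0 u := by
    apply ContinuousOn.intervalIntegrable
    rw [uIcc_of_le hu.le]; exact (hcont_slice2 u huQ).mono hIcc_sub
  have hintuy : IntervalIntegrable (fun s => H s y) volume u y := by
    apply ContinuousOn.intervalIntegrable
    apply (hcont_slice y hyQ).mono
    intro s hs
    rcases le_total u y with h | h
    · rw [uIcc_of_le h] at hs
      rw [abs_lt] at hyu
      exact ⟨le_trans hu.le hs.1, le_trans hs.2 (by linarith)⟩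
    · rw [uIcc_of_ge h] at hs
      rw [abs_lt] at hyu
      exact ⟨by linarith [hs.1, hy0], le_trans hs.2 (by linarith)⟩
  -- split integral
  have hsplit : (∫ s in (0:ℝ)..y, H s y) = (∫ s in (0:ℝ)..u, H s y) + ∫ s in u..y, H s y :=
    (integral_add_adjacent_intervals hint1 hintuy).symm
  -- term 1 bound
  have hT1 : |(∫ s in (0:ℝ)..u, H s y) - (∫ s in (0:ℝ)..u, H s u)
      - (y - u) * ∫ s in (0:ℝ)..u, H₂ s u| ≤ ε/(2*(u+1)) * |y-u| * u := by
    have heq : (∫ s in (0:ℝ)..u, H s y) - (∫ s in (0:ℝ)..u, H s u)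
        - (y - u) * ∫ s in (0:ℝ)..u, H₂ s u
        = ∫ s in (0:ℝ)..u, (H s y - H s u - (y-u) * H₂ s u) := by
      rw [integral_sub (hint1.sub hint2) (hint3.const_mul (y-u)), integral_sub hint1 hint2,
        intervalIntegral.integral_const_mul]
    rw [heq]
    have hbnd : ∀ s ∈ Set.uIoc (0:ℝ) u, ‖H s y - H s u - (y-u) * H₂ s u‖ ≤ ε/(2*(u+1)) * |y-u| := by
      intro s hs
      rw [uIoc_of_le hu.le] at hs
      have hsIcc : s ∈ Icc (0:ℝ) (u+r) := ⟨hs.1.le, by linarith [hs.2]⟩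
      -- FTC on [u,y]
      have hder : ∀ t ∈ uIcc u y, HasDerivAt (fun y' => H s y') (H₂ s t) t := by
        intro t ht
        have htI : t ∈ Icc (u-r) (u+r) := by
          rcases le_total u y with h | h
          · rw [uIcc_of_le h] at ht; rw [abs_lt] at hyu
            exact ⟨by linarith [ht.1], by linarith [ht.2]⟩
          · rw [uIcc_of_ge h] at ht; rw [abs_lt] at hyu
            exact ⟨by linarith [ht.1], by linarith [ht.2]⟩
        exact hd (s, t) (hQW (hmemQ s t hsIcc htI))
      have hintH2 : IntervalIntegrable (fun t => H₂ s t) volume u y := by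
        apply ContinuousOn.intervalIntegrable
        have : ContinuousOn (fun t : ℝ => ((s, t) : ℝ×ℝ)) (uIcc u y) :=
          (continuous_const.prodMk continuous_id).continuousOn
        apply ((hH₂.mono hQW).comp this)
        intro t ht
        refine hmemQ s t hsIcc ?_
        rcases le_total u y with h | h
        · rw [uIcc_of_le h] at ht; rw [abs_lt] at hyu
          exact ⟨by linarith [ht.1], by linarith [ht.2]⟩
        · rw [uIcc_of_ge h] at ht; rw [abs_lt] at hyu
          exact ⟨by linarith [ht.1], by linarith [ht.2]⟩
      have hFTC : (∫ t in u..y, H₂ s t) = H s y - H s u :=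
        integral_eq_sub_of_hasDerivAt hder hintH2
      have heq2 : H s y - H s u - (y-u) * H₂ s u = ∫ t in u..y, (H₂ s t - H₂ s u) := by
        rw [integral_sub hintH2 (intervalIntegrable_const), hFTC,
          intervalIntegral.integral_const, smul_eq_mul]
      rw [heq2]
      apply intervalIntegral.norm_integral_le_of_norm_le_const
      · intro t ht
        have htI : t ∈ Icc (u-r) (u+r) := by
          rcases le_total u y with h | h
          · rw [uIoc_of_le h] at ht; rw [abs_lt] at hyu
            exact ⟨by linarith [ht.1], by linarith [ht.2]⟩
          · rw [uIoc_of_ge h] at ht; rw [abs_lt] at hyu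
            exact ⟨by linarith [ht.1], by linarith [ht.2]⟩
        have hd1' : dist ((s,t) : ℝ×ℝ) ((s,u) : ℝ×ℝ) < d1 := by
          rw [Prod.dist_eq]
          have : dist t u ≤ |y - u| := by
            rw [Real.dist_eq]
            rcases le_total u y with h | h
            · rw [uIoc_of_le h] at ht
              rw [abs_of_nonneg (by linarith [ht.1] : (0:ℝ) ≤ t - u),
                abs_of_nonneg (by linarith : (0:ℝ) ≤ y - u)]
              linarith [ht.2]
            · rw [uIoc_of_ge h] at ht
              rw [abs_of_nonpos (by linarith [ht.2] : t - u ≤ 0),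
                abs_of_nonpos (by linarith : y - u ≤ 0)]
              linarith [ht.1]
          calc max (dist s s) (dist t u) = dist t u := by
                simp [dist_self, dist_nonneg]
            _ ≤ |y - u| := this
            _ < d1 := hyd1
        have := hB1 (s,t) (hmemQ s t hsIcc htI) (s,u) (hmemQ s u hsIcc huQ) hd1'
        rw [Real.dist_eq] at this
        exact le_of_lt this
    have hni := intervalIntegral.norm_integral_le_of_norm_le_const hbnd
    rw [sub_zero, abs_of_pos hu] at hni
    exact hni
  -- term 2 bound
  have hT2 : |(∫ s in u..y, H s y) - (y - u) * H u u| ≤ ε/2 * |y-u| := by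
    have heq : (∫ s in u..y, H s y) - (y - u) * H u u = ∫ s in u..y, (H s y - H u u) := by
      rw [integral_sub hintuy intervalIntegrable_const, intervalIntegral.integral_const,
        smul_eq_mul]
    rw [heq]
    have hbnd : ∀ s ∈ Set.uIoc u y, ‖H s y - H u u‖ ≤ ε/2 := by
      intro s hs
      have hsI : s ∈ Icc (0:ℝ) (u+r) ∧ dist s u ≤ |y - u| := by
        rcases le_total u y with h | h
        · rw [uIoc_of_le h] at hs
          rw [abs_lt] at hyu
          constructor
          · exact ⟨by linarith [hs.1], by linarith [hs.2]⟩
          · rw [Real.dist_eq, abs_of_nonneg (by linarith [hs.1] : (0:ℝ) ≤ s - u),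
              abs_of_nonneg (by linarith : (0:ℝ) ≤ y - u)]
            linarith [hs.2]
        · rw [uIoc_of_ge h] at hs
          rw [abs_lt] at hyu
          constructor
          · exact ⟨by linarith [hs.1, hy0], by linarith [hs.2]⟩
          · rw [Real.dist_eq, abs_of_nonpos (by linarith [hs.2] : s - u ≤ 0),
              abs_of_nonpos (by linarith : y - u ≤ 0)]
            linarith [hs.1]
      have hd2' : dist ((s,y) : ℝ×ℝ) ((u,u) : ℝ×ℝ) < d2 := by
        rw [Prod.dist_eq]
        apply max_lt
        · exact lt_of_le_of_lt hsI.2 hyd2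
        · rw [Real.dist_eq]; exact hyd2
      have := hB2 (s,y) (hmemQ s y hsI.1 hyQ) (u,u)
        (hmemQ u u (hsu u ⟨hu.le, le_rfl⟩) huQ) hd2'
      rw [Real.dist_eq] at this
      exact le_of_lt this
    exact intervalIntegral.norm_integral_le_of_norm_le_const hbnd
  -- combine
  have : (∫ s in (0:ℝ)..y, H s y) - (∫ s in (0:ℝ)..u, H s u)
      - (y - u) • (H u u + ∫ s in (0:ℝ)..u, H₂ s u)
      = ((∫ s in (0:ℝ)..u, H s y) - (∫ s in (0:ℝ)..u, H s u)
          - (y - u) * ∫ s in (0:ℝ)..u, H₂ s u)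
        + ((∫ s in u..y, H s y) - (y - u) * H u u) := by
    rw [hsplit, smul_eq_mul]; ring
  rw [Real.norm_eq_abs, Real.norm_eq_abs, this]
  calc |_ + _| ≤ _ + _ := abs_add_le _ _
    _ ≤ ε/(2*(u+1)) * |y-u| * u + ε/2 * |y-u| := add_le_add hT1 hT2
    _ ≤ ε * |y - u| := by
        have h1 : ε/(2*(u+1)) * |y-u| * u ≤ ε/2 * |y-u| := by
          have h2 : ε/(2*(u+1)) * u ≤ ε/2 := by
            rw [div_mul_eq_mul_div, div_le_div_iff₀ (by positivity) (by norm_num : (0:ℝ) < 2)]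
            nlinarith [hε.le]
          calc ε/(2*(u+1)) * |y-u| * u = (ε/(2*(u+1)) * u) * |y-u| := by ring
            _ ≤ ε/2 * |y-u| := mul_le_mul_of_nonneg_right h2 (abs_nonneg _)
        calc ε/(2*(u+1)) * |y-u| * u + ε/2 * |y-u| ≤ ε/2 * |y-u| + ε/2 * |y-u| :=
              add_le_add h1 le_rfl
          _ = ε * |y-u| := by ring
        



lemma pdfacts (x : ℝ → ℝ → ℝ) (V : Set (ℝ × ℝ)) (hV : IsOpen V)
    (hx : ContDiffOn ℝ 2 (fun p : ℝ × ℝ => x p.1 p.2) V) :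
    ∃ (A B : ℝ × ℝ → ℝ) (A' B' : ℝ × ℝ → (ℝ × ℝ) →L[ℝ] ℝ),
      (∀ p ∈ V, pd1 x p.1 p.2 = A p) ∧
      (∀ p ∈ V, pd2 x p.1 p.2 = B p) ∧
      ContinuousOn A V ∧ ContinuousOn B V ∧
      (∀ p ∈ V, HasFDerivAt A (A' p) p) ∧
      (∀ p ∈ V, HasFDerivAt B (B' p) p) ∧
      (∀ v : ℝ × ℝ, ContinuousOn (fun p => A' p v) V) ∧
      (∀ v : ℝ × ℝ, ContinuousOn (fun p => B' p v) V) ∧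
      (∀ p ∈ V, A' p (0, 1) = B' p (1, 0)) ∧
      (∀ p ∈ V, pd2 (pd1 x) p.1 p.2 = A' p (0, 1)) := by
  set F : ℝ × ℝ → ℝ := fun p => x p.1 p.2 with hF
  set F' : ℝ × ℝ → (ℝ × ℝ) →L[ℝ] ℝ := fderiv ℝ F with hF'
  have h2 : (2 : WithTop ℕ∞) = 1 + 1 := by norm_num
  have hstep := (contDiffOn_succ_iff_fderiv_of_isOpen (n := 1) hV).mp (h2 ▸ hx)
  have hFdiff : DifferentiableOn ℝ F V := hstep.1
  have hF'cd : ContDiffOn ℝ 1 F' V := hstep.2.2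
  have hF'diff : DifferentiableOn ℝ F' V := hF'cd.differentiableOn one_ne_zero
  have hF'cont : ContinuousOn F' V := hF'cd.continuousOn
  have h1 : (1 : WithTop ℕ∞) = 0 + 1 := by norm_num
  have hstep2 := (contDiffOn_succ_iff_fderiv_of_isOpen (n := 0) hV).mp (h1 ▸ hF'cd)
  have hF''cont : ContinuousOn (fderiv ℝ F') V := by
    have := hstep2.2.2
    exact contDiffOn_zero.mp this
  -- pointwise derivatives
  have hFd : ∀ p ∈ V, HasFDerivAt F (F' p) p := fun p hp =>
    (hFdiff.differentiableAt (hV.mem_nhds hp)).hasFDerivAt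
  have hF'd : ∀ p ∈ V, HasFDerivAt F' (fderiv ℝ F' p) p := fun p hp =>
    (hF'diff.differentiableAt (hV.mem_nhds hp)).hasFDerivAt
  set A : ℝ × ℝ → ℝ := fun p => F' p (1, 0) with hA
  set B : ℝ × ℝ → ℝ := fun p => F' p (0, 1) with hB
  set A' : ℝ × ℝ → (ℝ × ℝ) →L[ℝ] ℝ :=
    fun p => (ContinuousLinearMap.apply ℝ ℝ ((1:ℝ), (0:ℝ))).comp (fderiv ℝ F' p) with hA'
  set B' : ℝ × ℝ → (ℝ × ℝ) →L[ℝ] ℝ :=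
    fun p => (ContinuousLinearMap.apply ℝ ℝ ((0:ℝ), (1:ℝ))).comp (fderiv ℝ F' p) with hB'
  have hA'd : ∀ p ∈ V, HasFDerivAt A (A' p) p := fun p hp =>
    (ContinuousLinearMap.apply ℝ ℝ ((1:ℝ), (0:ℝ))).hasFDerivAt.comp p (hF'd p hp)
  have hB'd : ∀ p ∈ V, HasFDerivAt B (B' p) p := fun p hp =>
    (ContinuousLinearMap.apply ℝ ℝ ((0:ℝ), (1:ℝ))).hasFDerivAt.comp p (hF'd p hp)
  -- pd1 = A on V
  have hpd1 : ∀ p ∈ V, pd1 x p.1 p.2 = A p := by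
    rintro ⟨s, t⟩ hp
    have hline : HasDerivAt (fun s' : ℝ => ((s', t) : ℝ × ℝ)) (1, 0) s :=
      (hasDerivAt_id s).prodMk (hasDerivAt_const s t)
    have := (hFd (s, t) hp).comp_hasDerivAt s hline
    exact this.deriv
  have hpd2 : ∀ p ∈ V, pd2 x p.1 p.2 = B p := by
    rintro ⟨s, t⟩ hp
    have hline : HasDerivAt (fun t' : ℝ => ((s, t') : ℝ × ℝ)) (0, 1) t :=
      (hasDerivAt_const t s).prodMk (hasDerivAt_id t)
    have := (hFd (s, t) hp).comp_hasDerivAt t hline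
    exact this.deriv
  refine ⟨A, B, A', B', hpd1, hpd2, ?_, ?_, hA'd, hB'd, ?_, ?_, ?_, ?_⟩
  · exact hF'cont.clm_apply continuousOn_const
  · exact hF'cont.clm_apply continuousOn_const
  · intro v
    exact (hF''cont.clm_apply continuousOn_const).clm_apply continuousOn_const
  · intro v
    exact (hF''cont.clm_apply continuousOn_const).clm_apply continuousOn_const
  · -- symmetry
    intro p hp
    have hev : ∀ᶠ q in nhds p, HasFDerivAt F (F' q) q := by
      filter_upwards [hV.mem_nhds hp] with q hq using hFd q hq
    have hsym := second_derivative_symmetric_of_eventually hev (hF'd p hp)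
    show (fderiv ℝ F' p (0,1)) (1,0) = (fderiv ℝ F' p (1,0)) (0,1)
    exact hsym (0,1) (1,0)
  · -- pd2 (pd1 x) = A' (0,1)
    rintro ⟨s, t⟩ hp
    have hev : (fun t' => pd1 x s t') =ᶠ[nhds t] (fun t' => A (s, t')) := by
      have : ∀ᶠ t' in nhds t, ((s, t') : ℝ × ℝ) ∈ V := by
        have hcont : Continuous (fun t' : ℝ => ((s, t') : ℝ × ℝ)) :=
          continuous_const.prodMk continuous_id
        exact hcont.continuousAt.preimage_mem_nhds (hV.mem_nhds hp)
      filter_upwards [this] with t' ht' using hpd1 (s, t') ht'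
    have hline : HasDerivAt (fun t' : ℝ => ((s, t') : ℝ × ℝ)) (0, 1) t :=
      (hasDerivAt_const t s).prodMk (hasDerivAt_id t)
    have hder : HasDerivAt (fun t' => A (s, t')) (A' (s, t) (0, 1)) t :=
      (hA'd (s, t) hp).comp_hasDerivAt t hline
    show deriv (fun t' => pd1 x s t') t = A' (s, t) (0, 1)
    rw [hev.deriv_eq, hder.deriv]

set_option maxHeartbeats 2000000 in
/-- Linear stability estimate: there is a constant `M > 0`, depending
only on `λ₀`, `c`, `C`, such that for every relative perturbation `δ`, every solution
`x₀` of the homogeneous hodograph equation, and every solution `x₁` of the linearized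
equation with forcing `g = −λ₀(s+t)·δ'(s+t)·((x₀)_s + (x₀)_t)` and homogeneous data,
`sup_{u∈[c,C]} E₁(u) ≤ M · (sup_{u∈[c,C]} E₀(u)) · ∫_c^C λ₀(v)·δ'(v)² dv`. -/
theorem linear_stability_estimate
    (c C : ℝ) (hc : 0 < c) (hcC : c < C) (lam₀ : ℝ → ℝ)
    (hlam₀ : ContDiffOn ℝ 1 lam₀ (Set.Ioi 0))
    (hpos : ∀ u ∈ Set.Icc c C, 0 < lam₀ u)
    (hderiv : ∀ u ∈ Set.Icc c C, 0 < deriv lam₀ u) :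
    ∃ M : ℝ, 0 < M ∧
      ∀ (δ : ℝ → ℝ), ContDiff ℝ 1 δ →
      ∀ (x₀ x₁ : ℝ → ℝ → ℝ) (V : Set (ℝ × ℝ)), IsOpen V →
        {p : ℝ × ℝ | 0 ≤ p.1 ∧ 0 ≤ p.2 ∧ c ≤ p.1 + p.2 ∧ p.1 + p.2 ≤ C} ⊆ V →
        ContDiffOn ℝ 2 (fun p : ℝ × ℝ => x₀ p.1 p.2) V →
        ContDiffOn ℝ 2 (fun p : ℝ × ℝ => x₁ p.1 p.2) V →
        (∀ p ∈ V,
          2 * lam₀ (p.1 + p.2) * pd2 (pd1 x₀) p.1 p.2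
            + deriv lam₀ (p.1 + p.2) * (pd1 x₀ p.1 p.2 + pd2 x₀ p.1 p.2) = 0) →
        (∀ p ∈ V,
          2 * lam₀ (p.1 + p.2) * pd2 (pd1 x₁) p.1 p.2
            + deriv lam₀ (p.1 + p.2) * (pd1 x₁ p.1 p.2 + pd2 x₁ p.1 p.2)
          = -(lam₀ (p.1 + p.2) * deriv δ (p.1 + p.2)
              * (pd1 x₀ p.1 p.2 + pd2 x₀ p.1 p.2))) →
        (∀ s ∈ Set.Icc c C, x₁ s 0 = 0) →
        (∀ t ∈ Set.Icc c C, x₁ 0 t = 0) →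
        (∀ s ∈ Set.Icc (0:ℝ) c, pd1 x₁ s (c - s) = 0 ∧ pd2 x₁ s (c - s) = 0) →
        sSup (energy lam₀ x₁ '' Set.Icc c C)
          ≤ M * sSup (energy lam₀ x₀ '' Set.Icc c C)
            * ∫ v in c..C, lam₀ v * (deriv δ v) ^ 2 := by
  -- basic setup for the constants
  have hIccne : (Set.Icc c C).Nonempty := ⟨c, le_refl c, hcC.le⟩
  have hIccIoi : Set.Icc c C ⊆ Set.Ioi 0 := fun u hu => lt_of_lt_of_le hc hu.1
  have hlamc : ContinuousOn lam₀ (Set.Ioi 0) := hlam₀.continuousOn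
  have hlamdiff : ∀ u : ℝ, 0 < u → HasDerivAt lam₀ (deriv lam₀ u) u := by
    intro u hu
    exact ((hlam₀.differentiableOn one_ne_zero).differentiableAt
      (isOpen_Ioi.mem_nhds hu)).hasDerivAt
  have hdercont : ContinuousOn (deriv lam₀) (Set.Ioi 0) := by
    have h1 : (1 : WithTop ℕ∞) = 0 + 1 := by norm_num
    have hstep := (contDiffOn_succ_iff_deriv_of_isOpen (n := 0) isOpen_Ioi).mp (h1 ▸ hlam₀)
    exact contDiffOn_zero.mp hstep.2.2
  obtain ⟨um, hum, hmin⟩ := isCompact_Icc.exists_isMinOn hIccne (hlamc.mono hIccIoi)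
  obtain ⟨uM, huM, hmax⟩ := isCompact_Icc.exists_isMaxOn hIccne (hdercont.mono hIccIoi)
  set mlam : ℝ := lam₀ um with hmlamdef
  set Mlam : ℝ := deriv lam₀ uM with hMlamdef
  have hmlam : 0 < mlam := hpos um hum
  have hmlamle : ∀ u ∈ Set.Icc c C, mlam ≤ lam₀ u := fun u hu => hmin hu
  have hMlam : 0 < Mlam := hderiv uM huM
  have hMlamge : ∀ u ∈ Set.Icc c C, deriv lam₀ u ≤ Mlam := fun u hu => hmax hu
  set a : ℝ := 1 + Mlam / mlam with hadef
  have ha : 0 < a := by positivity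
  set M : ℝ := Real.exp (a * (C - c)) / mlam with hMdef
  have hM : 0 < M := by positivity
  refine ⟨M, hM, ?_⟩
  intro δ hδ x₀ x₁ V hVopen hΩV hx₀ hx₁ hpde₀ hpde₁ hbc1 hbc2 hbc3
  have hδc : Continuous (deriv δ) := hδ.continuous_deriv le_rfl
  -- membership lemmas
  have hmemV : ∀ u ∈ Set.Icc c C, ∀ s ∈ Set.Icc (0:ℝ) u, ((s, u - s) : ℝ × ℝ) ∈ V := by
    intro u hu s hs
    apply hΩV
    refine ⟨hs.1, by simp only; linarith [hs.2], by simp only; linarith [hu.1],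
      by simp only; linarith [hu.2]⟩
  -- regularity packages
  obtain ⟨A₁, B₁, A₁', B₁', h1pd1, h1pd2, h1Ac, h1Bc, h1A'd, h1B'd, h1A'c, h1B'c, h1sym, h1link⟩ :=
    pdfacts x₁ V hVopen hx₁
  obtain ⟨A₀, B₀, A₀', B₀', h0pd1, h0pd2, h0Ac, h0Bc, -, -, -, -, -, -⟩ :=
    pdfacts x₀ V hVopen hx₀
  -- the open set W for the parametric integral
  set lm : ℝ × ℝ → ℝ × ℝ := fun q => (q.1, q.2 - q.1) with hlmdef
  have hlmc : Continuous lm := (continuous_fst).prodMk (continuous_snd.sub continuous_fst)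
  set W : Set (ℝ × ℝ) := lm ⁻¹' V ∩ {q : ℝ × ℝ | 0 < q.2} with hWdef
  have hWopen : IsOpen W := (hVopen.preimage hlmc).inter (isOpen_lt continuous_const continuous_snd)
  have hWmem : ∀ q : ℝ × ℝ, q ∈ W → ((q.1, q.2 - q.1) : ℝ × ℝ) ∈ V ∧ 0 < q.2 := fun q hq => hq
  -- integrands
  set pt : ℝ × ℝ → ℝ := fun p => A₁' p (0, 1) with hptdef
  set qt : ℝ × ℝ → ℝ := fun p => B₁' p (0, 1) with hqtdef
  set qs : ℝ × ℝ → ℝ := fun p => B₁' p (1, 0) with hqsdef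
  set H1 : ℝ → ℝ → ℝ := fun s y => lam₀ y * (A₁ (s, y - s) ^ 2 + B₁ (s, y - s) ^ 2) with hH1def
  set H1' : ℝ → ℝ → ℝ := fun s y => deriv lam₀ y * (A₁ (s, y - s) ^ 2 + B₁ (s, y - s) ^ 2)
      + lam₀ y * ((2 : ℕ) * A₁ (s, y - s) ^ 1 * pt (s, y - s)
        + (2 : ℕ) * B₁ (s, y - s) ^ 1 * qt (s, y - s)) with hH1'def
  set H0 : ℝ → ℝ → ℝ := fun s y => lam₀ y * (A₀ (s, y - s) ^ 2 + B₀ (s, y - s) ^ 2) with hH0def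
  -- continuity of H1, H1', H0 on W
  have hlamW : ContinuousOn (fun q : ℝ × ℝ => lam₀ q.2) W :=
    hlamc.comp continuous_snd.continuousOn (fun q hq => (hWmem q hq).2)
  have hderW : ContinuousOn (fun q : ℝ × ℝ => deriv lam₀ q.2) W :=
    hdercont.comp continuous_snd.continuousOn (fun q hq => (hWmem q hq).2)
  have hlmW : Set.MapsTo lm W V := fun q hq => (hWmem q hq).1
  have hA1W : ContinuousOn (fun q : ℝ × ℝ => A₁ (lm q)) W := h1Ac.comp hlmc.continuousOn hlmW
  have hB1W : ContinuousOn (fun q : ℝ × ℝ => B₁ (lm q)) W := h1Bc.comp hlmc.continuousOn hlmW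
  have hA0W : ContinuousOn (fun q : ℝ × ℝ => A₀ (lm q)) W := h0Ac.comp hlmc.continuousOn hlmW
  have hB0W : ContinuousOn (fun q : ℝ × ℝ => B₀ (lm q)) W := h0Bc.comp hlmc.continuousOn hlmW
  have hptW : ContinuousOn (fun q : ℝ × ℝ => pt (lm q)) W :=
    (h1A'c (0,1)).comp hlmc.continuousOn hlmW
  have hqtW : ContinuousOn (fun q : ℝ × ℝ => qt (lm q)) W :=
    (h1B'c (0,1)).comp hlmc.continuousOn hlmW
  have hH1W : ContinuousOn (fun q : ℝ × ℝ => H1 q.1 q.2) W := by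
    apply hlamW.mul
    exact ((hA1W.pow 2).add (hB1W.pow 2))
  have hH0W : ContinuousOn (fun q : ℝ × ℝ => H0 q.1 q.2) W := by
    apply hlamW.mul
    exact ((hA0W.pow 2).add (hB0W.pow 2))
  have hH1'W : ContinuousOn (fun q : ℝ × ℝ => H1' q.1 q.2) W := by
    apply ContinuousOn.add
    · exact hderW.mul ((hA1W.pow 2).add (hB1W.pow 2))
    · apply hlamW.mul
      apply ContinuousOn.add
      · exact (continuousOn_const.mul (hA1W.pow 1)).mul hptW
      · exact (continuousOn_const.mul (hB1W.pow 1)).mul hqtW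
  -- derivative of H1 in the parameter
  have hH1d : ∀ q ∈ W, HasDerivAt (fun y => H1 q.1 y) (H1' q.1 q.2) q.2 := by
    rintro ⟨s, y⟩ hq
    obtain ⟨hqV, hqy⟩ := hWmem (s, y) hq
    have hpath : HasDerivAt (fun y' : ℝ => ((s, y' - s) : ℝ × ℝ)) ((0 : ℝ), (1 : ℝ)) y :=
      (hasDerivAt_const y s).prodMk ((hasDerivAt_id y).sub_const s)
    have hA1d : HasDerivAt (fun y' => A₁ (s, y' - s)) (pt (s, y - s)) y :=
      (h1A'd (s, y - s) hqV).comp_hasDerivAt y hpath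
    have hB1d : HasDerivAt (fun y' => B₁ (s, y' - s)) (qt (s, y - s)) y :=
      (h1B'd (s, y - s) hqV).comp_hasDerivAt y hpath
    exact (hlamdiff y hqy).mul ((hA1d.pow 2).add (hB1d.pow 2))
  -- derivative of the approximate energies
  set E1t : ℝ → ℝ := fun y => ∫ s in (0:ℝ)..y, H1 s y with hE1tdef
  have hsegW : ∀ u ∈ Set.Icc c C, ∀ s ∈ Set.Icc (0:ℝ) u, ((s, u) : ℝ × ℝ) ∈ W := by
    intro u hu s hs
    exact ⟨hmemV u hu s hs, lt_of_lt_of_le hc hu.1⟩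
  have hE1d : ∀ u ∈ Set.Icc c C,
      HasDerivAt E1t (H1 u u + ∫ s in (0:ℝ)..u, H1' s u) u := by
    intro u hu
    exact hasDerivAt_param_integral H1 H1' W hWopen hH1W hH1'W hH1d u
      (lt_of_lt_of_le hc hu.1) (hsegW u hu)
  -- identification with `energy`
  have hE1eq : ∀ u ∈ Set.Icc c C, energy lam₀ x₁ u = E1t u := by
    intro u hu
    apply intervalIntegral.integral_congr
    intro s hs
    rw [uIcc_of_le (le_trans hc.le (le_trans hu.1 le_rfl) : (0:ℝ) ≤ u)] at hs
    have hm := hmemV u hu s hs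
    simp only
    rw [h1pd1 (s, u - s) hm, h1pd2 (s, u - s) hm]
  have hE0eq : ∀ u ∈ Set.Icc c C, energy lam₀ x₀ u = ∫ s in (0:ℝ)..u, H0 s u := by
    intro u hu
    apply intervalIntegral.integral_congr
    intro s hs
    rw [uIcc_of_le (le_trans hc.le hu.1 : (0:ℝ) ≤ u)] at hs
    have hm := hmemV u hu s hs
    simp only
    rw [h0pd1 (s, u - s) hm, h0pd2 (s, u - s) hm]
  -- boundary vanishing of A₁ on the bottom edge and B₁ on the left edge
  have hmemV2 : ∀ u ∈ Set.Icc c C, ((u, (0:ℝ)) : ℝ × ℝ) ∈ V := by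
    intro u hu
    apply hΩV
    refine ⟨by simp only; linarith [hu.1], le_refl _, by simp only; linarith [hu.1],
      by simp only; linarith [hu.2]⟩
  have hmemV3 : ∀ u ∈ Set.Icc c C, (((0:ℝ), u) : ℝ × ℝ) ∈ V := by
    intro u hu
    apply hΩV
    refine ⟨le_refl _, by simp only; linarith [hu.1], by simp only; linarith [hu.1],
      by simp only; linarith [hu.2]⟩
  have hA1bot : ∀ u ∈ Set.Icc c C, A₁ (u, 0) = 0 := by
    have hOoo : ∀ u ∈ Set.Ioo c C, A₁ (u, 0) = 0 := by
      intro u hu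
      rw [← h1pd1 (u, 0) (hmemV2 u (Set.Ioo_subset_Icc_self hu))]
      show deriv (fun s' => x₁ s' 0) u = 0
      have hev : (fun s' => x₁ s' 0) =ᶠ[nhds u] (fun _ => (0:ℝ)) := by
        filter_upwards [isOpen_Ioo.mem_nhds hu] with s' hs'
        exact hbc1 s' (Set.Ioo_subset_Icc_self hs')
      rw [hev.deriv_eq, deriv_const]
    intro u hu
    have hcl : u ∈ closure (Set.Ioo c C) := by
      rw [closure_Ioo hcC.ne]; exact hu
    have hne : (nhdsWithin u (Set.Ioo c C)).NeBot := mem_closure_iff_nhdsWithin_neBot.mp hcl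
    have hgc : ContinuousOn (fun s : ℝ => A₁ (s, 0)) (Set.Icc c C) := by
      apply h1Ac.comp (Continuous.continuousOn (continuous_id.prodMk continuous_const))
      intro s hs
      exact hmemV2 s hs
    have h1 : Filter.Tendsto (fun s : ℝ => A₁ (s, 0)) (nhdsWithin u (Set.Ioo c C))
        (nhds (A₁ (u, 0))) :=
      ((hgc u hu).mono_left (nhdsWithin_mono _ Set.Ioo_subset_Icc_self))
    have h2 : Filter.Tendsto (fun s : ℝ => A₁ (s, 0)) (nhdsWithin u (Set.Ioo c C))
        (nhds 0) := by
      apply Filter.Tendsto.congr' _ tendsto_const_nhds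
      filter_upwards [self_mem_nhdsWithin] with s hs
      exact (hOoo s hs).symm
    exact tendsto_nhds_unique h1 h2
  have hB1left : ∀ u ∈ Set.Icc c C, B₁ (0, u) = 0 := by
    have hOoo : ∀ u ∈ Set.Ioo c C, B₁ (0, u) = 0 := by
      intro u hu
      rw [← h1pd2 (0, u) (hmemV3 u (Set.Ioo_subset_Icc_self hu))]
      show deriv (fun t' => x₁ 0 t') u = 0
      have hev : (fun t' => x₁ 0 t') =ᶠ[nhds u] (fun _ => (0:ℝ)) := by
        filter_upwards [isOpen_Ioo.mem_nhds hu] with t' ht'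
        exact hbc2 t' (Set.Ioo_subset_Icc_self ht')
      rw [hev.deriv_eq, deriv_const]
    intro u hu
    have hcl : u ∈ closure (Set.Ioo c C) := by
      rw [closure_Ioo hcC.ne]; exact hu
    have hne : (nhdsWithin u (Set.Ioo c C)).NeBot := mem_closure_iff_nhdsWithin_neBot.mp hcl
    have hgc : ContinuousOn (fun t : ℝ => B₁ (0, t)) (Set.Icc c C) := by
      apply h1Bc.comp (Continuous.continuousOn (continuous_const.prodMk continuous_id))
      intro t ht
      exact hmemV3 t ht
    have h1 : Filter.Tendsto (fun t : ℝ => B₁ (0, t)) (nhdsWithin u (Set.Ioo c C))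
        (nhds (B₁ (0, u))) :=
      ((hgc u hu).mono_left (nhdsWithin_mono _ Set.Ioo_subset_Icc_self))
    have h2 : Filter.Tendsto (fun t : ℝ => B₁ (0, t)) (nhdsWithin u (Set.Ioo c C))
        (nhds 0) := by
      apply Filter.Tendsto.congr' _ tendsto_const_nhds
      filter_upwards [self_mem_nhdsWithin] with t ht
      exact (hOoo t ht).symm
    exact tendsto_nhds_unique h1 h2
  -- bound on the energies of x₀ and the supremum S₀
  set S₀ : ℝ := sSup (energy lam₀ x₀ '' Set.Icc c C) with hS₀def
  set Ω : Set (ℝ × ℝ) := {p : ℝ × ℝ | 0 ≤ p.1 ∧ 0 ≤ p.2 ∧ c ≤ p.1 + p.2 ∧ p.1 + p.2 ≤ C}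
    with hΩdef
  have hΩV' : Ω ⊆ V := hΩV
  have hΩclosed : IsClosed Ω := by
    have : Ω = {p : ℝ × ℝ | 0 ≤ p.1} ∩ ({p : ℝ × ℝ | 0 ≤ p.2} ∩
        ({p : ℝ × ℝ | c ≤ p.1 + p.2} ∩ {p : ℝ × ℝ | p.1 + p.2 ≤ C})) := by
      ext p; simp [hΩdef, and_assoc]
    rw [this]
    exact (isClosed_le continuous_const continuous_fst).inter
      ((isClosed_le continuous_const continuous_snd).inter
        ((isClosed_le continuous_const (continuous_fst.add continuous_snd)).inter
          (isClosed_le (continuous_fst.add continuous_snd) continuous_const)))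
  have hΩcmp : IsCompact Ω := by
    apply IsCompact.of_isClosed_subset
      ((isCompact_Icc (a := (0:ℝ)) (b := C)).prod (isCompact_Icc (a := (0:ℝ)) (b := C)))
      hΩclosed
    rintro ⟨p1, p2⟩ ⟨h1, h2, h3, h4⟩
    simp only at h1 h2 h3 h4
    exact ⟨⟨h1, by linarith⟩, ⟨h2, by linarith⟩⟩
  have hφ₀c : ContinuousOn (fun p : ℝ × ℝ => lam₀ (p.1 + p.2) * (A₀ p ^ 2 + B₀ p ^ 2)) Ω := by
    apply ContinuousOn.mul
    · apply hlamc.comp (continuous_fst.add continuous_snd).continuousOn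
      rintro ⟨p1, p2⟩ ⟨_, _, h3, _⟩
      exact lt_of_lt_of_le hc h3
    · exact (((h0Ac.mono hΩV').pow 2).add ((h0Bc.mono hΩV').pow 2))
  obtain ⟨K, hK⟩ := hΩcmp.exists_bound_of_continuousOn hφ₀c
  have hK0 : 0 ≤ K := by
    have hmem : ((c, (0:ℝ)) : ℝ × ℝ) ∈ Ω := by
      refine ⟨hc.le, le_refl _, by simp only; linarith, by simp only; linarith⟩
    exact le_trans (norm_nonneg _) (hK _ hmem)
  have hE0bdd : ∀ u ∈ Set.Icc c C, |energy lam₀ x₀ u| ≤ K * C := by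
    intro u hu
    rw [hE0eq u hu]
    have hb : ∀ s ∈ Set.uIoc (0:ℝ) u, ‖H0 s u‖ ≤ K := by
      intro s hs
      rw [Set.uIoc_of_le (le_trans hc.le hu.1)] at hs
      have hm : ((s, u - s) : ℝ × ℝ) ∈ Ω := by
        refine ⟨hs.1.le, by simp only; linarith [hs.2], by simp only; linarith [hu.1],
          by simp only; linarith [hu.2]⟩
      have := hK _ hm
      simp only at this ⊢
      calc ‖H0 s u‖ = ‖lam₀ (s + (u - s)) * (A₀ (s, u-s) ^ 2 + B₀ (s, u-s) ^ 2)‖ := by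
            rw [hH0def]; simp only; ring_nf
        _ ≤ K := this
    have := intervalIntegral.norm_integral_le_of_norm_le_const hb
    rw [sub_zero] at this
    calc |∫ s in (0:ℝ)..u, H0 s u| ≤ K * |u| := this
      _ ≤ K * C := by
          apply mul_le_mul_of_nonneg_left _ hK0
          rw [abs_of_nonneg (le_trans hc.le hu.1)]
          exact hu.2
  have hbddA : BddAbove (energy lam₀ x₀ '' Set.Icc c C) := by
    refine ⟨K * C, ?_⟩
    rintro _ ⟨u, hu, rfl⟩
    exact le_trans (le_abs_self _) (hE0bdd u hu)
  have hS₀le : ∀ u ∈ Set.Icc c C, energy lam₀ x₀ u ≤ S₀ := by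
    intro u hu
    exact le_csSup hbddA ⟨u, hu, rfl⟩
  have hE0nonneg : ∀ u ∈ Set.Icc c C, 0 ≤ energy lam₀ x₀ u := by
    intro u hu
    apply intervalIntegral.integral_nonneg (le_trans hc.le hu.1)
    intro s _
    exact mul_nonneg (hpos u hu).le (by positivity)
  have hS₀ : 0 ≤ S₀ := le_trans (hE0nonneg c ⟨le_rfl, hcC.le⟩) (hS₀le c ⟨le_rfl, hcC.le⟩)
  -- the key differential inequality
  have hDle : ∀ u ∈ Set.Icc c C,
      H1 u u + (∫ s in (0:ℝ)..u, H1' s u) ≤ a * E1t u + S₀ * (deriv δ u) ^ 2 := by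
    intro u hu
    have hu0 : (0:ℝ) ≤ u := le_trans hc.le hu.1
    have hlin : ∀ (f : ℝ × ℝ → ℝ), ContinuousOn f V →
        ContinuousOn (fun s => f (s, u - s)) (Set.Icc 0 u) := by
      intro f hf
      exact hf.comp ((continuous_id.prodMk (continuous_const.sub continuous_id)).continuousOn)
        (fun s hs => hmemV u hu s hs)
    have hlam_u := hpos u hu
    have hder_u := hderiv u hu
    -- notation for integrands along the line s + t = u
    set G : ℝ → ℝ := fun s => deriv lam₀ u * (A₁ (s, u - s) ^ 2 + B₁ (s, u - s) ^ 2)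
      - deriv lam₀ u * (A₁ (s, u - s) + B₁ (s, u - s)) ^ 2
      - lam₀ u * deriv δ u * (A₁ (s, u - s) + B₁ (s, u - s)) * (A₀ (s, u - s) + B₀ (s, u - s))
      with hGdef
    set Φ : ℝ → ℝ := fun s => lam₀ u *
      ((2:ℕ) * B₁ (s, u - s) ^ 1 * (B₁' (s, u - s) (1, 0) - B₁' (s, u - s) (0, 1))) with hΦdef
    -- integration by parts: ∫ Φ = lam₀ u * B₁(u,0)^2
    have hΦd : ∀ s ∈ Set.uIcc (0:ℝ) u, HasDerivAt (fun s' => lam₀ u * B₁ (s', u - s') ^ 2)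
        (Φ s) s := by
      intro s hs
      rw [Set.uIcc_of_le hu0] at hs
      have hp : ((s, u - s) : ℝ × ℝ) ∈ V := hmemV u hu s hs
      have hpath : HasDerivAt (fun s' : ℝ => ((s', u - s') : ℝ × ℝ)) ((1:ℝ), (-1:ℝ)) s :=
        (hasDerivAt_id s).prodMk ((hasDerivAt_id s).const_sub u)
      have hBd : HasDerivAt (fun s' => B₁ (s', u - s'))
          (B₁' (s, u - s) (1, 0) - B₁' (s, u - s) (0, 1)) s := by
        have := (h1B'd (s, u - s) hp).comp_hasDerivAt s hpath
        have hv : ((1:ℝ), (-1:ℝ)) = ((1:ℝ), (0:ℝ)) - ((0:ℝ), (1:ℝ)) := by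
          simp [Prod.ext_iff]
        rwa [hv, map_sub] at this
      exact (hBd.pow 2).const_mul (lam₀ u)
    have hΦint : IntervalIntegrable Φ volume 0 u := by
      rw [hΦdef]
      apply ContinuousOn.intervalIntegrable
      rw [Set.uIcc_of_le hu0]
      apply ContinuousOn.mul continuousOn_const
      apply ContinuousOn.mul (continuousOn_const.mul ((hlin B₁ h1Bc).pow 1))
      exact (hlin (fun p => B₁' p (1,0)) (h1B'c (1,0))).sub
        (hlin (fun p => B₁' p (0,1)) (h1B'c (0,1)))
    have hIBP : (∫ s in (0:ℝ)..u, Φ s) = lam₀ u * B₁ (u, 0) ^ 2 := by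
      rw [intervalIntegral.integral_eq_sub_of_hasDerivAt hΦd hΦint]
      rw [sub_self, sub_zero, hB1left u hu]
      ring
    -- pointwise identity H1' = G - Φ on [0,u]
    have hptid : ∀ s ∈ Set.Icc (0:ℝ) u, H1' s u = G s - Φ s := by
      intro s hs
      have hp : ((s, u - s) : ℝ × ℝ) ∈ V := hmemV u hu s hs
      have hpde' : 2 * lam₀ u * A₁' (s, u - s) (0, 1)
          + deriv lam₀ u * (A₁ (s, u - s) + B₁ (s, u - s))
          = -(lam₀ u * deriv δ u * (A₀ (s, u - s) + B₀ (s, u - s))) := by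
        have h := hpde₁ (s, u - s) hp
        rw [show ((s:ℝ), u - s).1 + ((s:ℝ), u - s).2 = u by simp] at h
        rw [h1pd1 (s, u - s) hp, h1pd2 (s, u - s) hp, h1link (s, u - s) hp,
          h0pd1 (s, u - s) hp, h0pd2 (s, u - s) hp] at h
        exact h
      rw [hH1'def, hGdef, hΦdef]
      simp only [hptdef, hqtdef]
      rw [← h1sym (s, u - s) hp]
      push_cast [pow_one]
      linear_combination (A₁ (s, u - s) + B₁ (s, u - s)) * hpde'
    -- split the integral
    have hGint : IntervalIntegrable G volume 0 u := by
      rw [hGdef]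
      apply ContinuousOn.intervalIntegrable
      rw [Set.uIcc_of_le hu0]
      apply ContinuousOn.sub
      apply ContinuousOn.sub
      · exact continuousOn_const.mul (((hlin A₁ h1Ac).pow 2).add ((hlin B₁ h1Bc).pow 2))
      · exact continuousOn_const.mul (((hlin A₁ h1Ac).add (hlin B₁ h1Bc)).pow 2)
      · exact (continuousOn_const.mul ((hlin A₁ h1Ac).add (hlin B₁ h1Bc))).mul
          ((hlin A₀ h0Ac).add (hlin B₀ h0Bc))
    have hsplitI : (∫ s in (0:ℝ)..u, H1' s u) = (∫ s in (0:ℝ)..u, G s) - ∫ s in (0:ℝ)..u, Φ s := by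
      rw [← intervalIntegral.integral_sub hGint hΦint]
      apply intervalIntegral.integral_congr
      intro s hs
      rw [Set.uIcc_of_le hu0] at hs
      exact hptid s hs
    -- value of H1 at (u,u)
    have hH1uu : H1 u u = lam₀ u * B₁ (u, 0) ^ 2 := by
      rw [hH1def]
      simp only [sub_self]
      rw [hA1bot u hu]
      ring
    -- so the derivative equals ∫ G
    have hDeq : H1 u u + (∫ s in (0:ℝ)..u, H1' s u) = ∫ s in (0:ℝ)..u, G s := by
      rw [hsplitI, hIBP, hH1uu]; ring
    rw [hDeq]
    -- pointwise bound G ≤ a • H1 + δ'^2 • H0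
    have hcomb : lam₀ u + deriv lam₀ u ≤ a * lam₀ u := by
      have h1 : deriv lam₀ u ≤ Mlam := hMlamge u hu
      have h2 : mlam ≤ lam₀ u := hmlamle u hu
      have h3 : Mlam ≤ Mlam / mlam * lam₀ u := by
        rw [div_mul_eq_mul_div, le_div_iff₀ hmlam]
        nlinarith
      rw [hadef]
      nlinarith
    have hGb : ∀ s ∈ Set.Icc (0:ℝ) u, G s ≤ a * H1 s u + (deriv δ u) ^ 2 * H0 s u := by
      intro s hs
      rw [hGdef, hH1def, hH0def]
      simp only
      have e1 : (0:ℝ) ≤ lam₀ u * (A₁ (s,u-s) + B₁ (s,u-s)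
          + deriv δ u * (A₀ (s,u-s) + B₀ (s,u-s))) ^ 2 :=
        mul_nonneg hlam_u.le (sq_nonneg _)
      have e2 : (0:ℝ) ≤ lam₀ u * (A₁ (s,u-s) - B₁ (s,u-s)) ^ 2 :=
        mul_nonneg hlam_u.le (sq_nonneg _)
      have e3 : (0:ℝ) ≤ lam₀ u * (deriv δ u * (A₀ (s,u-s) - B₀ (s,u-s))) ^ 2 :=
        mul_nonneg hlam_u.le (sq_nonneg _)
      have e4 : (0:ℝ) ≤ deriv lam₀ u * (A₁ (s,u-s) + B₁ (s,u-s)) ^ 2 :=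
        mul_nonneg hder_u.le (sq_nonneg _)
      have e5 : (lam₀ u + deriv lam₀ u) * (A₁ (s,u-s) ^ 2 + B₁ (s,u-s) ^ 2)
          ≤ a * lam₀ u * (A₁ (s,u-s) ^ 2 + B₁ (s,u-s) ^ 2) := by
        apply mul_le_mul_of_nonneg_right hcomb (by positivity)
      nlinarith [e1, e2, e3, e4, e5]
    have hH1int : IntervalIntegrable (fun s => H1 s u) volume 0 u := by
      rw [hH1def]
      apply ContinuousOn.intervalIntegrable
      rw [Set.uIcc_of_le hu0]
      exact continuousOn_const.mul (((hlin A₁ h1Ac).pow 2).add ((hlin B₁ h1Bc).pow 2))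
    have hH0int : IntervalIntegrable (fun s => H0 s u) volume 0 u := by
      rw [hH0def]
      apply ContinuousOn.intervalIntegrable
      rw [Set.uIcc_of_le hu0]
      exact continuousOn_const.mul (((hlin A₀ h0Ac).pow 2).add ((hlin B₀ h0Bc).pow 2))
    calc (∫ s in (0:ℝ)..u, G s)
        ≤ ∫ s in (0:ℝ)..u, (a * H1 s u + (deriv δ u) ^ 2 * H0 s u) := by
          apply intervalIntegral.integral_mono_on hu0 hGint
            ((hH1int.const_mul a).add (hH0int.const_mul ((deriv δ u) ^ 2))) hGb
      _ = a * E1t u + (deriv δ u) ^ 2 * ∫ s in (0:ℝ)..u, H0 s u := by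
          rw [intervalIntegral.integral_add (hH1int.const_mul a)
            (hH0int.const_mul ((deriv δ u) ^ 2)),
            intervalIntegral.integral_const_mul a (fun s => H1 s u),
            intervalIntegral.integral_const_mul ((deriv δ u) ^ 2) (fun s => H0 s u), hE1tdef]
      _ ≤ a * E1t u + S₀ * (deriv δ u) ^ 2 := by
          have h1 : (∫ s in (0:ℝ)..u, H0 s u) ≤ S₀ := by
            rw [← hE0eq u hu]; exact hS₀le u hu
          nlinarith [sq_nonneg (deriv δ u)]
  -- Gronwall argument
  have hexpd : ∀ u : ℝ, HasDerivAt (fun y => Real.exp (-(a*y))) (Real.exp (-(a*u)) * (-a)) u := by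
    intro u
    have h1 : HasDerivAt (fun y : ℝ => a * y) a u := by
      simpa using (hasDerivAt_id u).const_mul a
    exact h1.neg.exp
  set g : ℝ → ℝ := fun v => S₀ * (deriv δ v) ^ 2 * Real.exp (-(a*v)) with hgdef
  have hgc : Continuous g := by
    rw [hgdef]
    exact (continuous_const.mul (hδc.pow 2)).mul
      (Real.continuous_exp.comp ((continuous_const.mul continuous_id).neg))
  set I2 : ℝ → ℝ := fun y => ∫ v in c..y, g v with hI2def
  have hI2d : ∀ y : ℝ, HasDerivAt I2 (g y) y := fun y =>
    (hgc.integral_hasStrictDerivAt c y).hasDerivAt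
  set ψ : ℝ → ℝ := fun y => E1t y * Real.exp (-(a*y)) - I2 y with hψdef
  have hψd : ∀ u ∈ Set.Icc c C, HasDerivAt ψ
      ((H1 u u + ∫ s in (0:ℝ)..u, H1' s u) * Real.exp (-(a*u))
        + E1t u * (Real.exp (-(a*u)) * (-a)) - g u) u := by
    intro u hu
    exact ((hE1d u hu).mul (hexpd u)).sub (hI2d u)
  have hψd_nonpos : ∀ u ∈ Set.Icc c C,
      (H1 u u + ∫ s in (0:ℝ)..u, H1' s u) * Real.exp (-(a*u))
        + E1t u * (Real.exp (-(a*u)) * (-a)) - g u ≤ 0 := by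
    intro u hu
    have h1 := hDle u hu
    have h2 : (0:ℝ) < Real.exp (-(a*u)) := Real.exp_pos _
    have h3 : (H1 u u + ∫ s in (0:ℝ)..u, H1' s u) - a * E1t u - S₀ * (deriv δ u)^2 ≤ 0 := by
      linarith
    have h4 := mul_nonneg h2.le (neg_nonneg.mpr h3)
    rw [hgdef]
    simp only
    nlinarith [h4]
  have hψcont : ContinuousOn ψ (Set.Icc c C) := fun u hu =>
    ((hψd u hu).continuousAt).continuousWithinAt
  have hψanti : AntitoneOn ψ (Set.Icc c C) := by
    apply antitoneOn_of_deriv_nonpos (convex_Icc c C) hψcont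
    · intro u hu
      rw [interior_Icc] at hu
      exact ((hψd u (Set.Ioo_subset_Icc_self hu)).differentiableAt).differentiableWithinAt
    · intro u hu
      rw [interior_Icc] at hu
      rw [(hψd u (Set.Ioo_subset_Icc_self hu)).deriv]
      exact hψd_nonpos u (Set.Ioo_subset_Icc_self hu)
  have hE1c : E1t c = 0 := by
    rw [hE1tdef]
    simp only
    have heq0 : Set.EqOn (fun s => H1 s c) (fun _ => (0:ℝ)) (Set.uIcc (0:ℝ) c) := by
      intro s hs
      rw [Set.uIcc_of_le hc.le] at hs
      have hp : ((s, c - s) : ℝ × ℝ) ∈ V := hmemV c ⟨le_rfl, hcC.le⟩ s hs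
      have h1 := (hbc3 s hs).1
      have h2 := (hbc3 s hs).2
      rw [h1pd1 (s, c - s) hp] at h1
      rw [h1pd2 (s, c - s) hp] at h2
      simp only [hH1def, h1, h2]
      ring
    rw [intervalIntegral.integral_congr heq0]
    simp
  have hψle : ∀ u ∈ Set.Icc c C, E1t u * Real.exp (-(a*u)) - I2 u ≤ 0 := by
    intro u hu
    have h := hψanti ⟨le_rfl, hcC.le⟩ hu hu.1
    rw [hψdef] at h
    simp only at h
    rw [hE1c] at h
    have hI2c : I2 c = 0 := by rw [hI2def]; simp only; exact intervalIntegral.integral_same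
    rw [hI2c] at h
    linarith
  -- final estimate
  set I : ℝ := ∫ v in c..C, lam₀ v * (deriv δ v) ^ 2 with hIdef
  have hInn : 0 ≤ I := intervalIntegral.integral_nonneg hcC.le
    (fun v hv => mul_nonneg (hpos v hv).le (sq_nonneg _))
  have hJle : ∀ u ∈ Set.Icc c C, I2 u ≤ Real.exp (-(a*c)) * (S₀ * (I / mlam)) := by
    intro u hu
    have hgint : IntervalIntegrable g volume c u := hgc.intervalIntegrable c u
    have hint2 : IntervalIntegrable (fun v => S₀ * (deriv δ v)^2 * Real.exp (-(a*c)))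
        volume c u :=
      ((continuous_const.mul (hδc.pow 2)).mul continuous_const).intervalIntegrable c u
    have step1 : I2 u ≤ ∫ v in c..u, S₀ * (deriv δ v)^2 * Real.exp (-(a*c)) := by
      rw [hI2def]
      simp only
      apply intervalIntegral.integral_mono_on hu.1 hgint hint2
      intro v hv
      rw [hgdef]
      simp only
      have he : Real.exp (-(a*v)) ≤ Real.exp (-(a*c)) := by
        apply Real.exp_le_exp.mpr
        nlinarith [hv.1, ha]
      exact mul_le_mul_of_nonneg_left he (mul_nonneg hS₀ (sq_nonneg _))
    have step2 : (∫ v in c..u, S₀ * (deriv δ v)^2 * Real.exp (-(a*c)))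
        = (S₀ * Real.exp (-(a*c))) * ∫ v in c..u, (deriv δ v)^2 := by
      rw [← intervalIntegral.integral_const_mul]
      apply intervalIntegral.integral_congr
      intro v _
      ring
    have step3 : (∫ v in c..u, (deriv δ v)^2) ≤ ∫ v in c..C, (deriv δ v)^2 := by
      apply intervalIntegral.integral_mono_interval le_rfl hu.1 hu.2
      · exact MeasureTheory.ae_of_all _ (fun v => sq_nonneg _)
      · exact (hδc.pow 2).intervalIntegrable c C
    have step4 : (∫ v in c..C, (deriv δ v)^2) ≤ I / mlam := by
      rw [le_div_iff₀ hmlam]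
      have hcm : (∫ v in c..C, (deriv δ v)^2) * mlam = ∫ v in c..C, mlam * (deriv δ v)^2 := by
        rw [intervalIntegral.integral_const_mul]; ring
      rw [hcm, hIdef]
      apply intervalIntegral.integral_mono_on hcC.le
        (((hδc.pow 2).intervalIntegrable c C).const_mul mlam)
      · apply ContinuousOn.intervalIntegrable
        rw [Set.uIcc_of_le hcC.le]
        exact (hlamc.mono hIccIoi).mul ((hδc.pow 2).continuousOn)
      · intro v hv
        exact mul_le_mul_of_nonneg_right (hmlamle v hv) (sq_nonneg _)
    have hS0e : (0:ℝ) ≤ S₀ * Real.exp (-(a*c)) := mul_nonneg hS₀ (Real.exp_pos _).le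
    calc I2 u ≤ (S₀ * Real.exp (-(a*c))) * ∫ v in c..u, (deriv δ v)^2 := by
          rw [← step2]; exact step1
      _ ≤ (S₀ * Real.exp (-(a*c))) * (I / mlam) :=
          mul_le_mul_of_nonneg_left (le_trans step3 step4) hS0e
      _ = Real.exp (-(a*c)) * (S₀ * (I / mlam)) := by ring
  have hfinal : ∀ u ∈ Set.Icc c C, energy lam₀ x₁ u ≤ M * S₀ * I := by
    intro u hu
    have h0 := hψle u hu
    have hE1u : E1t u ≤ I2 u * Real.exp (a*u) := by
      have hmul := mul_le_mul_of_nonneg_right (by linarith :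
        E1t u * Real.exp (-(a*u)) ≤ I2 u) (Real.exp_pos (a*u)).le
      have hee : Real.exp (-(a*u)) * Real.exp (a*u) = 1 := by
        rw [← Real.exp_add]; simp
      calc E1t u = E1t u * (Real.exp (-(a*u)) * Real.exp (a*u)) := by rw [hee]; ring
        _ = E1t u * Real.exp (-(a*u)) * Real.exp (a*u) := by ring
        _ ≤ I2 u * Real.exp (a*u) := hmul
    have hI2nn : 0 ≤ I2 u := by
      rw [hI2def]
      simp only
      apply intervalIntegral.integral_nonneg hu.1
      intro v _
      rw [hgdef]
      simp only
      positivity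
    have h2 : I2 u * Real.exp (a*u) ≤ (Real.exp (-(a*c)) * (S₀ * (I/mlam))) * Real.exp (a*C) := by
      apply mul_le_mul (hJle u hu) (Real.exp_le_exp.mpr (by nlinarith [hu.2, ha]))
        (Real.exp_pos _).le
      positivity
    have h3 : Real.exp (-(a*c)) * Real.exp (a*C) = Real.exp (a*(C-c)) := by
      rw [← Real.exp_add]
      congr 1
      ring
    have heq : (Real.exp (-(a*c)) * (S₀ * (I/mlam))) * Real.exp (a*C) = M * S₀ * I := by
      calc (Real.exp (-(a*c)) * (S₀ * (I/mlam))) * Real.exp (a*C)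
          = (Real.exp (-(a*c)) * Real.exp (a*C)) * (S₀ * (I/mlam)) := by ring
        _ = Real.exp (a*(C-c)) * (S₀ * (I/mlam)) := by rw [h3]
        _ = M * S₀ * I := by rw [hMdef]; field_simp
    rw [hE1eq u hu]
    calc E1t u ≤ I2 u * Real.exp (a*u) := hE1u
      _ ≤ (Real.exp (-(a*c)) * (S₀ * (I/mlam))) * Real.exp (a*C) := h2
      _ = M * S₀ * I := heq
  apply csSup_le (hIccne.image _)
  rintro b ⟨u, hu, rfl⟩
  exact hfinal u hu
end

section
/- Define x_a(s,t) = arcsin((t − s)/(t + s)) for s > 0, t > 0. Then x_a is a classical solution of the linear hodograph equation with λ(u) = u on the open first quadrant: for all s > 0, t > 0, 2(s+t)·(x_a)_st(s,t) + (x_a)_s(s,t) + (x_a)_t(s,t) = 0. -/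
/-- The "arcsine" solution `x_a(s,t) = arcsin((t − s)/(t + s))`. -/
noncomputable def xa (s t : ℝ) : ℝ := Real.arcsin ((t - s) / (t + s))

lemma sqrt_one_sub_sq (s t : ℝ) (hs : 0 < s) (ht : 0 < t) :
    Real.sqrt (1 - ((t - s) / (t + s)) ^ 2)
      = 2 * Real.sqrt s * Real.sqrt t / (t + s) := by
  have hst : (0:ℝ) < t + s := by linarith
  have h1 : 1 - ((t - s) / (t + s)) ^ 2
      = (2 * Real.sqrt s * Real.sqrt t / (t + s)) ^ 2 := by
    have hss := Real.sq_sqrt hs.le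
    have htt := Real.sq_sqrt ht.le
    field_simp
    nlinarith [hss, htt]
  rw [h1, Real.sqrt_sq (by positivity)]

lemma hasDerivAt_inner1 (s t : ℝ) (hst : t + s ≠ 0) :
    HasDerivAt (fun s' => (t - s') / (t + s')) (-2 * t / (t + s) ^ 2) s := by
  have h1 : HasDerivAt (fun s' : ℝ => t - s') (-1) s := by
    simpa using (hasDerivAt_id s).const_sub t
  have h2 : HasDerivAt (fun s' : ℝ => t + s') 1 s := by
    simpa using (hasDerivAt_id s).const_add t
  have := h1.div h2 hst
  refine this.congr_deriv ?_
  field_simp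
  ring

lemma hasDerivAt_inner2 (s t : ℝ) (hst : t + s ≠ 0) :
    HasDerivAt (fun t' => (t' - s) / (t' + s)) (2 * s / (t + s) ^ 2) t := by
  have h1 : HasDerivAt (fun t' : ℝ => t' - s) 1 t := by
    simpa using (hasDerivAt_id t).sub_const s
  have h2 : HasDerivAt (fun t' : ℝ => t' + s) 1 t := by
    simpa using (hasDerivAt_id t).add_const s
  have := h1.div h2 hst
  refine this.congr_deriv ?_
  field_simp
  ring

lemma arcsin_bounds (s t : ℝ) (hs : 0 < s) (ht : 0 < t) :
    (-1 : ℝ) < (t - s) / (t + s) ∧ (t - s) / (t + s) < 1 := by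
  have hst : (0:ℝ) < t + s := by linarith
  constructor
  · rw [lt_div_iff₀ hst]; linarith
  · rw [div_lt_one hst]; linarith

lemma hasDerivAt_xa1 (s t : ℝ) (hs : 0 < s) (ht : 0 < t) :
    HasDerivAt (fun s' => xa s' t) (-Real.sqrt t / (Real.sqrt s * (s + t))) s := by
  have hst : (0:ℝ) < t + s := by linarith
  obtain ⟨hgt, hlt⟩ := arcsin_bounds s t hs ht
  have harc := Real.hasDerivAt_arcsin hgt.ne' hlt.ne
  have h := harc.comp s (hasDerivAt_inner1 s t hst.ne')
  refine h.congr_deriv ?_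
  rw [sqrt_one_sub_sq s t hs ht]
  have has : (0:ℝ) < Real.sqrt s := Real.sqrt_pos.mpr hs
  have hat : (0:ℝ) < Real.sqrt t := Real.sqrt_pos.mpr ht
  have htt := Real.sq_sqrt ht.le
  field_simp
  linear_combination (t+s) * htt

lemma hasDerivAt_xa2 (s t : ℝ) (hs : 0 < s) (ht : 0 < t) :
    HasDerivAt (fun t' => xa s t') (Real.sqrt s / (Real.sqrt t * (s + t))) t := by
  have hst : (0:ℝ) < t + s := by linarith
  obtain ⟨hgt, hlt⟩ := arcsin_bounds s t hs ht
  have harc := Real.hasDerivAt_arcsin hgt.ne' hlt.ne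
  have h := harc.comp t (hasDerivAt_inner2 s t hst.ne')
  refine h.congr_deriv ?_
  rw [sqrt_one_sub_sq s t hs ht]
  have has : (0:ℝ) < Real.sqrt s := Real.sqrt_pos.mpr hs
  have hat : (0:ℝ) < Real.sqrt t := Real.sqrt_pos.mpr ht
  have hss := Real.sq_sqrt hs.le
  field_simp
  linear_combination (-(t+s)) * hss

lemma pd1_eq (s t : ℝ) (hs : 0 < s) (ht : 0 < t) :
    pd1 xa s t = -Real.sqrt t / (Real.sqrt s * (s + t)) :=
  (hasDerivAt_xa1 s t hs ht).deriv

lemma pd2_eq (s t : ℝ) (hs : 0 < s) (ht : 0 < t) :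
    pd2 xa s t = Real.sqrt s / (Real.sqrt t * (s + t)) :=
  (hasDerivAt_xa2 s t hs ht).deriv

lemma pd2_pd1_eq (s t : ℝ) (hs : 0 < s) (ht : 0 < t) :
    pd2 (pd1 xa) s t
      = (t - s) / (2 * Real.sqrt s * Real.sqrt t * (s + t) ^ 2) := by
  have has : (0:ℝ) < Real.sqrt s := Real.sqrt_pos.mpr hs
  have hat : (0:ℝ) < Real.sqrt t := Real.sqrt_pos.mpr ht
  have hst : (0:ℝ) < s + t := by linarith
  have heq : (fun t' => pd1 xa s t')
      =ᶠ[nhds t] fun t' => -Real.sqrt t' / (Real.sqrt s * (s + t')) := by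
    filter_upwards [eventually_gt_nhds ht] with t' ht'
    exact pd1_eq s t' hs ht'
  have hnum : HasDerivAt (fun t' : ℝ => -Real.sqrt t') (-(1 / (2 * Real.sqrt t))) t :=
    (Real.hasDerivAt_sqrt ht.ne').neg
  have hden : HasDerivAt (fun t' : ℝ => Real.sqrt s * (s + t')) (Real.sqrt s) t := by
    simpa using (((hasDerivAt_id t).const_add s).const_mul (Real.sqrt s))
  have hg : HasDerivAt (fun t' => -Real.sqrt t' / (Real.sqrt s * (s + t'))) _ t :=
    hnum.div hden (by positivity)
  rw [pd2, heq.deriv_eq, hg.deriv]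
  have htt := Real.sq_sqrt ht.le
  field_simp
  linear_combination 2 * htt

/-- `x_a` is a classical solution of the linear hodograph equation
with `λ(u) = u` on the open first quadrant:
`2(s+t)·(x_a)_st + (x_a)_s + (x_a)_t = 0` for `s > 0`, `t > 0`. -/
theorem arcsine_solution :
    ∀ s t : ℝ, 0 < s → 0 < t →
      2 * (s + t) * pd2 (pd1 xa) s t + pd1 xa s t + pd2 xa s t = 0 := by
  intro s t hs ht
  have has : (0:ℝ) < Real.sqrt s := Real.sqrt_pos.mpr hs
  have hat : (0:ℝ) < Real.sqrt t := Real.sqrt_pos.mpr ht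
  have hst : (0:ℝ) < s + t := by linarith
  rw [pd1_eq s t hs ht, pd2_eq s t hs ht, pd2_pd1_eq s t hs ht]
  have hss := Real.sq_sqrt hs.le
  have htt := Real.sq_sqrt ht.le
  field_simp
  linear_combination hss - htt
end
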